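/- arXiv:1204.0734 — 9 statements merged into one kernel-verified Lean document; each statement's English description precedes it below -/
import Mathlib

section
/- Let G = ([n], E) be a graph and let a be a G-partial matrix (a vector in R^{V∪E} specifying diagonal entries and entries on edges). If a admits a completion to a positive semidefinite n×n matrix, then it admits a positive semidefinite completion of rank at most ⌊(√(1+8(|V|+|E|)) − 1)/2⌋. -/
open Matrix

/-- `Y` agrees with `X` on all diagonal entries and all entries indexed by edges of `G`. -/
def agreesOn {V : Type*} (G : SimpleGraph V) (X Y : Matrix V V ℝ) : Prop :=
  (∀ i, Y i i = X i i) ∧ ∀ i j, G.Adj i j → Y i j = X i j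

section Aux

variable {V : Type*} [Fintype V] [DecidableEq V]

lemma psd_factor (X : Matrix V V ℝ) (hX : X.PosSemidef) :
    ∃ B : Matrix {i // hX.1.eigenvalues i ≠ 0} V ℝ, Bᴴ * B = X := by
  set lam := hX.1.eigenvalues with hlam
  set U := (hX.1.eigenvectorUnitary : Matrix V V ℝ) with hU
  refine ⟨Matrix.of fun k v => Real.sqrt (lam k.1) * U v k.1, ?_⟩
  ext u v
  rw [Matrix.mul_apply]
  have key : ∀ k : {i // lam i ≠ 0},
      (Matrix.of fun k v => Real.sqrt (lam k.1) * U v k.1)ᴴ u k *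
      (Matrix.of fun k v => Real.sqrt (lam k.1) * U v k.1) k v
      = lam k.1 * (U u k.1 * U v k.1) := by
    intro k
    simp only [Matrix.conjTranspose_apply, Matrix.of_apply, star_trivial]
    rw [show Real.sqrt (lam k.1) * U u k.1 * (Real.sqrt (lam k.1) * U v k.1)
        = (Real.sqrt (lam k.1) * Real.sqrt (lam k.1)) * (U u k.1 * U v k.1) by ring,
      Real.mul_self_sqrt (hX.eigenvalues_nonneg k.1)]
  rw [Finset.sum_congr rfl (fun k _ => key k)]
  have hx : X u v = ∑ a : V, lam a * (U u a * U v a) := by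
    conv_lhs => rw [hX.1.spectral_theorem, Unitary.conjStarAlgAut_apply]
    rw [Matrix.mul_apply]
    refine Finset.sum_congr rfl fun a _ => ?_
    simp only [Matrix.mul_diagonal, Matrix.star_apply, star_trivial, Function.comp_apply,
      RCLike.ofReal_real_eq_id, id_eq, ← hU, ← hlam]
    ring
  rw [hx, ← Finset.sum_subtype (Finset.univ.filter (fun a => lam a ≠ 0))
    (fun a => by simp) (fun a => lam a * (U u a * U v a))]
  exact Finset.sum_filter_of_ne (fun a _ h h0 => h (by rw [h0]; ring))


lemma exists_kernel_sym (G : SimpleGraph V) [DecidableRel G.Adj]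
    {p : Type*} [Fintype p] [DecidableEq p] (B : Matrix p V ℝ)
    (hcard : Fintype.card V + G.edgeFinset.card < Fintype.card p * (Fintype.card p + 1) / 2) :
    ∃ M : Matrix p p ℝ, M.IsHermitian ∧ M ≠ 0 ∧
      (∀ v : V, (Bᴴ * M * B) v v = 0) ∧
      (∀ i j : V, G.Adj i j → (Bᴴ * M * B) i j = 0) := by
  classical
  set Mat : (Sym2 p → ℝ) → Matrix p p ℝ := fun f => Matrix.of fun i j => f s(i,j) with hMat
  have hMatadd : ∀ f g, Mat (f + g) = Mat f + Mat g := by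
    intro f g; ext i j; simp [hMat]
  have hMatsmul : ∀ (c : ℝ) f, Mat (c • f) = c • Mat f := by
    intro c f; ext i j; simp [hMat]
  set T : (Sym2 p → ℝ) →ₗ[ℝ] ((V ⊕ {e // e ∈ G.edgeFinset}) → ℝ) :=
    { toFun := fun f => Sum.elim (fun v => (Bᴴ * Mat f * B) v v)
        (fun e => (Bᴴ * Mat f * B) (Quot.out e.1).1 (Quot.out e.1).2)
      map_add' := by
        intro f g
        funext x
        cases x <;> simp [hMatadd, Matrix.mul_add, Matrix.add_mul, Matrix.add_apply]
      map_smul' := by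
        intro c f
        funext x
        cases x <;> simp [hMatsmul, Matrix.mul_smul, Matrix.smul_mul, Matrix.smul_apply] } with hT
  have hninj : ¬ Function.Injective T := by
    intro hinj
    have hle := LinearMap.finrank_le_finrank_of_injective hinj
    rw [Module.finrank_fintype_fun_eq_card, Module.finrank_fintype_fun_eq_card] at hle
    rw [Sym2.card, Fintype.card_sum, Fintype.card_coe] at hle
    rw [Nat.choose_two_right] at hle
    simp only [Nat.add_sub_cancel] at hle
    rw [Nat.mul_comm] at hle
    omega
  rw [Function.not_injective_iff] at hninj
  obtain ⟨f, g, hfg, hne⟩ := hninj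
  have hker : T (f - g) = 0 := by rw [map_sub, hfg, sub_self]
  set h := f - g with hh
  have hh0 : h ≠ 0 := sub_ne_zero.mpr hne
  refine ⟨Mat h, ?_, ?_, ?_, ?_⟩
  · ext i j
    simp only [Matrix.conjTranspose_apply, Matrix.of_apply, star_trivial, hMat]
    rw [Sym2.eq_swap]
  · intro hM0
    apply hh0
    funext z
    induction z using Sym2.ind with
    | _ i j =>
      have := congrFun (congrFun hM0 i) j
      simpa [hMat] using this
  · intro v
    exact congrFun hker (Sum.inl v)
  · intro i j hadj
    have herm : (Bᴴ * Mat h * B).IsHermitian := by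
      have hMh : (Mat h).IsHermitian := by
        ext a b
        simp only [Matrix.conjTranspose_apply, Matrix.of_apply, star_trivial, hMat]
        rw [Sym2.eq_swap]
      calc (Bᴴ * Mat h * B)ᴴ = Bᴴ * (Mat h)ᴴ * B := by
            rw [Matrix.conjTranspose_mul, Matrix.conjTranspose_mul,
              Matrix.conjTranspose_conjTranspose, Matrix.mul_assoc]
        _ = Bᴴ * Mat h * B := by rw [hMh]
    have hsymm : ∀ a b, (Bᴴ * Mat h * B) a b = (Bᴴ * Mat h * B) b a := by
      intro a b
      conv_lhs => rw [← herm]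
      simp [Matrix.conjTranspose_apply]
    have he : s(i,j) ∈ G.edgeFinset := by
      rw [SimpleGraph.mem_edgeFinset, SimpleGraph.mem_edgeSet]
      exact hadj
    have h0 := congrFun hker (Sum.inr ⟨s(i,j), he⟩)
    simp only [hT, LinearMap.coe_mk, AddHom.coe_mk, Sum.elim_inr, Pi.zero_apply] at h0
    have hout : s((Quot.out (s(i,j) : Sym2 V)).1, (Quot.out (s(i,j) : Sym2 V)).2)
        = s(i,j) := by
      rw [Sym2.mk]
      exact Quot.out_eq _
    rw [Sym2.eq_iff] at hout
    rcases hout with ⟨h1, h2⟩ | ⟨h1, h2⟩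
    · rw [h1, h2] at h0; exact h0
    · rw [h1, h2] at h0
      rw [hsymm]
      exact h0


lemma exists_singular_psd {p : Type*} [Fintype p] [DecidableEq p]
    (M : Matrix p p ℝ) (hM : M.IsHermitian) (hM0 : M ≠ 0) :
    ∃ c : ℝ, (1 + c • M).PosSemidef ∧ (1 + c • M).rank < Fintype.card p := by
  classical
  have hex : ∃ i, hM.eigenvalues i ≠ 0 := by
    by_contra hall
    push_neg at hall
    apply hM0
    rw [hM.spectral_theorem]
    have : Matrix.diagonal (RCLike.ofReal ∘ hM.eigenvalues) = (0 : Matrix p p ℝ) := by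
      rw [show RCLike.ofReal ∘ hM.eigenvalues = fun _ => (0:ℝ) by
        funext k; simp [hall k], Matrix.diagonal_zero]
    rw [this, map_zero]
  obtain ⟨i, hi⟩ := hex
  have key : ∀ (W : Matrix p p ℝ) (hW : W.IsHermitian) (j : p), hW.eigenvalues j < 0 →
      ∃ c : ℝ, (1 + c • W).PosSemidef ∧ (1 + c • W).rank < Fintype.card p := by
    intro W hW j0 hj0
    obtain ⟨j, -, hjmin⟩ := Finset.exists_min_image Finset.univ hW.eigenvalues
      ⟨j0, Finset.mem_univ _⟩
    have hj : hW.eigenvalues j < 0 := lt_of_le_of_lt (hjmin j0 (Finset.mem_univ _)) hj0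
    set μ := hW.eigenvalues with hμ
    set c : ℝ := -(1 / μ j) with hc
    set U := (hW.eigenvectorUnitary : Matrix p p ℝ) with hU
    set d : p → ℝ := fun k => 1 + c * μ k with hd
    have hUU : U * Uᴴ = 1 := by
      rw [← Matrix.star_eq_conjTranspose]
      exact Unitary.coe_mul_star_self _
    have hdecomp : 1 + c • W = U * Matrix.diagonal d * Uᴴ := by
      have hdiag : Matrix.diagonal d = 1 + c • Matrix.diagonal (RCLike.ofReal ∘ μ) := by
        rw [RCLike.ofReal_real_eq_id]
        ext a b
        by_cases hab : a = b
        · subst hab; simp [hd, Matrix.diagonal_apply_eq]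
        · simp [hd, Matrix.diagonal_apply_ne _ hab, Matrix.one_apply_ne hab]
      rw [hdiag, Matrix.mul_add, Matrix.mul_one, Matrix.add_mul, hUU,
        Matrix.mul_smul, Matrix.smul_mul]
      congr 1
      rw [← Matrix.star_eq_conjTranspose, hW.spectral_theorem, Unitary.conjStarAlgAut_apply]
    have hdnonneg : ∀ k, 0 ≤ d k := by
      intro k
      have hjk : μ j ≤ μ k := hjmin k (Finset.mem_univ _)
      have h1 : μ j * (1 / μ j) = 1 := mul_one_div_cancel (ne_of_lt hj)
      have h2 : 0 ≤ (μ j - μ k) * (1 / μ j) := by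
        nlinarith [one_div_neg.mpr hj]
      simp only [hd, hc]
      nlinarith [h1, h2]
    have hdj : d j = 0 := by
      have h1 : μ j * (1 / μ j) = 1 := mul_one_div_cancel (ne_of_lt hj)
      simp only [hd, hc]
      nlinarith [h1]
    have hUdet : IsUnit U.det := by
      have : IsUnit U := ⟨Unitary.toUnits hW.eigenvectorUnitary, rfl⟩
      exact (Matrix.isUnit_iff_isUnit_det U).mp this
    have hUHdet : IsUnit (Uᴴ).det := by
      rw [Matrix.det_conjTranspose]
      exact hUdet.star
    refine ⟨c, ?_, ?_⟩
    · rw [hdecomp, ← Matrix.star_eq_conjTranspose]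
      exact (Matrix.posSemidef_diagonal_iff.mpr hdnonneg).mul_mul_conjTranspose_same U
    · rw [hdecomp, Matrix.mul_assoc,
        Matrix.rank_mul_eq_right_of_isUnit_det U _ hUdet,
        Matrix.rank_mul_eq_left_of_isUnit_det Uᴴ _ hUHdet,
        Matrix.rank_diagonal]
      exact Fintype.card_subtype_lt (not_not_intro hdj)
  rcases lt_or_gt_of_ne hi with hlt | hgt
  · exact key M hM i hlt
  · have hWH : (-M).IsHermitian := hM.neg
    have hnegeig : ∃ j, hWH.eigenvalues j < 0 := by
      by_contra hall
      push_neg at hall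
      have hpsd : (-M).PosSemidef := hWH.posSemidef_iff_eigenvalues_nonneg.mpr hall
      set v := ⇑(hM.eigenvectorBasis i) with hv
      have hmv : M *ᵥ v = hM.eigenvalues i • v := hM.mulVec_eigenvectorBasis i
      have hq := hpsd.dotProduct_mulVec_nonneg v
      rw [Matrix.neg_mulVec, hmv] at hq
      have hvv : dotProduct (star v) v = 1 := by
        have hUU : (star (hM.eigenvectorUnitary : Matrix p p ℝ)) *
            (hM.eigenvectorUnitary : Matrix p p ℝ) = 1 := Unitary.coe_star_mul_self _
        have := congrFun (congrFun hUU i) i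
        rw [Matrix.mul_apply, Matrix.one_apply_eq] at this
        rw [← this]
        simp [dotProduct, Matrix.star_apply, hv]
      rw [dotProduct_neg, dotProduct_smul, hvv] at hq
      simp only [smul_eq_mul, mul_one] at hq
      linarith
    obtain ⟨j, hj⟩ := hnegeig
    obtain ⟨c, h1, h2⟩ := key (-M) hWH j hj
    refine ⟨-c, ?_, ?_⟩
    · convert h1 using 2
      rw [smul_neg, neg_smul]
    · convert h2 using 3
      rw [smul_neg, neg_smul]


lemma step_lemma (G : SimpleGraph V) [DecidableRel G.Adj]
    (X : Matrix V V ℝ) (hX : X.PosSemidef)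
    (hr : Fintype.card V + G.edgeFinset.card < X.rank * (X.rank + 1) / 2) :
    ∃ X' : Matrix V V ℝ, X'.PosSemidef ∧ agreesOn G X X' ∧ X'.rank < X.rank := by
  classical
  obtain ⟨B, hB⟩ := psd_factor X hX
  have hcardp : Fintype.card {i // hX.1.eigenvalues i ≠ 0} = X.rank :=
    (hX.1.rank_eq_card_non_zero_eigs).symm
  obtain ⟨M, hMh, hM0, hdiag, hedge⟩ := exists_kernel_sym G B (by rw [hcardp]; exact hr)
  obtain ⟨c, hNpsd, hNrank⟩ := exists_singular_psd M hMh hM0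
  refine ⟨Bᴴ * (1 + c • M) * B, hNpsd.conjTranspose_mul_mul_same B, ?_, ?_⟩
  · have hsplit : Bᴴ * (1 + c • M) * B = X + c • (Bᴴ * M * B) := by
      rw [Matrix.mul_add, Matrix.mul_one, Matrix.add_mul, hB, Matrix.mul_smul,
        Matrix.smul_mul]
    rw [hsplit]
    constructor
    · intro v
      rw [Matrix.add_apply, Matrix.smul_apply, hdiag v, smul_zero, add_zero]
    · intro i j hadj
      rw [Matrix.add_apply, Matrix.smul_apply, hedge i j hadj, smul_zero, add_zero]
  · calc (Bᴴ * (1 + c • M) * B).rank = (Bᴴ * ((1 + c • M) * B)).rank := by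
          rw [Matrix.mul_assoc]
      _ ≤ ((1 + c • M) * B).rank := Matrix.rank_mul_le_right _ _
      _ ≤ (1 + c • M).rank := Matrix.rank_mul_le_left _ _
      _ < Fintype.card {i // hX.1.eigenvalues i ≠ 0} := hNrank
      _ = X.rank := hcardp

lemma agreesOn_trans {G : SimpleGraph V} {X Y Z : Matrix V V ℝ}
    (h1 : agreesOn G X Y) (h2 : agreesOn G Y Z) : agreesOn G X Z :=
  ⟨fun i => (h2.1 i).trans (h1.1 i),
   fun i j hadj => ((h2.2 i j hadj).trans (h1.2 i j hadj))⟩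

lemma main_aux (G : SimpleGraph V) [DecidableRel G.Adj] :
    ∀ (r : ℕ) (X : Matrix V V ℝ), X.PosSemidef → X.rank ≤ r →
    ∃ Y : Matrix V V ℝ, Y.PosSemidef ∧ agreesOn G X Y ∧
      Y.rank * (Y.rank + 1) / 2 ≤ Fintype.card V + G.edgeFinset.card := by
  intro r
  induction r with
  | zero =>
    intro X hX h0
    refine ⟨X, hX, ⟨fun _ => rfl, fun _ _ _ => rfl⟩, ?_⟩
    have : X.rank = 0 := Nat.le_zero.mp h0
    simp [this]
  | succ r ih =>
    intro X hX hle
    by_cases hc : X.rank * (X.rank + 1) / 2 ≤ Fintype.card V + G.edgeFinset.card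
    · exact ⟨X, hX, ⟨fun _ => rfl, fun _ _ _ => rfl⟩, hc⟩
    · push_neg at hc
      obtain ⟨X', h1, h2, h3⟩ := step_lemma G X hX hc
      obtain ⟨Y, hY1, hY2, hY3⟩ := ih X' h1 (by omega)
      exact ⟨Y, hY1, agreesOn_trans h2 hY2, hY3⟩

lemma rank_le_floor (r m : ℕ) (h : r * (r + 1) / 2 ≤ m) :
    r ≤ ⌊(Real.sqrt (1 + 8 * (m : ℝ)) - 1) / 2⌋₊ := by
  have heven : 2 ∣ r * (r + 1) := (Nat.even_mul_succ_self r).two_dvd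
  have h2 : r * (r + 1) ≤ 2 * m := by
    obtain ⟨k, hk⟩ := heven
    omega
  rw [Nat.le_floor_iff]
  · rw [le_div_iff₀ (by norm_num : (0:ℝ) < 2), le_sub_iff_add_le]
    have hsq : ((2 * r + 1 : ℕ) : ℝ) ≤ Real.sqrt (1 + 8 * m) := by
      rw [show (1 : ℝ) + 8 * m = ((1 + 8 * m : ℕ) : ℝ) by push_cast; ring]
      rw [Real.le_sqrt (by positivity)]
      swap
      · exact Nat.cast_nonneg _
      push_cast
      have : (r : ℝ) * (r + 1) ≤ 2 * m := by exact_mod_cast h2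
      nlinarith
    push_cast at hsq ⊢
    linarith
  · have hs : Real.sqrt 1 ≤ Real.sqrt (1 + 8 * (m : ℝ)) := by
      apply Real.sqrt_le_sqrt
      have := Nat.cast_nonneg (α := ℝ) m
      linarith
    rw [Real.sqrt_one] at hs
    linarith

end Aux

/-- If a `G`-partial matrix (given here by a psd completion `X` of it) admits a psd completion,
then it admits a psd completion of rank at most `⌊(√(1+8(|V|+|E|)) − 1)/2⌋`. -/
theorem exists_low_rank_psd_completion {V : Type*} [Fintype V] [DecidableEq V]
    (G : SimpleGraph V) [DecidableRel G.Adj]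
    (X : Matrix V V ℝ) (hX : X.PosSemidef) :
    ∃ Y : Matrix V V ℝ, Y.PosSemidef ∧ agreesOn G X Y ∧
      Y.rank ≤
        ⌊(Real.sqrt (1 + 8 * ((Fintype.card V : ℝ) + (G.edgeFinset.card : ℝ))) - 1) / 2⌋₊ := by
  obtain ⟨Y, hY1, hY2, hY3⟩ := main_aux G X.rank X hX le_rfl
  refine ⟨Y, hY1, hY2, ?_⟩
  have := rank_le_floor Y.rank (Fintype.card V + G.edgeFinset.card) hY3
  convert this using 4
  push_cast
  ring
end

section
/- For any graph G = ([n], E) and any edge e ∈ E, the Gram dimension is monotone under edge deletion and edge contraction: gd(G \ e) ≤ gd(G) and gd(G / e) ≤ gd(G). Consequently, if H is a minor of G then gd(H) ≤ gd(G). -/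
/-- `gramDimLE G k` : every psd matrix indexed by `V` admits a psd matrix of rank at most `k`
agreeing with it on the diagonal and on the edges of `G`. -/
def gramDimLE {V : Type*} [Fintype V] (G : SimpleGraph V) (k : ℕ) : Prop :=
  ∀ X : Matrix V V ℝ, X.PosSemidef →
    ∃ Y : Matrix V V ℝ, Y.PosSemidef ∧ Y.rank ≤ k ∧ agreesOn G X Y

/-- The Gram dimension of a graph. -/
noncomputable def gramDim {V : Type*} [Fintype V] (G : SimpleGraph V) : ℕ :=
  sInf {k | gramDimLE G k}

/-- The graph obtained from `G` by contracting the edge `(u, v)` (node `v` is removed and its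
neighbours are attached to `u`). -/
def contractEdge {V : Type*} (G : SimpleGraph V) (u v : V) : SimpleGraph {x : V // x ≠ v} :=
  SimpleGraph.fromRel fun a b =>
    G.Adj a b ∨ ((a : V) = u ∧ G.Adj v b) ∨ ((b : V) = u ∧ G.Adj v a)

/-- `H` is a minor of `G`: there are disjoint nonempty connected branch sets in `G`, one for each
node of `H`, such that every edge of `H` is realized by an edge of `G` between branch sets. -/
def IsGraphMinor {W V : Type*} (H : SimpleGraph W) (G : SimpleGraph V) : Prop :=
  ∃ φ : V → Option W,
    (∀ w, ∃ v, φ v = some w) ∧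
    (∀ w, (G.induce {v | φ v = some w}).Connected) ∧
    (∀ w₁ w₂, H.Adj w₁ w₂ → ∃ v₁ v₂, φ v₁ = some w₁ ∧ φ v₂ = some w₂ ∧ G.Adj v₁ v₂)

section Aux
open Matrix

variable {V : Type*} [Fintype V] [DecidableEq V]

/-- Symmetry of a real psd matrix. -/
lemma psd_symm {Y : Matrix V V ℝ} (hY : Y.PosSemidef) (a b : V) : Y a b = Y b a := by
  simpa using hY.1.apply b a

/-- In a psd matrix, if `Y a b = Y a a = Y b b` then rows `a` and `b` coincide. -/
lemma psd_row_eq {Y : Matrix V V ℝ} (hY : Y.PosSemidef) {a b : V}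
    (hab : Y a b = Y a a) (hbb : Y b b = Y a a) : ∀ c, Y a c = Y b c := by
  set x : V → ℝ := Pi.single a 1 - Pi.single b 1 with hx
  have hmul : ∀ c, (Y *ᵥ x) c = Y c a - Y c b := by
    intro c
    simp [hx, Matrix.mulVec_sub, Matrix.mulVec_single]
  have hdot : star x ⬝ᵥ Y *ᵥ x = 0 := by
    have : x ⬝ᵥ (Y *ᵥ x) = (Y *ᵥ x) a - (Y *ᵥ x) b := by
      simp [hx, sub_dotProduct, single_dotProduct]
    rw [show star x = x from rfl, this, hmul, hmul]
    have hba : Y b a = Y a b := psd_symm hY b a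
    rw [hab, hba, hab, hbb]
    ring
  have h0 : Y *ᵥ x = 0 := (hY.dotProduct_mulVec_zero_iff x).mp hdot
  intro c
  have hc : Y c a = Y c b := by
    have h := congrFun h0 c
    rw [hmul c, Pi.zero_apply, sub_eq_zero] at h
    exact h
  rw [psd_symm hY a c, hc, psd_symm hY c b]

/-- `A.submatrix f f` has rank at most the rank of `A`, for any map `f`. -/
lemma rank_submatrix_le' {W : Type*} [Fintype W] [DecidableEq W]
    (A : Matrix V V ℝ) (f : W → V) : (A.submatrix f f).rank ≤ A.rank := by
  classical
  set P : Matrix W V ℝ := Matrix.of fun i j => if f i = j then (1 : ℝ) else 0 with hP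
  have hPA : A.submatrix f f = P * A * Pᵀ := by
    ext i j
    simp only [Matrix.mul_apply, Matrix.transpose_apply, hP, Matrix.of_apply,
      Matrix.submatrix_apply]
    symm
    calc (∑ k, (∑ l, (if f i = l then (1:ℝ) else 0) * A l k) * (if f j = k then (1:ℝ) else 0))
        = ∑ k, A (f i) k * (if f j = k then (1:ℝ) else 0) := by
          refine Finset.sum_congr rfl fun k _ => ?_
          congr 1
          simp [ite_mul]
      _ = A (f i) (f j) := by simp
  rw [hPA]
  exact le_trans (Matrix.rank_mul_le_left (P * A) Pᵀ)
    (Matrix.rank_mul_le_right P A)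

/-- The set of valid `k` is nonempty. -/
lemma gramDimLE_card (G : SimpleGraph V) : gramDimLE G (Fintype.card V) := by
  intro X hX
  exact ⟨X, hX, X.rank_le_card_width, fun i => rfl, fun i j _ => rfl⟩

lemma gramDim_le_gramDim {W : Type*} [Fintype W] (H : SimpleGraph W) (G : SimpleGraph V)
    (h : ∀ k, gramDimLE G k → gramDimLE H k) : gramDim H ≤ gramDim G := by
  have hne : {k | gramDimLE G k}.Nonempty := ⟨Fintype.card V, gramDimLE_card G⟩
  have hmem : gramDim G ∈ {k | gramDimLE G k} := Nat.sInf_mem hne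
  exact Nat.sInf_le (h _ hmem)

/-- Rows of a psd matrix are constant along a connected branch set on which the diagonal and
all internal edges take a common value. -/
lemma psd_row_eq_of_branch {Y : Matrix V V ℝ} (hY : Y.PosSemidef) (G : SimpleGraph V)
    (S : Set V) (c : ℝ) (hdiag : ∀ p ∈ S, Y p p = c)
    (hedge : ∀ p ∈ S, ∀ q ∈ S, G.Adj p q → Y p q = c)
    {a b : S} (hr : (G.induce S).Reachable a b) : ∀ x, Y (a : V) x = Y (b : V) x := by
  obtain ⟨w⟩ := hr
  induction w with
  | nil => intro x; rfl
  | @cons p q r hadj w' ih =>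
    intro x
    have hGadj : G.Adj (p : V) (q : V) := hadj
    have h1 : Y (p : V) (q : V) = Y (p : V) (p : V) := by
      rw [hedge _ p.2 _ q.2 hGadj, hdiag _ p.2]
    have h2 : Y (q : V) (q : V) = Y (p : V) (p : V) := by
      rw [hdiag _ q.2, hdiag _ p.2]
    rw [psd_row_eq hY h1 h2 x, ih x]

end Aux

/-- The Gram dimension is monotone nonincreasing under edge deletion and edge contraction;
consequently it is minor monotone. -/
theorem gramDim_minor_monotone {V : Type*} [Fintype V] [DecidableEq V] (G : SimpleGraph V) :
    (∀ e ∈ G.edgeSet, gramDim (G.deleteEdges {e}) ≤ gramDim G) ∧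
    (∀ u v : V, G.Adj u v → gramDim (contractEdge G u v) ≤ gramDim G) ∧
    (∀ (W : Type) [Fintype W] (H : SimpleGraph W), IsGraphMinor H G → gramDim H ≤ gramDim G) := by
  classical
  refine ⟨?_, ?_, ?_⟩
  · -- edge deletion
    intro e _
    refine gramDim_le_gramDim _ G fun k hk X hX => ?_
    obtain ⟨Y, hY, hrk, hd, he⟩ := hk X hX
    exact ⟨Y, hY, hrk, hd, fun i j hij => he i j (SimpleGraph.deleteEdges_adj.mp hij).1⟩
  · -- edge contraction
    intro u v huv
    have hune : u ≠ v := G.ne_of_adj huv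
    refine gramDim_le_gramDim _ G fun k hk X hX => ?_
    set π : V → {x : V // x ≠ v} := fun a => if h : a = v then ⟨u, hune⟩ else ⟨a, h⟩ with hπ
    have hπv : π v = ⟨u, hune⟩ := by simp [hπ]
    have hπu : π u = ⟨u, hune⟩ := by simp [hπ, hune]
    have hπι : ∀ x : {x : V // x ≠ v}, π (x : V) = x := by
      intro x; simp [hπ, x.2]
    obtain ⟨Y, hY, hrk, hd, he⟩ := hk (X.submatrix π π) (hX.submatrix π)
    -- rows u and v of Y agree
    have hrow : ∀ c, Y u c = Y v c := by
      have h1 : Y u v = Y u u := by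
        rw [he u v huv, hd u]
        simp [Matrix.submatrix_apply, hπv, hπu]
      have h2 : Y v v = Y u u := by
        rw [hd v, hd u]
        simp [Matrix.submatrix_apply, hπv, hπu]
      exact psd_row_eq hY h1 h2
    refine ⟨Y.submatrix (fun x : {x : V // x ≠ v} => (x : V)) (fun x => (x : V)),
      hY.submatrix _, le_trans (rank_submatrix_le' Y _) hrk, ?_, ?_⟩
    · intro i
      rw [Matrix.submatrix_apply, hd (i : V)]
      simp [Matrix.submatrix_apply, hπι]
    · intro a b hab
      rw [contractEdge, SimpleGraph.fromRel_adj] at hab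
      obtain ⟨hne, hR⟩ := hab
      have key : ∀ a b : {x : V // x ≠ v},
          (G.Adj (a : V) (b : V) ∨ ((a : V) = u ∧ G.Adj v (b : V)) ∨
            ((b : V) = u ∧ G.Adj v (a : V))) → Y (a : V) (b : V) = X a b := by
        intro a b h
        rcases h with h | ⟨ha, h⟩ | ⟨hb, h⟩
        · rw [he _ _ h]
          simp [Matrix.submatrix_apply, hπι]
        · -- a = u, G.Adj v b
          have : Y v (b : V) = X (π v) (π (b : V)) := he v (b : V) h
          simp only [Matrix.submatrix_apply, hπv, hπι] at this
          have ha' : a = ⟨u, hune⟩ := Subtype.ext ha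
          rw [show (a : V) = u from ha, hrow (b : V), this, ha']
        · -- b = u, G.Adj v a
          have : Y (a : V) v = X (π (a : V)) (π v) := he (a : V) v h.symm
          simp only [Matrix.submatrix_apply, hπι, hπv] at this
          have hb' : b = ⟨u, hune⟩ := Subtype.ext hb
          rw [show (b : V) = u from hb, psd_symm hY, hrow (a : V),
            psd_symm hY, this, hb']
      show Y (a : V) (b : V) = X a b
      rcases hR with h | h
      · exact key a b h
      · rw [psd_symm hY, key b a h, psd_symm hX]
  · -- minors
    intro W _ H hminor
    obtain ⟨φ, hsurj, hconn, hedges⟩ := hminor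
    refine gramDim_le_gramDim _ G fun k hk X hX => ?_
    -- extend X to Option W
    set X' : Matrix (Option W) (Option W) ℝ :=
      fun a b => a.elim 0 fun w => b.elim 0 fun w' => X w w' with hX'
    have hX'psd : X'.PosSemidef := by
      refine Matrix.PosSemidef.of_dotProduct_mulVec_nonneg ?_ ?_
      · ext a b
        rw [Matrix.conjTranspose_apply]
        cases a <;> cases b <;>
          simp [hX', Matrix.conjTranspose_apply]
        exact (congrFun (congrFun hX.1 _) _)
      · intro z
        have : dotProduct (star z) (X'.mulVec z) =
            dotProduct (star fun w => z (some w)) (X.mulVec fun w => z (some w)) := by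
          simp only [dotProduct, Matrix.mulVec, Fintype.sum_option, hX',
            Option.elim_none, Option.elim_some, Pi.star_apply, RCLike.star_def]
          simp [dotProduct]
        rw [this]
        exact hX.dotProduct_mulVec_nonneg _
    obtain ⟨Y, hY, hrk, hd, he⟩ := hk (X'.submatrix φ φ) (hX'psd.submatrix φ)
    choose σ hσ using hsurj
    -- rows of Y are constant on branch sets
    have hbranch : ∀ w : W, ∀ p q : V, φ p = some w → φ q = some w →
        ∀ x, Y p x = Y q x := by
      intro w p q hp hq x
      have hdiag : ∀ r ∈ {v | φ v = some w}, Y r r = X w w := by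
        intro r hr
        rw [hd r, Matrix.submatrix_apply]
        simp only [Matrix.submatrix_apply, Set.mem_setOf_eq.mp hr, hX', Option.elim_some]
      have hedge : ∀ r ∈ {v | φ v = some w}, ∀ s ∈ {v | φ v = some w},
          G.Adj r s → Y r s = X w w := by
        intro r hr s hs hrs
        rw [he r s hrs, Matrix.submatrix_apply]
        simp only [Matrix.submatrix_apply, Set.mem_setOf_eq.mp hr,
          Set.mem_setOf_eq.mp hs, hX', Option.elim_some]
      have hreach : (G.induce {v | φ v = some w}).Reachable ⟨p, hp⟩ ⟨q, hq⟩ :=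
        (hconn w).preconnected _ _
      exact psd_row_eq_of_branch hY G _ (X w w) hdiag hedge hreach x
    refine ⟨Y.submatrix σ σ, hY.submatrix σ, le_trans (rank_submatrix_le' Y σ) hrk, ?_, ?_⟩
    · intro w
      rw [Matrix.submatrix_apply, hd (σ w), Matrix.submatrix_apply]
      simp [Matrix.submatrix_apply, hσ, hX']
    · intro w₁ w₂ hw
      obtain ⟨v₁, v₂, hv₁, hv₂, hadj⟩ := hedges w₁ w₂ hw
      have h1 : Y v₁ v₂ = X w₁ w₂ := by
        rw [he _ _ hadj, Matrix.submatrix_apply]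
        simp [Matrix.submatrix_apply, hv₁, hv₂, hX']
      rw [Matrix.submatrix_apply]
      calc Y (σ w₁) (σ w₂) = Y v₁ (σ w₂) := hbranch w₁ (σ w₁) v₁ (hσ w₁) hv₁ _
        _ = Y (σ w₂) v₁ := psd_symm hY _ _
        _ = Y v₂ v₁ := hbranch w₂ (σ w₂) v₂ (hσ w₂) hv₂ _
        _ = Y v₁ v₂ := psd_symm hY _ _
        _ = X w₁ w₂ := h1
end

section
/- Let X₁ ∈ S^{V₁}_+ and X₂ ∈ S^{V₂}_+ be positive semidefinite matrices such that X₁[V₁∩V₂] = X₂[V₁∩V₂]. Then there exists a positive semidefinite matrix X indexed by V₁∪V₂ with X[V₁] = X₁, X[V₂] = X₂, and rank(X) = max{rank(X₁), rank(X₂)}. -/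
open Module Submodule Set

local notation "⟪" x ", " y "⟫" => @inner ℝ _ _ x y

section helpers

variable {E F : Type*} [NormedAddCommGroup E] [InnerProductSpace ℝ E]
  [NormedAddCommGroup F] [InnerProductSpace ℝ F]

theorem my_inner_lincomb {ι : Type*} [Fintype ι] (v : ι → E) (c d : ι → ℝ) :
    ⟪∑ i, c i • v i, ∑ j, d j • v j⟫ = ∑ i, ∑ j, c i * d j * ⟪v i, v j⟫ := by
  rw [sum_inner]
  refine Finset.sum_congr rfl fun i _ => ?_
  rw [inner_sum]
  refine Finset.sum_congr rfl fun j _ => ?_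
  rw [real_inner_smul_left, real_inner_smul_right, mul_assoc]

theorem my_exists_isometry_of_finrank_le [FiniteDimensional ℝ E] [FiniteDimensional ℝ F]
    (h : finrank ℝ E ≤ finrank ℝ F) : Nonempty (E →ₗᵢ[ℝ] F) := by
  let bE := stdOrthonormalBasis ℝ E
  let bF := stdOrthonormalBasis ℝ F
  let g : Fin (finrank ℝ E) → F := fun i => bF (Fin.castLE h i)
  have hg : Orthonormal ℝ g := bF.orthonormal.comp _ (Fin.castLE_injective h)
  let T : E →ₗ[ℝ] F := (bE.toBasis.constr ℝ) g
  have hT : ∀ i, T (bE i) = g i := by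
    intro i
    have := bE.toBasis.constr_basis ℝ g i
    simpa [T, OrthonormalBasis.coe_toBasis] using this
  refine ⟨T.isometryOfInner ?_⟩
  intro x y
  have hx := bE.sum_repr x
  have hy := bE.sum_repr y
  rw [← hx, ← hy]
  rw [map_sum, map_sum]
  simp_rw [map_smul]
  rw [my_inner_lincomb, my_inner_lincomb]
  have h1 := orthonormal_iff_ite.mp hg
  have h2 := orthonormal_iff_ite.mp bE.orthonormal
  simp [hT, h1, h2]

theorem my_exists_isometry_span_of_gram {ι : Type*} [Fintype ι] (a : ι → E) (b : ι → F)
    (h : ∀ i j, ⟪a i, a j⟫ = ⟪b i, b j⟫) :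
    ∃ f : ↥(span ℝ (range b)) →ₗᵢ[ℝ] E,
      ∀ i, f ⟨b i, subset_span (mem_range_self i)⟩ = a i := by
  classical
  let φa : (ι → ℝ) →ₗ[ℝ] E := Fintype.linearCombination ℝ a
  let φb : (ι → ℝ) →ₗ[ℝ] F := Fintype.linearCombination ℝ b
  have hφa : ∀ c, φa c = ∑ i, c i • a i := fun c => rfl
  have hφb : ∀ c, φb c = ∑ i, c i • b i := fun c => rfl
  have key : ∀ c d : ι → ℝ, ⟪φa c, φa d⟫ = ⟪φb c, φb d⟫ := by
    intro c d
    rw [hφa, hφa, hφb, hφb, my_inner_lincomb, my_inner_lincomb]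
    simp [h]
  have hker : LinearMap.ker φb ≤ LinearMap.ker φa := by
    intro c hc
    rw [LinearMap.mem_ker] at hc ⊢
    have h0 : ⟪φa c, φa c⟫ = 0 := by rw [key, hc, inner_zero_left]
    exact inner_self_eq_zero.mp h0
  have hrange : LinearMap.range φb = span ℝ (range b) :=
    Fintype.range_linearCombination (R := ℝ) (v := b)
  let q : ((ι → ℝ) ⧸ LinearMap.ker φb) →ₗ[ℝ] E := Submodule.liftQ _ φa hker
  let eqv := LinearMap.quotKerEquivRange φb
  let f0 : ↥(LinearMap.range φb) →ₗ[ℝ] E := q ∘ₗ (eqv.symm : _ →ₗ[ℝ] _)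
  have hf0 : ∀ (c : ι → ℝ) (hc : φb c ∈ LinearMap.range φb), f0 ⟨φb c, hc⟩ = φa c := by
    intro c hc
    have h1 : eqv.symm ⟨φb c, hc⟩ = (LinearMap.ker φb).mkQ c :=
      LinearMap.quotKerEquivRange_symm_apply_image φb c hc
    simp only [f0, LinearMap.comp_apply, LinearEquiv.coe_coe, h1]
    simp [q]
  have hinner : ∀ x y : ↥(LinearMap.range φb), ⟪f0 x, f0 y⟫ = ⟪x, y⟫ := by
    rintro ⟨x, c, rfl⟩ ⟨y, d, rfl⟩
    rw [hf0 c (LinearMap.mem_range_self φb c), hf0 d (LinearMap.mem_range_self φb d),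
      key c d]
    rfl
  let j : ↥(span ℝ (range b)) ≃ₗᵢ[ℝ] ↥(LinearMap.range φb) :=
    LinearIsometryEquiv.ofEq _ _ hrange.symm
  refine ⟨(f0.isometryOfInner hinner).comp j.toLinearIsometry, fun i => ?_⟩
  have hb : b i = φb (Pi.single i 1) := by
    rw [hφb]
    simp [Pi.single_apply, ite_smul]
  have hmem : b i ∈ LinearMap.range φb := hrange ▸ subset_span (mem_range_self i)
  have hj2 : j ⟨b i, subset_span (mem_range_self i)⟩ =
      (⟨b i, hmem⟩ : ↥(LinearMap.range φb)) := Subtype.ext rfl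
  have hsub : (⟨b i, hmem⟩ : ↥(LinearMap.range φb)) =
      ⟨φb (Pi.single i 1), LinearMap.mem_range_self φb _⟩ := Subtype.ext hb
  calc ((f0.isometryOfInner hinner).comp j.toLinearIsometry)
        ⟨b i, subset_span (mem_range_self i)⟩
      = f0 ⟨b i, hmem⟩ := by
        simp only [LinearIsometry.coe_comp, Function.comp_apply,
          LinearIsometryEquiv.coe_toLinearIsometry, hj2]
        rfl
    _ = f0 ⟨φb (Pi.single i 1), LinearMap.mem_range_self φb _⟩ := by rw [hsub]
    _ = φa (Pi.single i 1) := hf0 _ _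
    _ = a i := by rw [hφa]; simp [Pi.single_apply, ite_smul]

theorem my_exists_gram_completion {ι : Type*} [Fintype ι]
    [FiniteDimensional ℝ E] [FiniteDimensional ℝ F]
    (s : Set ι) (a : ι → E) (b : ι → F)
    (hg : ∀ i ∈ s, ∀ j ∈ s, ⟪a i, a j⟫ = ⟪b i, b j⟫)
    (hdim : finrank ℝ (span ℝ (range b)) ≤ finrank ℝ E) :
    ∃ y : ι → E, (∀ i j, ⟪y i, y j⟫ = ⟪b i, b j⟫) ∧ ∀ i ∈ s, y i = a i := by
  classical
  set D : Submodule ℝ F := span ℝ (range b) with hD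
  let bD : ι → ↥D := fun i => ⟨b i, subset_span (mem_range_self i)⟩
  have hbD : ∀ i j, ⟪bD i, bD j⟫ = ⟪b i, b j⟫ := fun i j => rfl
  set S₀ : Submodule ℝ ↥D := span ℝ (range fun i : s => bD i) with hS₀
  -- partial isometry from span of overlap vectors
  obtain ⟨f, hf⟩ := my_exists_isometry_span_of_gram
    (fun i : s => a i) (fun i : s => bD i)
    (fun i j => (hg i i.2 j j.2).trans (hbD i j).symm)
  obtain ⟨e⟩ := my_exists_isometry_of_finrank_le (E := ↥D) (F := E) hdim
  set M : Submodule ℝ E := S₀.map e.toLinearMap with hM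
  let eqv : ↥S₀ ≃ₗ[ℝ] ↥M := Submodule.equivMapOfInjective e.toLinearMap e.injective S₀
  have heqv : ∀ z : ↥S₀, ((eqv z : E)) = e (z : ↥D) :=
    fun z => Submodule.coe_equivMapOfInjective_apply _ _ _ _
  let u0 : ↥M →ₗ[ℝ] E := f.toLinearMap ∘ₗ (eqv.symm : ↥M →ₗ[ℝ] ↥S₀)
  have hu0 : ∀ z : ↥S₀, u0 (eqv z) = f z := by
    intro z
    simp [u0]
  have hu_inner : ∀ x y : ↥M, ⟪u0 x, u0 y⟫ = ⟪x, y⟫ := by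
    intro x y
    have hx : u0 x = f (eqv.symm x) := rfl
    have hy : u0 y = f (eqv.symm y) := rfl
    have hfm := LinearIsometry.inner_map_map (𝕜 := ℝ) f (eqv.symm x) (eqv.symm y)
    have hem := LinearIsometry.inner_map_map (𝕜 := ℝ) e ((eqv.symm x : ↥S₀) : ↥D) ((eqv.symm y : ↥S₀) : ↥D)
    have hex : e ((eqv.symm x : ↥S₀) : ↥D) = (x : E) := by
      rw [← heqv (eqv.symm x), eqv.apply_symm_apply]
    have hey : e ((eqv.symm y : ↥S₀) : ↥D) = (y : E) := by
      rw [← heqv (eqv.symm y), eqv.apply_symm_apply]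
    rw [hex, hey] at hem
    rw [hx, hy, hfm]
    exact hem.symm
  let u : ↥M →ₗᵢ[ℝ] E := u0.isometryOfInner hu_inner
  let g : ↥D →ₗᵢ[ℝ] E := u.extend.comp e
  refine ⟨fun i => g (bD i), fun i j => ?_, fun i hi => ?_⟩
  · show ⟪g (bD i), g (bD j)⟫ = ⟪b i, b j⟫
    rw [LinearIsometry.inner_map_map (𝕜 := ℝ) g (bD i) (bD j)]
    exact hbD i j
  -- for i ∈ s, g (bD i) = a i
  show g (bD i) = a i
  have hmem : bD i ∈ S₀ := subset_span (mem_range_self (⟨i, hi⟩ : s))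
  set z : ↥S₀ := ⟨bD i, hmem⟩ with hz
  have h1 : g (bD i) = u.extend (e (bD i)) := rfl
  have h2 : e (bD i) = ((eqv z : E)) := (heqv z).symm
  rw [h1, h2]
  have h3 : u.extend ((eqv z : E)) = u (eqv z) := u.extend_apply (eqv z)
  rw [h3]
  have h4 : u (eqv z) = f z := hu0 z
  rw [h4]
  have h5 : z = ⟨(fun i : s => bD i) ⟨i, hi⟩, subset_span (mem_range_self _)⟩ := rfl
  rw [h5]
  exact hf ⟨i, hi⟩

theorem my_gram_eq_transpose_mul {n ι : Type*} [Fintype n] [Fintype ι]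
    (v : ι → EuclideanSpace ℝ n) :
    (Matrix.of fun i j => ⟪v i, v j⟫ : Matrix ι ι ℝ)
      = (Matrix.of fun k i => v i k : Matrix n ι ℝ).transpose * (Matrix.of fun k i => v i k) := by
  ext i j
  simp [Matrix.mul_apply, PiLp.inner_apply, RCLike.inner_apply, Matrix.transpose_apply, mul_comm]

theorem my_gram_posSemidef {n ι : Type*} [Fintype n] [Fintype ι]
    (v : ι → EuclideanSpace ℝ n) :
    (Matrix.of fun i j => ⟪v i, v j⟫ : Matrix ι ι ℝ).PosSemidef := by
  rw [my_gram_eq_transpose_mul]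
  rw [← Matrix.conjTranspose_eq_transpose_of_trivial]
  exact Matrix.posSemidef_conjTranspose_mul_self _

theorem my_rank_gram {n ι : Type*} [Fintype n] [Fintype ι]
    (v : ι → EuclideanSpace ℝ n) :
    (Matrix.of fun i j => ⟪v i, v j⟫ : Matrix ι ι ℝ).rank
      = finrank ℝ (span ℝ (range v)) := by
  rw [my_gram_eq_transpose_mul, Matrix.rank_transpose_mul_self,
    Matrix.rank_eq_finrank_span_cols]
  -- transport between (n → ℝ) and EuclideanSpace ℝ n
  let L := WithLp.linearEquiv 2 ℝ (n → ℝ)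
  have h1 : range ((Matrix.of fun k i => v i k : Matrix n ι ℝ).transpose) = ⇑L '' (range v) := by
    rw [← Set.range_comp]
    rfl
  rw [Matrix.col, h1, ← LinearEquiv.coe_coe, ← Submodule.map_span]
  exact LinearEquiv.finrank_map_eq L _

end helpers

theorem psd_gluing_aux {V : Type*} [Fintype V] [DecidableEq V]
    (V₁ V₂ : Set V) [Fintype ↥V₁] [Fintype ↥V₂]
    (hcover : V₁ ∪ V₂ = Set.univ)
    (X₁ : Matrix ↥V₁ ↥V₁ ℝ) (X₂ : Matrix ↥V₂ ↥V₂ ℝ)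
    (h₁ : X₁.PosSemidef) (h₂ : X₂.PosSemidef)
    (hagree : ∀ (u v : V) (hu₁ : u ∈ V₁) (hu₂ : u ∈ V₂) (hv₁ : v ∈ V₁) (hv₂ : v ∈ V₂),
      X₁ ⟨u, hu₁⟩ ⟨v, hv₁⟩ = X₂ ⟨u, hu₂⟩ ⟨v, hv₂⟩)
    (hrank : X₂.rank ≤ X₁.rank) :
    ∃ X : Matrix V V ℝ, X.PosSemidef ∧
      (∀ (u v : V) (hu : u ∈ V₁) (hv : v ∈ V₁), X u v = X₁ ⟨u, hu⟩ ⟨v, hv⟩) ∧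
      (∀ (u v : V) (hu : u ∈ V₂) (hv : v ∈ V₂), X u v = X₂ ⟨u, hu⟩ ⟨v, hv⟩) ∧
      X.rank = X₁.rank := by
  classical
  obtain ⟨A₁, hA₁⟩ : ∃ B : Matrix ↥V₁ ↥V₁ ℝ, X₁ = Matrix.conjTranspose B * B := by
    open scoped MatrixOrder in exact CStarAlgebra.nonneg_iff_eq_star_mul_self.mp h₁.nonneg
  obtain ⟨A₂, hA₂⟩ : ∃ B : Matrix ↥V₂ ↥V₂ ℝ, X₂ = Matrix.conjTranspose B * B := by
    open scoped MatrixOrder in exact CStarAlgebra.nonneg_iff_eq_star_mul_self.mp h₂.nonneg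
  let a : ↥V₁ → EuclideanSpace ℝ ↥V₁ :=
    fun v => (WithLp.equiv 2 (↥V₁ → ℝ)).symm (fun i => A₁ i v)
  let b : ↥V₂ → EuclideanSpace ℝ ↥V₂ :=
    fun v => (WithLp.equiv 2 (↥V₂ → ℝ)).symm (fun i => A₂ i v)
  have hgram₁ : ∀ u v : ↥V₁, ⟪a u, a v⟫ = X₁ u v := by
    intro u v
    rw [hA₁]
    simp [a, Matrix.mul_apply, PiLp.inner_apply, RCLike.inner_apply,
      Matrix.conjTranspose_apply, starRingEnd_apply, mul_comm]
  have hgram₂ : ∀ u v : ↥V₂, ⟪b u, b v⟫ = X₂ u v := by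
    intro u v
    rw [hA₂]
    simp [b, Matrix.mul_apply, PiLp.inner_apply, RCLike.inner_apply,
      Matrix.conjTranspose_apply, starRingEnd_apply, mul_comm]
  set W₁ : Submodule ℝ (EuclideanSpace ℝ ↥V₁) := span ℝ (range a) with hW₁
  have hrk₁ : X₁.rank = finrank ℝ W₁ := by
    have h := my_rank_gram a
    have he : (Matrix.of fun u v => ⟪a u, a v⟫ : Matrix ↥V₁ ↥V₁ ℝ) = X₁ := by
      ext u v; exact hgram₁ u v
    rw [← he, h]
  have hrk₂ : X₂.rank = finrank ℝ (span ℝ (range b)) := by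
    have h := my_rank_gram b
    have he : (Matrix.of fun u v => ⟪b u, b v⟫ : Matrix ↥V₂ ↥V₂ ℝ) = X₂ := by
      ext u v; exact hgram₂ u v
    rw [← he, h]
  -- the overlap index set inside V₂
  let s : Set ↥V₂ := {v : ↥V₂ | (v : V) ∈ V₁}
  let a' : ↥V₂ → ↥W₁ := fun v =>
    if h : (v : V) ∈ V₁ then ⟨a ⟨v, h⟩, subset_span (mem_range_self _)⟩ else 0
  have ha' : ∀ (v : ↥V₂) (h : (v : V) ∈ V₁), (a' v : EuclideanSpace ℝ ↥V₁) = a ⟨v, h⟩ := by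
    intro v h
    simp only [a', dif_pos h]
  have hg : ∀ i ∈ s, ∀ j ∈ s, ⟪a' i, a' j⟫ = ⟪b i, b j⟫ := by
    intro i hi j hj
    have h1 : ⟪a' i, a' j⟫ = ⟪(a' i : EuclideanSpace ℝ ↥V₁), (a' j : EuclideanSpace ℝ ↥V₁)⟫ := rfl
    rw [h1, ha' i hi, ha' j hj, hgram₁, hgram₂]
    exact hagree ↑i ↑j hi i.2 hj j.2
  have hdim : finrank ℝ (span ℝ (range b)) ≤ finrank ℝ ↥W₁ := by
    rw [← hrk₂, ← hrk₁]; exact hrank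
  obtain ⟨y, hy1, hy2⟩ := my_exists_gram_completion s a' b hg hdim
  have hmem₂ : ∀ v : V, v ∉ V₁ → v ∈ V₂ := by
    intro v hv
    have : v ∈ V₁ ∪ V₂ := hcover ▸ mem_univ v
    exact this.resolve_left hv
  let x : V → EuclideanSpace ℝ ↥V₁ := fun v =>
    if h : v ∈ V₁ then a ⟨v, h⟩ else (y ⟨v, hmem₂ v h⟩ : EuclideanSpace ℝ ↥V₁)
  have hx₁ : ∀ (v : V) (h : v ∈ V₁), x v = a ⟨v, h⟩ := by
    intro v h; simp only [x, dif_pos h]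
  have hx₂ : ∀ (v : V) (h : v ∈ V₂), x v = (y ⟨v, h⟩ : EuclideanSpace ℝ ↥V₁) := by
    intro v h
    by_cases h1 : v ∈ V₁
    · rw [hx₁ v h1]
      have hs : (⟨v, h⟩ : ↥V₂) ∈ s := h1
      rw [hy2 ⟨v, h⟩ hs, ha' ⟨v, h⟩ h1]
    · simp only [x, dif_neg h1]
  have hxW : ∀ v : V, x v ∈ W₁ := by
    intro v
    by_cases h : v ∈ V₁
    · rw [hx₁ v h]; exact subset_span (mem_range_self _)
    · rw [hx₂ v (hmem₂ v h)]; exact (y ⟨v, hmem₂ v h⟩).2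
  refine ⟨Matrix.of fun u v => ⟪x u, x v⟫, my_gram_posSemidef x, ?_, ?_, ?_⟩
  · intro u v hu hv
    show ⟪x u, x v⟫ = X₁ ⟨u, hu⟩ ⟨v, hv⟩
    rw [hx₁ u hu, hx₁ v hv, hgram₁]
  · intro u v hu hv
    show ⟪x u, x v⟫ = X₂ ⟨u, hu⟩ ⟨v, hv⟩
    rw [hx₂ u hu, hx₂ v hv]
    have h1 : ⟪(y ⟨u, hu⟩ : EuclideanSpace ℝ ↥V₁), (y ⟨v, hv⟩ : EuclideanSpace ℝ ↥V₁)⟫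
        = ⟪y ⟨u, hu⟩, y ⟨v, hv⟩⟫ := rfl
    rw [h1, hy1, hgram₂]
  · have hspan : span ℝ (range x) = W₁ := by
      apply le_antisymm
      · rw [span_le]
        rintro _ ⟨v, rfl⟩
        exact hxW v
      · rw [hW₁, span_le]
        rintro _ ⟨u, rfl⟩
        have h2 : a u = x ↑u := by
          rw [hx₁ ↑u u.2]
        rw [h2]
        exact subset_span (mem_range_self _)
    rw [my_rank_gram x, hspan, hrk₁]

/-- Two psd matrices indexed by `V₁` and `V₂` that agree on `V₁ ∩ V₂` admit a common psd
completion indexed by `V = V₁ ∪ V₂` whose rank is the maximum of the two ranks. -/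
theorem psd_gluing {V : Type*} [Fintype V] [DecidableEq V]
    (V₁ V₂ : Set V) [Fintype ↥V₁] [Fintype ↥V₂]
    (hcover : V₁ ∪ V₂ = Set.univ)
    (X₁ : Matrix ↥V₁ ↥V₁ ℝ) (X₂ : Matrix ↥V₂ ↥V₂ ℝ)
    (h₁ : X₁.PosSemidef) (h₂ : X₂.PosSemidef)
    (hagree : ∀ (u v : V) (hu₁ : u ∈ V₁) (hu₂ : u ∈ V₂) (hv₁ : v ∈ V₁) (hv₂ : v ∈ V₂),
      X₁ ⟨u, hu₁⟩ ⟨v, hv₁⟩ = X₂ ⟨u, hu₂⟩ ⟨v, hv₂⟩) :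
    ∃ X : Matrix V V ℝ, X.PosSemidef ∧
      (∀ (u v : V) (hu : u ∈ V₁) (hv : v ∈ V₁), X u v = X₁ ⟨u, hu⟩ ⟨v, hv⟩) ∧
      (∀ (u v : V) (hu : u ∈ V₂) (hv : v ∈ V₂), X u v = X₂ ⟨u, hu⟩ ⟨v, hv⟩) ∧
      X.rank = max X₁.rank X₂.rank := by
  rcases le_total X₂.rank X₁.rank with h | h
  · obtain ⟨X, hpsd, hr1, hr2, hrk⟩ :=
      psd_gluing_aux V₁ V₂ hcover X₁ X₂ h₁ h₂ hagree h
    exact ⟨X, hpsd, hr1, hr2, by rw [hrk, max_eq_left h]⟩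
  · have hcover' : V₂ ∪ V₁ = Set.univ := by rw [Set.union_comm]; exact hcover
    obtain ⟨X, hpsd, hr2, hr1, hrk⟩ :=
      psd_gluing_aux V₂ V₁ hcover' X₂ X₁ h₂ h₁
        (fun u v hu₂ hu₁ hv₂ hv₁ => (hagree u v hu₁ hu₂ hv₁ hv₂).symm) h
    exact ⟨X, hpsd, hr1, hr2, by rw [hrk, max_eq_right h]⟩
end

section
/- For any graph G, gd(G) ≤ tw(G) + 1, where tw(G) is the tree-width of G. -/
set_option linter.unusedSectionVars false
set_option maxHeartbeats 1000000

open scoped RealInnerProductSpace Matrix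

universe u

section Aux

namespace GramTW


open scoped RealInnerProductSpace

variable {m : ℕ} {α : Type*} [Fintype α]

/-- Two tuples with the same Gram matrix are related by a linear isometry of the ambient
Euclidean space. -/
lemma exists_isometry_of_gram_eq (z y : α → EuclideanSpace ℝ (Fin m))
    (hG : ∀ a b, ⟪z a, z b⟫ = ⟪y a, y b⟫) :
    ∃ f : EuclideanSpace ℝ (Fin m) →ₗᵢ[ℝ] EuclideanSpace ℝ (Fin m), ∀ a, f (z a) = y a := by
  classical
  let fl : (α → ℝ) →ₗ[ℝ] EuclideanSpace ℝ (Fin m) := Fintype.linearCombination ℝ z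
  let gl : (α → ℝ) →ₗ[ℝ] EuclideanSpace ℝ (Fin m) := Fintype.linearCombination ℝ y
  have hinner : ∀ c c' : α → ℝ, ⟪fl c, fl c'⟫ = ⟪gl c, gl c'⟫ := by
    intro c c'
    simp only [fl, gl, Fintype.linearCombination_apply]
    rw [sum_inner, sum_inner]
    refine Finset.sum_congr rfl fun a _ => ?_
    rw [inner_sum, inner_sum]
    refine Finset.sum_congr rfl fun b _ => ?_
    rw [real_inner_smul_left, real_inner_smul_left, real_inner_smul_right,
      real_inner_smul_right, hG]
  have hker : LinearMap.ker fl ≤ LinearMap.ker gl := by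
    intro c hc
    rw [LinearMap.mem_ker] at hc ⊢
    have : ⟪gl c, gl c⟫ = 0 := by rw [← hinner, hc, inner_zero_left]
    exact inner_self_eq_zero.mp this
  let h' : LinearMap.range fl →ₗ[ℝ] EuclideanSpace ℝ (Fin m) :=
    ((LinearMap.ker fl).liftQ gl hker).comp fl.quotKerEquivRange.symm.toLinearMap
  have hkey : ∀ c : α → ℝ, h' ⟨fl c, LinearMap.mem_range_self _ c⟩ = gl c := by
    intro c
    have h1 : fl.quotKerEquivRange.symm ⟨fl c, LinearMap.mem_range_self _ c⟩
        = (LinearMap.ker fl).mkQ c := fl.quotKerEquivRange_symm_apply_image c _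
    simp only [h', LinearMap.comp_apply, LinearEquiv.coe_toLinearMap, h1]
    rfl
  have hnorm : ∀ w : LinearMap.range fl, ‖h' w‖ = ‖(w : EuclideanSpace ℝ (Fin m))‖ := by
    rintro ⟨w, hw⟩
    obtain ⟨c, rfl⟩ := hw
    rw [hkey c]
    have h2 : ‖gl c‖ * ‖gl c‖ = ‖fl c‖ * ‖fl c‖ := by
      rw [← real_inner_self_eq_norm_mul_norm, ← real_inner_self_eq_norm_mul_norm, hinner]
    exact (mul_self_inj_of_nonneg (norm_nonneg _) (norm_nonneg _)).mp h2
  let T₀ : LinearMap.range fl →ₗᵢ[ℝ] EuclideanSpace ℝ (Fin m) := ⟨h', hnorm⟩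
  refine ⟨T₀.extend, fun a => ?_⟩
  have hz : z a = fl (Pi.single a 1) := by
    simp [fl, Fintype.linearCombination_apply_single]
  have hy : y a = gl (Pi.single a 1) := by
    simp [gl, Fintype.linearCombination_apply_single]
  have : T₀.extend ((⟨fl (Pi.single a 1), LinearMap.mem_range_self _ _⟩ :
      LinearMap.range fl) : EuclideanSpace ℝ (Fin m)) = T₀ ⟨fl (Pi.single a 1), LinearMap.mem_range_self _ _⟩ :=
    T₀.extend_apply _
  rw [hz, hy]
  rw [this]
  exact hkey _

/-- A psd matrix on an index set of cardinality at most `m` is the Gram matrix of a family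
of vectors in `ℝ^m`. -/
lemma exists_gram_realization (hcard : Fintype.card α ≤ m) (X : Matrix α α ℝ)
    (hX : X.PosSemidef) :
    ∃ z : α → EuclideanSpace ℝ (Fin m), ∀ a b, ⟪z a, z b⟫ = X a b := by
  classical
  open scoped MatrixOrder in obtain ⟨A, rfl⟩ := CStarAlgebra.nonneg_iff_eq_star_mul_self.mp hX.nonneg
  obtain ⟨e⟩ : Nonempty (α ↪ Fin m) :=
    Function.Embedding.nonempty_of_card_le (by simpa using hcard)
  refine ⟨fun a => ∑ c, A c a • EuclideanSpace.single (e c) (1 : ℝ), fun a b => ?_⟩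
  rw [sum_inner]
  have : ∀ c, ⟪A c a • EuclideanSpace.single (e c) (1:ℝ),
      ∑ c', A c' b • EuclideanSpace.single (e c') (1:ℝ)⟫ = A c a * A c b := by
    intro c
    rw [inner_sum]
    rw [Finset.sum_eq_single c]
    · rw [real_inner_smul_left, real_inner_smul_right, EuclideanSpace.inner_single_left]
      simp
    · intro c' _ hne
      rw [real_inner_smul_left, real_inner_smul_right, EuclideanSpace.inner_single_left]
      simp [EuclideanSpace.single_apply, e.injective.ne (Ne.symm hne)]
    · simp
  rw [Finset.sum_congr rfl fun c _ => this c]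
  simp [Matrix.mul_apply, Matrix.conjTranspose_apply]


open SimpleGraph

variable {ι : Type*} [DecidableEq ι] {T : SimpleGraph ι}

private lemma path_eq (hac : T.IsAcyclic) {a b : ι} {p q : T.Walk a b}
    (hp : p.IsPath) (hq : q.IsPath) : p = q := by
  have := (isAcyclic_iff_path_unique.mp hac) (⟨p, hp⟩ : T.Path a b) ⟨q, hq⟩
  exact congrArg Subtype.val this

private lemma plen (hconn : T.Connected) (hac : T.IsAcyclic) {a b : ι} {p : T.Walk a b}
    (hp : p.IsPath) : p.length = T.dist a b := by
  obtain ⟨q, hql⟩ := hconn.exists_walk_length_eq_dist a b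
  have hq : q.IsPath := q.isPath_of_length_eq_dist hql
  rw [path_eq hac hp hq, hql]

private lemma dist_split (hconn : T.Connected) (hac : T.IsAcyclic) {a b x : ι}
    {p : T.Walk a b} (hp : p.IsPath) (hx : x ∈ p.support) :
    T.dist a x + T.dist x b = T.dist a b := by
  rw [← plen hconn hac hp, ← plen hconn hac (hp.takeUntil hx), ← plen hconn hac (hp.dropUntil hx)]
  rw [← SimpleGraph.Walk.length_append, p.take_spec hx]

private lemma dist_adj (hconn : T.Connected) (hac : T.IsAcyclic) {a b : ι}
    (h : T.Adj a b) : T.dist a b = 1 := by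
  have hp : (SimpleGraph.Walk.cons h SimpleGraph.Walk.nil).IsPath := by
    rw [SimpleGraph.Walk.cons_isPath_iff]
    exact ⟨SimpleGraph.Walk.IsPath.nil, by simp [h.ne]⟩
  have := plen hconn hac hp
  simpa using this.symm

/-- step lemma: if `i₀` is on the unique path from `r` to `x`, and `x'` is adjacent to `x`
with `dist r i₀ ≤ dist r x'`, then `i₀` is on the unique path from `r` to `x'`. -/
private lemma anc_step (hconn : T.Connected) (hac : T.IsAcyclic) {r i₀ x x' : ι}
    (hadj : T.Adj x x') (hge : T.dist r i₀ ≤ T.dist r x')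
    (hx : ∀ p : T.Walk r x, p.IsPath → i₀ ∈ p.support) :
    ∀ q : T.Walk r x', q.IsPath → i₀ ∈ q.support := by
  intro q hq
  obtain ⟨p, hpl⟩ := hconn.exists_walk_length_eq_dist r x
  have hp : p.IsPath := p.isPath_of_length_eq_dist hpl
  have hi₀ : i₀ ∈ p.support := hx p hp
  by_cases hx' : x' ∈ p.support
  · -- `q` is the initial segment of `p` up to `x'`
    have hq' : q = p.takeUntil x' hx' := path_eq hac hq (hp.takeUntil hx')
    rw [← p.take_spec hx', SimpleGraph.Walk.mem_support_append_iff] at hi₀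
    rcases hi₀ with h1 | h2
    · rw [hq']; exact h1
    · -- the rest of `p` is the unique path from `x'` to `x`, which is the single edge
      have hdrop : p.dropUntil x' hx' = SimpleGraph.Walk.cons hadj.symm SimpleGraph.Walk.nil :=
        path_eq hac (hp.dropUntil hx') (by
          rw [SimpleGraph.Walk.cons_isPath_iff]
          exact ⟨SimpleGraph.Walk.IsPath.nil, by simp [hadj.ne']⟩)
      rw [hdrop] at h2
      simp only [SimpleGraph.Walk.support_cons, SimpleGraph.Walk.support_nil,
        List.mem_cons, List.mem_singleton] at h2
      rcases h2 with rfl | h2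
      · rw [hq']; exact SimpleGraph.Walk.end_mem_support _
      · simp only [List.mem_nil_iff, or_false] at h2
        subst h2
        -- now `i₀ = x` is adjacent to `x'`, with `dist r i₀ ≤ dist r x'`
        -- show x' cannot be on the path r → i₀, then the path r→x' is path(r→i₀) + edge
        obtain ⟨p₀, hp₀l⟩ := hconn.exists_walk_length_eq_dist r i₀
        have hp₀ : p₀.IsPath := p₀.isPath_of_length_eq_dist hp₀l
        by_cases hmem : x' ∈ p₀.support
        · exfalso
          have hsplit := dist_split hconn hac hp₀ hmem
          have h1 : T.dist x' i₀ = 1 := dist_adj hconn hac hadj.symm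
          omega
        · have hcp : (p₀.concat hadj).IsPath := by
            rw [← SimpleGraph.Walk.isPath_reverse_iff, SimpleGraph.Walk.reverse_concat,
              SimpleGraph.Walk.cons_isPath_iff]
            constructor
            · rwa [SimpleGraph.Walk.isPath_reverse_iff]
            · rwa [SimpleGraph.Walk.support_reverse, List.mem_reverse]
          have : q = p₀.concat hadj := path_eq hac hq hcp
          rw [this, SimpleGraph.Walk.support_concat]
          simp [SimpleGraph.Walk.end_mem_support]
  · have hcp : (p.concat hadj).IsPath := by
      rw [← SimpleGraph.Walk.isPath_reverse_iff, SimpleGraph.Walk.reverse_concat,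
        SimpleGraph.Walk.cons_isPath_iff]
      constructor
      · rwa [SimpleGraph.Walk.isPath_reverse_iff]
      · rwa [SimpleGraph.Walk.support_reverse, List.mem_reverse]
    have : q = p.concat hadj := path_eq hac hq hcp
    rw [this, SimpleGraph.Walk.support_concat]
    simp [hi₀]

/-- If `S` induces a connected subgraph, there is a walk between any two of its members
with support inside `S`. -/
private lemma exists_walk_in (S : Set ι) (hS : (T.induce S).Connected) {a b : ι}
    (ha : a ∈ S) (hb : b ∈ S) : ∃ W : T.Walk a b, ∀ x ∈ W.support, x ∈ S := by
  obtain ⟨W'⟩ := hS ⟨a, ha⟩ ⟨b, hb⟩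
  refine ⟨W'.map (SimpleGraph.Embedding.induce S).toHom, ?_⟩
  intro x hx
  replace hx : x ∈ (W'.map (SimpleGraph.Embedding.induce S).toHom).support := hx
  rw [SimpleGraph.Walk.support_map, List.mem_map] at hx
  obtain ⟨y, _, rfl⟩ := hx
  exact y.2

/-- the unique path between two members of a connected induced set stays in the set -/
private lemma path_support_in (hac : T.IsAcyclic) (S : Set ι) (hS : (T.induce S).Connected)
    {a b : ι} (ha : a ∈ S) (hb : b ∈ S) {p : T.Walk a b} (hp : p.IsPath) :
    ∀ x ∈ p.support, x ∈ S := by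
  obtain ⟨W, hW⟩ := exists_walk_in S hS ha hb
  have : p = W.bypass := path_eq hac hp W.bypass_isPath
  intro x hx
  rw [this] at hx
  exact hW x (W.support_bypass_subset hx)

private lemma anc_walk (hconn : T.Connected) (hac : T.IsAcyclic) {r i₀ : ι} {S : Set ι}
    (hmin : ∀ i ∈ S, T.dist r i₀ ≤ T.dist r i) :
    ∀ {c i : ι} (W : T.Walk c i), (∀ x ∈ W.support, x ∈ S) →
      (∀ q : T.Walk r c, q.IsPath → i₀ ∈ q.support) →
      ∀ q : T.Walk r i, q.IsPath → i₀ ∈ q.support := by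
  intro c i W
  induction W with
  | nil => exact fun _ h => h
  | @cons a b i hadj W ih =>
      intro hsupp hc
      refine ih (fun x hx => hsupp x ?_) ?_
      · rw [SimpleGraph.Walk.support_cons]; exact List.mem_cons_of_mem _ hx
      · refine anc_step hconn hac hadj (hmin b ?_) hc
        refine hsupp b ?_
        rw [SimpleGraph.Walk.support_cons]
        exact List.mem_cons_of_mem _ W.start_mem_support

/-- `i₀` minimizing `dist r ·` in a connected induced set `S` lies on the unique path
from `r` to every member of `S`. -/
private lemma anc_of_min (hconn : T.Connected) (hac : T.IsAcyclic) {r i₀ : ι} {S : Set ι}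
    (hS : (T.induce S).Connected) (hi₀ : i₀ ∈ S)
    (hmin : ∀ i ∈ S, T.dist r i₀ ≤ T.dist r i) {i : ι} (hi : i ∈ S) :
    ∀ q : T.Walk r i, q.IsPath → i₀ ∈ q.support := by
  obtain ⟨W, hW⟩ := exists_walk_in S hS hi₀ hi
  exact anc_walk hconn hac hmin W hW (fun q hq => q.end_mem_support)

/-- Key combinatorial lemma: some vertex has all its "bag-mates" inside a single bag. -/
lemma exists_good_vertex {V : Type*} [Fintype V] [Nonempty V]
    {ι : Type*} [DecidableEq ι] {T : SimpleGraph ι} {B : ι → Set V}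
    (hconn : T.Connected) (hac : T.IsAcyclic)
    (hsub : ∀ v, (T.induce {i | v ∈ B i}).Connected)
    (hbag : ∀ v : V, ∃ i, v ∈ B i) :
    ∃ (v : V) (i₀ : ι), v ∈ B i₀ ∧ ∀ (w : V) (j : ι), v ∈ B j → w ∈ B j → w ∈ B i₀ := by
  classical
  obtain ⟨r, _⟩ := hbag (Classical.arbitrary V)
  set D : V → ℕ := fun v => sInf ((fun i => T.dist r i) '' {i | v ∈ B i}) with hD
  have hDmem : ∀ v : V, D v ∈ (fun i => T.dist r i) '' {i | v ∈ B i} := by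
    intro v
    apply Nat.sInf_mem
    obtain ⟨i, hi⟩ := hbag v
    exact ⟨T.dist r i, ⟨i, hi, rfl⟩⟩
  have hDle : ∀ (v : V) (i : ι), v ∈ B i → D v ≤ T.dist r i := by
    intro v i hi
    exact Nat.sInf_le ⟨i, hi, rfl⟩
  obtain ⟨v, _, hvmax⟩ := Finset.exists_max_image Finset.univ D ⟨Classical.arbitrary V, by simp⟩
  obtain ⟨i₀, hvi₀, hdi₀⟩ := hDmem v
  refine ⟨v, i₀, hvi₀, ?_⟩
  intro w j hvj hwj
  obtain ⟨t, hwt, hdt⟩ := hDmem w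
  have hDw : D w ≤ D v := hvmax w (by simp)
  -- the unique path from `r` to `j`
  obtain ⟨q, hql⟩ := hconn.exists_walk_length_eq_dist r j
  have hq : q.IsPath := q.isPath_of_length_eq_dist hql
  have hi₀q : i₀ ∈ q.support :=
    anc_of_min hconn hac (hsub v) hvi₀ (fun i hi => by simpa only [hdi₀] using hDle v i hi) hvj q hq
  have htq : t ∈ q.support :=
    anc_of_min hconn hac (hsub w) hwt (fun i hi => by simpa only [hdt] using hDle w i hi) hwj q hq
  rw [← q.take_spec htq, SimpleGraph.Walk.mem_support_append_iff] at hi₀q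
  rcases hi₀q with h1 | h2
  · -- `i₀` on the path from `r` to `t`; then `i₀ = t`
    have hsplit := dist_split hconn hac (hq.takeUntil htq) h1
    have hlen : (q.takeUntil t htq).length = T.dist r t := plen hconn hac (hq.takeUntil htq)
    have hge : T.dist r t ≤ T.dist r i₀ := by
      simp only [] at hdi₀ hdt
      rw [hdi₀, hdt]; exact hDw
    have h0 : T.dist i₀ t = 0 := by omega
    have : i₀ = t := by
      obtain ⟨p', hp'l⟩ := hconn.exists_walk_length_eq_dist i₀ t
      exact p'.eq_of_length_eq_zero (by rw [hp'l, h0])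
    rw [this]
    exact hwt
  · -- `i₀` on the unique path from `t` to `j`, which stays in the bags of `w`
    have hw' : ∀ x ∈ (q.dropUntil t htq).support, x ∈ {i | w ∈ B i} :=
      path_support_in hac _ (hsub w) hwt hwj (hq.dropUntil htq)
    exact hw' i₀ h2

lemma main_ind (k : ℕ) : ∀ (n : ℕ) (V : Type u) [Fintype V], Fintype.card V = n →
    ∀ (ι : Type) (T : SimpleGraph ι) (B : ι → Set V),
      T.Connected → T.IsAcyclic →
      (∀ v, (T.induce {i | v ∈ B i}).Connected) →
      (∀ i, (B i).ncard ≤ k + 1) →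
      ∀ X : Matrix V V ℝ, X.PosSemidef →
        ∃ y : V → EuclideanSpace ℝ (Fin (k + 1)),
          (∀ u, ⟪y u, y u⟫ = X u u) ∧
          ∀ u w, u ≠ w → (∃ i, u ∈ B i ∧ w ∈ B i) → ⟪y u, y w⟫ = X u w := by
  intro n
  induction n with
  | zero =>
      intro V _ hcard ι T B _ _ _ _ X _
      have hem : IsEmpty V := Fintype.card_eq_zero_iff.mp hcard
      exact ⟨fun _ => 0, fun u => (hem.false u).elim, fun u => (hem.false u).elim⟩
  | succ n ih =>
      intro V instV hcard ι T B hconn hac hsub hsize X hX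
      classical
      have hNE : Nonempty V := Fintype.card_pos_iff.mp (by omega)
      have hdiag : ∀ u, 0 ≤ X u u := by
        intro u
        exact hX.diag_nonneg
      have hsymm : ∀ a b, X a b = X b a := by
        intro a b
        have h := congrFun (congrFun hX.1 b) a
        simpa [Matrix.conjTranspose_apply] using h
      -- recursive step: solve the problem with one vertex removed
      have hrec : ∀ v : V, ∃ y' : {u : V // u ≠ v} → EuclideanSpace ℝ (Fin (k+1)),
          (∀ u, ⟪y' u, y' u⟫ = X u.1 u.1) ∧
          ∀ u w : {u : V // u ≠ v}, u ≠ w → (∃ i, u.1 ∈ B i ∧ w.1 ∈ B i) →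
            ⟪y' u, y' w⟫ = X u.1 w.1 := by
        intro v
        have hcard' : Fintype.card {u : V // u ≠ v} = n := by
          have h1 : Fintype.card {u : V // u = v} = 1 := Fintype.card_subtype_eq v
          have h2 := Fintype.card_subtype_compl (fun u : V => u = v)
          have h3 : Fintype.card {u : V // ¬ u = v} = Fintype.card V - 1 := by rw [h2, h1]
          have h4 : Fintype.card {u : V // u ≠ v} = Fintype.card {u : V // ¬ u = v} := rfl
          omega
        have hsize' : ∀ i, {u : {u : V // u ≠ v} | u.1 ∈ B i}.ncard ≤ k + 1 := by
          intro i
          have him : ((fun u : {u : V // u ≠ v} => u.1) '' {u | u.1 ∈ B i}) ⊆ B i := by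
            rintro x ⟨u, hu, rfl⟩; exact hu
          calc {u : {u : V // u ≠ v} | u.1 ∈ B i}.ncard
              = ((fun u : {u : V // u ≠ v} => u.1) '' {u | u.1 ∈ B i}).ncard :=
                (Set.ncard_image_of_injective _ Subtype.coe_injective).symm
            _ ≤ (B i).ncard := Set.ncard_le_ncard him (Set.toFinite _)
            _ ≤ k + 1 := hsize i
        obtain ⟨y', h1, h2⟩ := ih {u : V // u ≠ v} hcard' ι T (fun i => {u | u.1 ∈ B i})
          hconn hac (fun u => hsub u.1) hsize' (X.submatrix (·.1) (·.1)) (hX.submatrix _)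
        exact ⟨y', fun u => h1 u, fun u w hne hb => h2 u w hne hb⟩
      by_cases hbag : ∀ u : V, ∃ i, u ∈ B i
      · -- every vertex is in some bag: use a good vertex
        obtain ⟨v, i₀, hvi₀, hgood⟩ := exists_good_vertex hconn hac hsub hbag
        obtain ⟨y', hd', ho'⟩ := hrec v
        set C : Set V := B i₀ with hC
        have hcardC : Fintype.card ↥C ≤ k + 1 := by
          have : Fintype.card ↥C = C.ncard := by
            rw [← Nat.card_coe_set_eq, Nat.card_eq_fintype_card]
          rw [this]; exact hsize i₀
        obtain ⟨z, hz⟩ := exists_gram_realization hcardC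
          (X.submatrix (·.1) (·.1)) (hX.submatrix _)
        have hz' : ∀ a b : ↥C, ⟪z a, z b⟫ = X a.1 b.1 := hz
        -- two tuples indexed by the non-`v` elements of the bag `C`, with equal Gram matrices
        set α := {b : ↥C // (b : V) ≠ v} with hα
        have hGram : ∀ a b : α, ⟪z a.1, z b.1⟫ = ⟪y' ⟨a.1.1, a.2⟩, y' ⟨b.1.1, b.2⟩⟫ := by
          intro a b
          by_cases hab : (a.1 : V) = (b.1 : V)
          · have hab' : a = b := Subtype.ext (Subtype.ext hab)
            subst hab'
            rw [hz']
            exact (hd' ⟨a.1.1, a.2⟩).symm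
          · rw [hz']
            exact (ho' ⟨a.1.1, a.2⟩ ⟨b.1.1, b.2⟩ (fun h => hab (congrArg (Subtype.val : {u : V // u ≠ v} → V) h)) ⟨i₀, show (a.1:V) ∈ B i₀ from a.1.2, show (b.1:V) ∈ B i₀ from b.1.2⟩).symm
        obtain ⟨f, hf⟩ := exists_isometry_of_gram_eq (fun a : α => z a.1)
          (fun a : α => y' ⟨a.1.1, a.2⟩) hGram
        refine ⟨fun u => if h : u = v then f (z ⟨v, hvi₀⟩) else y' ⟨u, h⟩, ?_, ?_⟩
        · intro u
          by_cases h : u = v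
          · subst h
            dsimp only
            rw [dif_pos rfl, f.inner_map_map, hz']
          · dsimp only
            rw [dif_neg h]; exact hd' ⟨u, h⟩
        · intro u w hne hb
          obtain ⟨j, huj, hwj⟩ := hb
          by_cases hu : u = v
          · subst hu
            have hwv : w ≠ u := fun h => hne h.symm
            dsimp only
            rw [dif_pos rfl, dif_neg hwv]
            have hwC : w ∈ C := hgood w j huj hwj
            have : y' ⟨w, hwv⟩ = f (z ⟨w, hwC⟩) := (hf ⟨⟨w, hwC⟩, hwv⟩).symm
            rw [this, f.inner_map_map, hz']
          · by_cases hw : w = v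
            · subst hw
              dsimp only
              rw [dif_neg hu, dif_pos rfl]
              have huC : u ∈ C := hgood u j hwj huj
              have : y' ⟨u, hu⟩ = f (z ⟨u, huC⟩) := (hf ⟨⟨u, huC⟩, hu⟩).symm
              rw [this, f.inner_map_map, hz']
            · dsimp only
              rw [dif_neg hu, dif_neg hw]
              exact ho' ⟨u, hu⟩ ⟨w, hw⟩
                (fun h => hne (congrArg Subtype.val h)) ⟨j, huj, hwj⟩
      · -- some vertex lies in no bag: give it an arbitrary vector of the right norm
        push_neg at hbag
        obtain ⟨v, hv⟩ := hbag
        obtain ⟨y', hd', ho'⟩ := hrec v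
        set e0 : EuclideanSpace ℝ (Fin (k+1)) := EuclideanSpace.single 0 (1:ℝ) with he0
        refine ⟨fun u => if h : u = v then Real.sqrt (X v v) • e0 else y' ⟨u, h⟩, ?_, ?_⟩
        · intro u
          by_cases h : u = v
          · subst h
            dsimp only
            rw [dif_pos rfl, real_inner_smul_left, real_inner_smul_right]
            have he : ⟪e0, e0⟫ = (1:ℝ) := by
              rw [he0, EuclideanSpace.inner_single_left]
              simp [EuclideanSpace.single_apply]
            rw [he, mul_one, Real.mul_self_sqrt (hdiag u)]
          · dsimp only
            rw [dif_neg h]; exact hd' ⟨u, h⟩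
        · intro u w hne hb
          obtain ⟨j, huj, hwj⟩ := hb
          have hu : u ≠ v := fun h => hv j (h ▸ huj)
          have hw : w ≠ v := fun h => hv j (h ▸ hwj)
          dsimp only
          rw [dif_neg hu, dif_neg hw]
          exact ho' ⟨u, hu⟩ ⟨w, hw⟩ (fun h => hne (congrArg Subtype.val h)) ⟨j, huj, hwj⟩

end GramTW

end Aux



/-- `G` has a tree decomposition of width at most `k`: a tree `T` with bags `B i ⊆ V` covering
all vertices and edges, such that for each vertex the set of bags containing it induces a
connected subtree, and each bag has at most `k + 1` elements. -/
def HasTreeDecompositionOfWidth {V : Type*} (G : SimpleGraph V) (k : ℕ) : Prop :=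
  ∃ (ι : Type) (T : SimpleGraph ι) (B : ι → Set V),
    T.Connected ∧ T.IsAcyclic ∧
    (∀ v, ∃ i, v ∈ B i) ∧
    (∀ u v, G.Adj u v → ∃ i, u ∈ B i ∧ v ∈ B i) ∧
    (∀ v, (T.induce {i | v ∈ B i}).Connected) ∧
    (∀ i, (B i).ncard ≤ k + 1)

/-- The tree-width of a graph. -/
noncomputable def treewidth {V : Type*} (G : SimpleGraph V) : ℕ :=
  sInf {k | HasTreeDecompositionOfWidth G k}

/-- For any graph `G`, `gd(G) ≤ tw(G) + 1`. -/
theorem gramDim_le_treewidth_add_one {V : Type*} [Fintype V] (G : SimpleGraph V) :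
    gramDim G ≤ treewidth G + 1 := by
  classical
  have hwit : HasTreeDecompositionOfWidth G (Fintype.card V) := by
    refine ⟨Unit, ⊥, fun _ => Set.univ, ?_, ?_, fun v => ⟨(), Set.mem_univ v⟩,
      fun u v _ => ⟨(), Set.mem_univ u, Set.mem_univ v⟩, ?_, ?_⟩
    · exact (SimpleGraph.connected_iff _).mpr ⟨fun a b => by rw [Subsingleton.elim a b], ⟨()⟩⟩
    · intro v c hc
      cases c with
      | nil => exact hc.ne_nil rfl
      | cons h p => simp at h
    · intro v
      exact (SimpleGraph.connected_iff _).mpr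
        ⟨fun a b => by rw [Subsingleton.elim a b], ⟨⟨(), Set.mem_univ v⟩⟩⟩
    · intro i
      rw [Set.ncard_univ, Nat.card_eq_fintype_card]
      omega
  have htw : HasTreeDecompositionOfWidth G (treewidth G) := Nat.sInf_mem (s := {k | HasTreeDecompositionOfWidth G k}) ⟨_, hwit⟩
  obtain ⟨ι, T, B, hconn, hac, hcov, hedge, hsub, hsize⟩ := htw
  have hle : gramDimLE G (treewidth G + 1) := by
    intro X hX
    obtain ⟨y, hyd, hyo⟩ :=
      GramTW.main_ind (treewidth G) (Fintype.card V) V rfl ι T B hconn hac hsub hsize X hX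
    set A : Matrix (Fin (treewidth G + 1)) V ℝ := Matrix.of (fun j u => y u j) with hA
    have hYA : ∀ u w, (Aᴴ * A) u w = ⟪y u, y w⟫ := by
      intro u w
      simp [Matrix.mul_apply, Matrix.conjTranspose_apply, PiLp.inner_apply, hA,
        RCLike.inner_apply, mul_comm]
    refine ⟨Aᴴ * A, Matrix.posSemidef_conjTranspose_mul_self A, ?_, ?_, ?_⟩
    · calc (Aᴴ * A).rank ≤ A.rank := Matrix.rank_mul_le_right _ _
        _ ≤ treewidth G + 1 := by simpa using A.rank_le_card_height
    · intro u
      rw [hYA u u]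
      exact hyd u
    · intro u w h
      rw [hYA u w]
      exact hyo u w (G.ne_of_adj h) (hedge u w h)
  exact Nat.sInf_le (by exact hle)
end

section
/- The complete tripartite graph K_{2,2,2} has Gram dimension exactly 5. Specifically: (a) there exists a vector a ∈ E(K_{2,2,2}) (a partial correlation matrix specified on the edges of K_{2,2,2}) with a unique psd completion of rank 5, showing gd(K_{2,2,2}) ≥ 5; (b) K_{2,2,2} has tree-width 4, so gd(K_{2,2,2}) ≤ 5. -/
/-- The complete tripartite graph `K_{2,2,2}`, obtained from `K₆` by deleting the perfect
matching `(0,3), (1,4), (2,5)`. -/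
def K222 : SimpleGraph (Fin 6) :=
  (⊤ : SimpleGraph (Fin 6)).deleteEdges {s(0, 3), s(1, 4), s(2, 5)}

set_option maxHeartbeats 1000000

section Helpers

open Matrix SimpleGraph


open SimpleGraph

section TreeMachinery

variable {ι : Type} [DecidableEq ι] {T : SimpleGraph ι}

/-- A set closed under (unique) paths between its members. -/
def GoodSet (T : SimpleGraph ι) (S : Set ι) : Prop :=
  ∀ ⦃a b : ι⦄, a ∈ S → b ∈ S → ∀ w : T.Walk a b, w.IsPath → ∀ x ∈ w.support, x ∈ S

lemma GoodSet.inter {S₁ S₂ : Set ι} (h₁ : GoodSet T S₁) (h₂ : GoodSet T S₂) :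
    GoodSet T (S₁ ∩ S₂) := fun a b ha hb w hw x hx =>
  ⟨h₁ ha.1 hb.1 w hw x hx, h₂ ha.2 hb.2 w hw x hx⟩

lemma exists_isPath (hc : T.Connected) (a b : ι) : ∃ w : T.Walk a b, w.IsPath := by
  obtain ⟨w⟩ := hc.preconnected a b
  exact ⟨w.toPath.1, w.toPath.2⟩

/-- connectedness of the induced subgraph gives path-closedness, in an acyclic graph. -/
lemma goodSet_of_induce_connected (ha : T.IsAcyclic) {S : Set ι}
    (h : (T.induce S).Connected) : GoodSet T S := by
  intro a b haS hbS w hw x hx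
  obtain ⟨w'⟩ := h.preconnected ⟨a, haS⟩ ⟨b, hbS⟩
  let w2 : T.Walk a b := w'.map (SimpleGraph.Embedding.induce S).toHom
  have hsupp : ∀ y ∈ w2.support, y ∈ S := by
    intro y hy
    replace hy : y ∈ w'.support.map (SimpleGraph.Embedding.induce (G := T) S).toHom := by
      rw [← Walk.support_map]; exact hy
    obtain ⟨⟨z, hz⟩, _, rfl⟩ := List.mem_map.mp hy
    exact hz
  have huniq : (⟨w, hw⟩ : T.Path a b) = w2.toPath := ha.path_unique _ _
  have : x ∈ (w2.toPath : T.Walk a b).support := by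
    have : (⟨w, hw⟩ : T.Path a b).1 = (w2.toPath).1 := by rw [huniq]
    rwa [← this]
  exact hsupp x (Walk.support_toPath_subset w2 this)

lemma crossing {A : Set ι} :
    ∀ {a b : ι} (w : T.Walk a b), a ∈ A → b ∉ A →
      ∃ u v, T.Adj u v ∧ u ∈ A ∧ v ∉ A ∧ u ∈ w.support ∧ v ∈ w.support := by
  intro a b w
  induction w with
  | nil => intro h1 h2; exact absurd h1 h2
  | @cons a c b h p ih =>
    intro h1 h2
    by_cases hcA : c ∈ A
    · obtain ⟨u, v, h3, h4, h5, h6, h7⟩ := ih hcA h2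
      exact ⟨u, v, h3, h4, h5, by simp [Walk.support_cons, h6],
        by simp [Walk.support_cons, h7]⟩
    · exact ⟨a, c, h, h1, hcA, by simp, by simp [Walk.support_cons, Walk.start_mem_support]⟩

/-- Helly property for three path-closed sets in a tree. -/
lemma helly3 (hc : T.Connected) (ha : T.IsAcyclic) {S₁ S₂ S₃ : Set ι}
    (g₁ : GoodSet T S₁) (g₂ : GoodSet T S₂) (g₃ : GoodSet T S₃)
    (h₁₂ : (S₁ ∩ S₂).Nonempty) (h₁₃ : (S₁ ∩ S₃).Nonempty) (h₂₃ : (S₂ ∩ S₃).Nonempty) :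
    (S₁ ∩ S₂ ∩ S₃).Nonempty := by
  obtain ⟨c, hc1, hc2⟩ := h₁₂
  obtain ⟨b, hb1, hb3⟩ := h₁₃
  obtain ⟨d, hd2, hd3⟩ := h₂₃
  by_cases hb2 : b ∈ S₂
  · exact ⟨b, ⟨hb1, hb2⟩, hb3⟩
  by_cases hc3 : c ∈ S₃
  · exact ⟨c, ⟨hc1, hc2⟩, hc3⟩
  -- path from b to c
  obtain ⟨P, hP⟩ := exists_isPath hc b c
  have hPS1 : ∀ x ∈ P.support, x ∈ S₁ := g₁ hb1 hc1 P hP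
  -- support of P is inside S₂ ∪ S₃
  have hPS23 : ∀ x ∈ P.support, x ∈ S₂ ∪ S₃ := by
    obtain ⟨Q₁, hQ₁⟩ := exists_isPath hc b d
    obtain ⟨Q₂, hQ₂⟩ := exists_isPath hc d c
    have hQ₁S : ∀ x ∈ Q₁.support, x ∈ S₃ := g₃ hb3 hd3 Q₁ hQ₁
    have hQ₂S : ∀ x ∈ Q₂.support, x ∈ S₂ := g₂ hd2 hc2 Q₂ hQ₂
    intro x hx
    have huniq : (⟨P, hP⟩ : T.Path b c) = (Q₁.append Q₂).toPath := ha.path_unique _ _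
    have hx' : x ∈ ((Q₁.append Q₂).toPath : T.Walk b c).support := by
      have : (⟨P, hP⟩ : T.Path b c).1 = ((Q₁.append Q₂).toPath).1 := by rw [huniq]
      rwa [← this]
    have := Walk.support_toPath_subset _ hx'
    rw [Walk.support_append] at this
    rcases List.mem_append.mp this with h | h
    · exact Or.inr (hQ₁S x h)
    · exact Or.inl (hQ₂S x (List.tail_subset _ h))
  -- crossing out of S₃ along P
  obtain ⟨u, v, huv, hu3, hv3, huP, hvP⟩ := crossing P hb3 hc3
  have hv2 : v ∈ S₂ := (hPS23 v hvP).resolve_right hv3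
  by_cases hu2 : u ∈ S₂
  · exact ⟨u, ⟨hPS1 u huP, hu2⟩, hu3⟩
  · exfalso
    obtain ⟨Q, hQ⟩ := exists_isPath hc d u
    have hQS3 : ∀ x ∈ Q.support, x ∈ S₃ := g₃ hd3 hu3 Q hQ
    have hvQ : v ∉ Q.support := fun h => hv3 (hQS3 v h)
    -- path from v to d through u
    have hR : (Walk.cons huv.symm Q.reverse).IsPath := by
      rw [Walk.cons_isPath_iff]
      exact ⟨hQ.reverse, by rwa [Walk.support_reverse, List.mem_reverse]⟩
    have := g₂ hd2 hv2 (Walk.cons huv.symm Q.reverse).reverse hR.reverse u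
      (by rw [Walk.support_reverse, List.mem_reverse]
          simp [Walk.support_cons, Walk.support_reverse, List.mem_reverse,
            Walk.end_mem_support])
    exact hu2 this

end TreeMachinery

section More
variable {ι : Type} [DecidableEq ι] {T : SimpleGraph ι}

lemma helly5 (hc : T.Connected) (ha : T.IsAcyclic) {S₀ S₁ S₂ S₃ S₄ : Set ι}
    (g₀ : GoodSet T S₀) (g₁ : GoodSet T S₁) (g₂ : GoodSet T S₂) (g₃ : GoodSet T S₃)
    (g₄ : GoodSet T S₄)
    (h01 : (S₀ ∩ S₁).Nonempty) (h02 : (S₀ ∩ S₂).Nonempty) (h03 : (S₀ ∩ S₃).Nonempty)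
    (h04 : (S₀ ∩ S₄).Nonempty) (h12 : (S₁ ∩ S₂).Nonempty) (h13 : (S₁ ∩ S₃).Nonempty)
    (h14 : (S₁ ∩ S₄).Nonempty) (h23 : (S₂ ∩ S₃).Nonempty) (h24 : (S₂ ∩ S₄).Nonempty)
    (h34 : (S₃ ∩ S₄).Nonempty) :
    ∃ m, m ∈ S₀ ∧ m ∈ S₁ ∧ m ∈ S₂ ∧ m ∈ S₃ ∧ m ∈ S₄ := by
  have g01 := g₀.inter g₁
  have h012 : (S₀ ∩ S₁ ∩ S₂).Nonempty := helly3 hc ha g₀ g₁ g₂ h01 h02 h12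
  have h013 : (S₀ ∩ S₁ ∩ S₃).Nonempty := helly3 hc ha g₀ g₁ g₃ h01 h03 h13
  have h014 : (S₀ ∩ S₁ ∩ S₄).Nonempty := helly3 hc ha g₀ g₁ g₄ h01 h04 h14
  have g012 := g01.inter g₂
  have h0123 : (S₀ ∩ S₁ ∩ S₂ ∩ S₃).Nonempty := helly3 hc ha g01 g₂ g₃ h012 h013 h23
  have h0124 : (S₀ ∩ S₁ ∩ S₂ ∩ S₄).Nonempty := helly3 hc ha g01 g₂ g₄ h012 h014 h24
  have h01234 : (S₀ ∩ S₁ ∩ S₂ ∩ S₃ ∩ S₄).Nonempty :=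
    helly3 hc ha g012 g₃ g₄ h0123 h0124 h34
  obtain ⟨m, hm⟩ := h01234
  exact ⟨m, hm.1.1.1.1, hm.1.1.1.2, hm.1.1.2, hm.1.2, hm.2⟩

lemma sep_edge (hc : T.Connected) {S₁ S₂ : Set ι}
    (g₁ : GoodSet T S₁) (g₂ : GoodSet T S₂)
    (hdisj : ∀ z, ¬(z ∈ S₁ ∧ z ∈ S₂)) {a b : ι} (haS : a ∈ S₁) (hbS : b ∈ S₂) :
    ∃ x y, T.Adj x y ∧
      (∀ z ∈ S₁, (T.deleteEdges {s(x, y)}).Reachable z x) ∧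
      (∀ z ∈ S₂, (T.deleteEdges {s(x, y)}).Reachable z y) := by
  have key : ∀ (a bb : ι) (P : T.Walk a bb), P.IsPath → a ∈ S₁ → bb ∈ S₂ →
      ∃ x y, T.Adj x y ∧
        (∀ z ∈ S₁, (T.deleteEdges {s(x, y)}).Reachable z x) ∧
        (∀ z ∈ S₂, (T.deleteEdges {s(x, y)}).Reachable z y) := by
    intro a bb P
    induction P with
    | nil => intro _ h1 h2; exact absurd ⟨h1, h2⟩ (hdisj _)
    | @cons a c bb h P' ih =>
      intro hP haS hbbS
      by_cases hcS : c ∈ S₁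
      · exact ih hP.of_cons hcS hbbS
      · refine ⟨a, c, h, ?_, ?_⟩
        · intro z hz
          obtain ⟨Q, hQ⟩ := exists_isPath hc z a
          have hQS : ∀ x ∈ Q.support, x ∈ S₁ := g₁ hz haS Q hQ
          have hedge : ∀ e ∈ Q.edges, e ∉ ({s(a, c)} : Set (Sym2 ι)) := by
            intro e he hmem
            rw [Set.mem_singleton_iff] at hmem
            subst hmem
            exact hcS (hQS c (Q.snd_mem_support_of_mem_edges he))
          exact ⟨Q.toDeleteEdges _ hedge⟩
        · intro z hz
          obtain ⟨Q, hQ⟩ := exists_isPath hc z bb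
          have hQS : ∀ x ∈ Q.support, x ∈ S₂ := g₂ hz hbbS Q hQ
          have hedge : ∀ e ∈ (Q.append P'.reverse).edges,
              e ∉ ({s(a, c)} : Set (Sym2 ι)) := by
            intro e he hmem
            rw [Set.mem_singleton_iff] at hmem
            subst hmem
            rw [Walk.edges_append, List.mem_append] at he
            rcases he with he | he
            · have : a ∈ Q.support := Q.fst_mem_support_of_mem_edges he
              exact hdisj a ⟨haS, hQS a this⟩
            · rw [Walk.edges_reverse, List.mem_reverse] at he
              have : a ∈ P'.support := P'.fst_mem_support_of_mem_edges he
              exact (Walk.cons_isPath_iff h P').mp hP |>.2 this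
          exact ⟨(Q.append P'.reverse).toDeleteEdges _ hedge⟩
  obtain ⟨P, hP⟩ := exists_isPath hc a b
  exact key a b P hP haS hbS

lemma component_cases (hc : T.Connected) {x y : ι} (hxy : T.Adj x y) (c : ι) :
    (T.deleteEdges {s(x, y)}).Reachable c x ∨ (T.deleteEdges {s(x, y)}).Reachable c y := by
  have key : ∀ (c cc : ι), T.Walk c cc → cc = x →
      (T.deleteEdges {s(x, y)}).Reachable c x ∨ (T.deleteEdges {s(x, y)}).Reachable c y := by
    intro c cc w
    induction w with
    | nil => rintro rfl; exact Or.inl (Reachable.refl _)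
    | @cons c d cc h w' ih =>
      intro hcc
      by_cases he : s(c, d) = s(x, y)
      · rw [Sym2.eq_iff] at he
        rcases he with ⟨rfl, rfl⟩ | ⟨rfl, rfl⟩
        · exact Or.inl (Reachable.refl _)
        · exact Or.inr (Reachable.refl _)
      · have hadj : (T.deleteEdges {s(x, y)}).Adj c d := by
          rw [SimpleGraph.deleteEdges_adj]
          exact ⟨h, by simpa using he⟩
        rcases ih hcc with h' | h'
        · exact Or.inl (hadj.reachable.trans h')
        · exact Or.inr (hadj.reachable.trans h')
  obtain ⟨w⟩ := hc.preconnected c x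
  exact key c x w rfl

lemma bridge_not_reachable (ha : T.IsAcyclic) {x y : ι} (hxy : T.Adj x y) :
    ¬(T.deleteEdges {s(x, y)}).Reachable x y := by
  have hb := (isAcyclic_iff_forall_edge_isBridge.mp ha) (T.mem_edgeSet.mpr hxy)
  exact isBridge_iff.mp hb

end More



lemma K222_adj_iff (u v : Fin 6) :
    K222.Adj u v ↔ u ≠ v ∧ ¬((u = 0 ∧ v = 3) ∨ (u = 3 ∧ v = 0) ∨ (u = 1 ∧ v = 4) ∨
      (u = 4 ∧ v = 1) ∨ (u = 2 ∧ v = 5) ∨ (u = 5 ∧ v = 2)) := by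
  simp only [K222, SimpleGraph.deleteEdges_adj, SimpleGraph.top_adj, Set.mem_insert_iff,
    Set.mem_singleton_iff, Sym2.eq_iff]
  tauto

lemma notw3 : ¬HasTreeDecompositionOfWidth K222 3 := by
  rintro ⟨ι, T, B, hc, ha, hv, he, hcon, hcard⟩
  haveI := Classical.decEq ι
  set S : Fin 6 → Set ι := fun v => {i | v ∈ B i} with hS
  have gS : ∀ v, GoodSet T (S v) := fun v => goodSet_of_induce_connected ha (hcon v)
  have hSne : ∀ v, (S v).Nonempty := hv
  have hshared : ∀ u v, K222.Adj u v → (S u ∩ S v).Nonempty := by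
    intro u v h
    obtain ⟨i, h1, h2⟩ := he u v h
    exact ⟨i, h1, h2⟩
  -- a bag containing 5 distinct vertices is too big
  have hbig : ∀ (m : ι) (s : Finset (Fin 6)), s.card = 5 → (∀ z ∈ s, z ∈ B m) → False := by
    intro m s hs hsub
    have h1 : (s : Set (Fin 6)) ⊆ B m := fun z hz => hsub z (by simpa using hz)
    have h2 : (s : Set (Fin 6)).ncard ≤ (B m).ncard :=
      Set.ncard_le_ncard h1 (Set.toFinite _)
    rw [Set.ncard_coe_finset, hs] at h2
    have := hcard m
    omega
  -- if the class {u, u'} shares no bag, then there is a bag containing all other vertices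
  have hkey : ∀ u u' : Fin 6, (∀ z, z ≠ u → z ≠ u' → K222.Adj u z ∧ K222.Adj u' z) →
      ¬(S u ∩ S u').Nonempty → ∃ x, ∀ z, z ≠ u → z ≠ u' → z ∈ B x := by
    intro u u' hadj hne
    have hdisj : ∀ z, ¬(z ∈ S u ∧ z ∈ S u') := fun z hz => hne ⟨z, hz.1, hz.2⟩
    obtain ⟨a, haS⟩ := hSne u
    obtain ⟨b, hbS⟩ := hSne u'
    obtain ⟨x, y, hxy, hr1, hr2⟩ := sep_edge hc (gS u) (gS u') hdisj haS hbS
    refine ⟨x, ?_⟩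
    intro z hzu hzu'
    obtain ⟨hz_u, hz_u'⟩ := hadj z hzu hzu'
    obtain ⟨i, hiu, hiz⟩ := he u z hz_u
    obtain ⟨j, hju', hjz⟩ := he u' z hz_u'
    obtain ⟨P, hP⟩ := exists_isPath hc i j
    have hPz : ∀ w' ∈ P.support, w' ∈ S z := gS z hiz hjz P hP
    by_cases hePQ : s(x, y) ∈ P.edges
    · exact hPz x (P.fst_mem_support_of_mem_edges hePQ)
    · exfalso
      have hedge : ∀ e ∈ P.edges, e ∉ ({s(x, y)} : Set (Sym2 ι)) := by
        intro e h1 h2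
        rw [Set.mem_singleton_iff] at h2
        exact hePQ (h2 ▸ h1)
      have hreach : (T.deleteEdges {s(x, y)}).Reachable x y :=
        ((hr1 i hiu).symm.trans ⟨P.toDeleteEdges _ hedge⟩).trans (hr2 j hju')
      exact bridge_not_reachable ha hxy hreach
  -- the final contradiction, given 5 pairwise-sharing vertices
  have final : ∀ (u z1 z2 z3 z4 : Fin 6), ({u, z1, z2, z3, z4} : Finset (Fin 6)).card = 5 →
      (S u ∩ S z1).Nonempty → (S u ∩ S z2).Nonempty → (S u ∩ S z3).Nonempty →
      (S u ∩ S z4).Nonempty → (S z1 ∩ S z2).Nonempty → (S z1 ∩ S z3).Nonempty →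
      (S z1 ∩ S z4).Nonempty → (S z2 ∩ S z3).Nonempty → (S z2 ∩ S z4).Nonempty →
      (S z3 ∩ S z4).Nonempty → False := by
    intro u z1 z2 z3 z4 hcard5 h1 h2 h3 h4 h5 h6 h7 h8 h9 h10
    obtain ⟨m, hm0, hm1, hm2, hm3, hm4⟩ :=
      helly5 hc ha (gS u) (gS z1) (gS z2) (gS z3) (gS z4) h1 h2 h3 h4 h5 h6 h7 h8 h9 h10
    refine hbig m {u, z1, z2, z3, z4} hcard5 ?_
    intro z hz
    simp only [Finset.mem_insert, Finset.mem_singleton] at hz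
    rcases hz with rfl | rfl | rfl | rfl | rfl
    exacts [hm0, hm1, hm2, hm3, hm4]
  have adj : ∀ u v : Fin 6, u ≠ v → ¬((u = 0 ∧ v = 3) ∨ (u = 3 ∧ v = 0) ∨ (u = 1 ∧ v = 4) ∨
      (u = 4 ∧ v = 1) ∨ (u = 2 ∧ v = 5) ∨ (u = 5 ∧ v = 2)) → K222.Adj u v := by
    intro u v h1 h2; exact (K222_adj_iff u v).mpr ⟨h1, h2⟩
  have adjpair : ∀ u u' : Fin 6,
      (∀ z : Fin 6, z ≠ u → z ≠ u' → (u ≠ z ∧ ¬((u = 0 ∧ z = 3) ∨ (u = 3 ∧ z = 0) ∨ (u = 1 ∧ z = 4) ∨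
        (u = 4 ∧ z = 1) ∨ (u = 2 ∧ z = 5) ∨ (u = 5 ∧ z = 2))) ∧
        (u' ≠ z ∧ ¬((u' = 0 ∧ z = 3) ∨ (u' = 3 ∧ z = 0) ∨ (u' = 1 ∧ z = 4) ∨
        (u' = 4 ∧ z = 1) ∨ (u' = 2 ∧ z = 5) ∨ (u' = 5 ∧ z = 2)))) →
      ∀ z, z ≠ u → z ≠ u' → K222.Adj u z ∧ K222.Adj u' z := by
    intro u u' h z h1 h2
    obtain ⟨⟨a1, a2⟩, ⟨b1, b2⟩⟩ := h z h1 h2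
    exact ⟨adj u z a1 a2, adj u' z b1 b2⟩
  by_cases h03 : (S 0 ∩ S 3).Nonempty
  · by_cases h14 : (S 1 ∩ S 4).Nonempty
    · by_cases h25 : (S 2 ∩ S 5).Nonempty
      · -- all classes share bags : use 0,1,2,4,5
        exact final 0 1 2 4 5 (by decide)
          (hshared 0 1 (adj 0 1 (by decide) (by decide))) (hshared 0 2 (adj 0 2 (by decide) (by decide))) (hshared 0 4 (adj 0 4 (by decide) (by decide)))
          (hshared 0 5 (adj 0 5 (by decide) (by decide))) (hshared 1 2 (adj 1 2 (by decide) (by decide))) h14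
          (hshared 1 5 (adj 1 5 (by decide) (by decide))) (hshared 2 4 (adj 2 4 (by decide) (by decide))) h25
          (hshared 4 5 (adj 4 5 (by decide) (by decide)))
      · obtain ⟨x, hx⟩ := hkey 2 5 (adjpair 2 5 (by decide)) h25
        have hx' : ∀ z : Fin 6, z ≠ 2 → z ≠ 5 → x ∈ S z := fun z h1 h2 => hx z h1 h2
        exact final 2 0 1 3 4 (by decide)
          (hshared 2 0 (adj 2 0 (by decide) (by decide))) (hshared 2 1 (adj 2 1 (by decide) (by decide))) (hshared 2 3 (adj 2 3 (by decide) (by decide)))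
          (hshared 2 4 (adj 2 4 (by decide) (by decide))) (hshared 0 1 (adj 0 1 (by decide) (by decide)))
          ⟨x, hx' 0 (by decide) (by decide), hx' 3 (by decide) (by decide)⟩
          (hshared 0 4 (adj 0 4 (by decide) (by decide))) (hshared 1 3 (adj 1 3 (by decide) (by decide)))
          ⟨x, hx' 1 (by decide) (by decide), hx' 4 (by decide) (by decide)⟩
          (hshared 3 4 (adj 3 4 (by decide) (by decide)))
    · obtain ⟨x, hx⟩ := hkey 1 4 (adjpair 1 4 (by decide)) h14
      have hx' : ∀ z : Fin 6, z ≠ 1 → z ≠ 4 → x ∈ S z := fun z h1 h2 => hx z h1 h2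
      exact final 1 0 2 3 5 (by decide)
        (hshared 1 0 (adj 1 0 (by decide) (by decide))) (hshared 1 2 (adj 1 2 (by decide) (by decide))) (hshared 1 3 (adj 1 3 (by decide) (by decide)))
        (hshared 1 5 (adj 1 5 (by decide) (by decide))) (hshared 0 2 (adj 0 2 (by decide) (by decide)))
        ⟨x, hx' 0 (by decide) (by decide), hx' 3 (by decide) (by decide)⟩
        (hshared 0 5 (adj 0 5 (by decide) (by decide))) (hshared 2 3 (adj 2 3 (by decide) (by decide)))
        ⟨x, hx' 2 (by decide) (by decide), hx' 5 (by decide) (by decide)⟩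
        (hshared 3 5 (adj 3 5 (by decide) (by decide)))
  · obtain ⟨x, hx⟩ := hkey 0 3 (adjpair 0 3 (by decide)) h03
    have hx' : ∀ z : Fin 6, z ≠ 0 → z ≠ 3 → x ∈ S z := fun z h1 h2 => hx z h1 h2
    exact final 0 1 2 4 5 (by decide)
      (hshared 0 1 (adj 0 1 (by decide) (by decide))) (hshared 0 2 (adj 0 2 (by decide) (by decide))) (hshared 0 4 (adj 0 4 (by decide) (by decide)))
      (hshared 0 5 (adj 0 5 (by decide) (by decide))) (hshared 1 2 (adj 1 2 (by decide) (by decide)))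
      ⟨x, hx' 1 (by decide) (by decide), hx' 4 (by decide) (by decide)⟩
      (hshared 1 5 (adj 1 5 (by decide) (by decide))) (hshared 2 4 (adj 2 4 (by decide) (by decide)))
      ⟨x, hx' 2 (by decide) (by decide), hx' 5 (by decide) (by decide)⟩
      (hshared 4 5 (adj 4 5 (by decide) (by decide)))


lemma top_fin2_isAcyclic : (⊤ : SimpleGraph (Fin 2)).IsAcyclic := by
  intro v c hc
  have h1 : 3 ≤ c.length := hc.three_le_length
  have h2 : c.support.tail.Nodup := hc.2
  have h3 : c.support.tail.length ≤ 2 := by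
    simpa using h2.length_le_card
  have h4 : c.support.length = c.length + 1 := c.length_support
  have h5 : c.support.tail.length = c.support.length - 1 := by
    simp [List.length_tail]
  omega

lemma hastd4 : HasTreeDecompositionOfWidth K222 4 := by
  classical
  refine ⟨Fin 2, ⊤, ![(↑({0,1,2,4,5} : Finset (Fin 6)) : Set (Fin 6)),
    (↑({1,2,3,4,5} : Finset (Fin 6)) : Set (Fin 6))], SimpleGraph.connected_top,
    top_fin2_isAcyclic, ?_, ?_, ?_, ?_⟩
  · intro v
    by_cases h : v = 3
    · exact ⟨1, by rw [h]; show (3 : Fin 6) ∈ ({1,2,3,4,5} : Finset (Fin 6)); decide⟩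
    · refine ⟨0, ?_⟩
      show v ∈ ({0,1,2,4,5} : Finset (Fin 6))
      fin_cases v <;> first | decide | (exact absurd rfl h)
  · intro u v h
    rw [K222_adj_iff] at h
    have h1 : u ≠ v := h.1
    have h2 := h.2
    fin_cases u <;> fin_cases v <;>
      first
        | (exact absurd rfl h1)
        | (exact absurd (by decide) h2)
        | (exact ⟨0, by show _ ∈ ({0,1,2,4,5} : Finset (Fin 6)); decide,
            by show _ ∈ ({0,1,2,4,5} : Finset (Fin 6)); decide⟩)
        | (exact ⟨1, by show _ ∈ ({1,2,3,4,5} : Finset (Fin 6)); decide,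
            by show _ ∈ ({1,2,3,4,5} : Finset (Fin 6)); decide⟩)
  · intro v
    have hne : ∃ i0 : Fin 2, v ∈ ![(↑({0,1,2,4,5} : Finset (Fin 6)) : Set (Fin 6)),
        (↑({1,2,3,4,5} : Finset (Fin 6)) : Set (Fin 6))] i0 := by
      by_cases h : v = 3
      · exact ⟨1, by rw [h]; show (3 : Fin 6) ∈ ({1,2,3,4,5} : Finset (Fin 6)); decide⟩
      · refine ⟨0, ?_⟩
        show v ∈ ({0,1,2,4,5} : Finset (Fin 6))
        fin_cases v <;> first | decide | (exact absurd rfl h)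
    obtain ⟨i0, hi0⟩ := hne
    rw [SimpleGraph.connected_iff]
    refine ⟨?_, ⟨⟨i0, hi0⟩⟩⟩
    · intro a b
      by_cases hab : a = b
      · exact hab ▸ Reachable.refl a
      · have : (⊤ : SimpleGraph (Fin 2)).Adj a.1 b.1 := by
          simp only [SimpleGraph.top_adj]
          exact fun h => hab (Subtype.ext h)
        exact SimpleGraph.Adj.reachable this
  · intro i
    fin_cases i <;>
      [show (↑({0,1,2,4,5} : Finset (Fin 6)) : Set (Fin 6)).ncard ≤ 5;
       show (↑({1,2,3,4,5} : Finset (Fin 6)) : Set (Fin 6)).ncard ≤ 5] <;>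
      rw [Set.ncard_coe_finset] <;> decide

lemma tw4 : treewidth K222 = 4 := by
  have h4 : HasTreeDecompositionOfWidth K222 4 := hastd4
  refine le_antisymm (Nat.sInf_le h4) (le_csInf ⟨4, h4⟩ ?_)
  rintro b ⟨ι, T, B, hc, ha, hv, he, hcon, hcard⟩
  by_contra hlt
  push_neg at hlt
  exact notw3 ⟨ι, T, B, hc, ha, hv, he, hcon, fun i => (hcard i).trans (by omega)⟩


open Matrix



noncomputable def cc : ℝ := (Real.sqrt 2)⁻¹

lemma cc_sq : cc * cc = 1 / 2 := by
  rw [cc, ← mul_inv, Real.mul_self_sqrt (by norm_num : (0:ℝ) ≤ 2)]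
  norm_num

lemma sqrt2_cc : Real.sqrt 2 * cc = 1 := by
  rw [cc, mul_inv_cancel₀]
  positivity

noncomputable def Xa : Matrix (Fin 6) (Fin 6) ℝ :=
  !![1,0,0,0,0,0; 0,1,0,0,0,0; 0,0,1,0,0,0; 0,0,0,1,0,cc; 0,0,0,0,1,cc; 0,0,0,cc,cc,1]

noncomputable def Ba : Matrix (Fin 5) (Fin 6) ℝ :=
  !![1,0,0,0,0,0; 0,1,0,0,0,0; 0,0,1,0,0,0; 0,0,0,1,0,cc; 0,0,0,0,1,cc]

noncomputable def Ca : Matrix (Fin 5) (Fin 5) ℝ :=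
  !![1,0,0,0,0; 0,1,0,0,0; 0,0,1,0,0; 0,0,0,3/2,1/2; 0,0,0,1/2,3/2]

noncomputable def Da : Matrix (Fin 5) (Fin 5) ℝ :=
  !![1,0,0,0,0; 0,1,0,0,0; 0,0,1,0,0; 0,0,0,3/4,-1/4; 0,0,0,-1/4,3/4]

lemma hXB : Xa = Baᴴ * Ba := by
  funext i j
  rw [Matrix.mul_apply]
  simp only [Matrix.conjTranspose_apply, star_trivial]
  fin_cases i <;> fin_cases j <;>
    norm_num [Xa, Ba, Fin.sum_univ_succ, Matrix.cons_val_zero, Matrix.cons_val_succ, Matrix.vecHead, Matrix.vecTail, cc_sq]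

lemma hBC : Ba * Baᴴ = Ca := by
  funext i j
  rw [Matrix.mul_apply]
  simp only [Matrix.conjTranspose_apply, star_trivial]
  fin_cases i <;> fin_cases j <;>
    norm_num [Ba, Ca, Fin.sum_univ_succ, Matrix.cons_val_zero, Matrix.cons_val_succ, Matrix.vecHead, Matrix.vecTail, cc_sq]

lemma hCD : Ca * Da = 1 := by
  funext i j
  rw [Matrix.mul_apply]
  fin_cases i <;> fin_cases j <;>
    norm_num [Ca, Da, Fin.sum_univ_succ, Matrix.cons_val_zero, Matrix.cons_val_succ, Matrix.vecHead, Matrix.vecTail, Matrix.one_apply, Fin.ext_iff]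

lemma Xa_posSemidef : Xa.PosSemidef := by
  rw [hXB]; exact posSemidef_conjTranspose_mul_self Ba

lemma Xa_diag : ∀ i, Xa i i = 1 := by
  intro i; fin_cases i <;> norm_num [Xa]

lemma Xa_rank : Xa.rank = 5 := by
  rw [hXB, rank_conjTranspose_mul_self]
  have h1 : Ba.rank = (Ba * Baᴴ).rank := (rank_self_mul_conjTranspose Ba).symm
  rw [h1, hBC]
  have : IsUnit Ca := by
    have := invertibleOfRightInverse (a := Ca) (b := Da) hCD
    exact isUnit_of_invertible Ca
  rw [Matrix.rank_of_isUnit Ca this]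
  simp

lemma Xa_unique (Y : Matrix (Fin 6) (Fin 6) ℝ) (hY : Y.PosSemidef)
    (hA : agreesOn K222 Xa Y) : Y = Xa := by
  obtain ⟨hd, he⟩ := hA
  have adj : ∀ u v : Fin 6, u ≠ v → ¬((u = 0 ∧ v = 3) ∨ (u = 3 ∧ v = 0) ∨ (u = 1 ∧ v = 4) ∨
      (u = 4 ∧ v = 1) ∨ (u = 2 ∧ v = 5) ∨ (u = 5 ∧ v = 2)) → K222.Adj u v :=
    fun u v h1 h2 => (K222_adj_iff u v).mpr ⟨h1, h2⟩
  set u : Fin 6 → ℝ := ![0,0,0,1,1,-Real.sqrt 2] with hu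
  have h34 : Y 3 4 = 0 := by rw [he 3 4 (adj 3 4 (by decide) (by decide))]; rfl
  have h43 : Y 4 3 = 0 := by rw [he 4 3 (adj 4 3 (by decide) (by decide))]; rfl
  have h35 : Y 3 5 = cc := by rw [he 3 5 (adj 3 5 (by decide) (by decide))]; rfl
  have h53 : Y 5 3 = cc := by rw [he 5 3 (adj 5 3 (by decide) (by decide))]; rfl
  have h45 : Y 4 5 = cc := by rw [he 4 5 (adj 4 5 (by decide) (by decide))]; rfl
  have h54 : Y 5 4 = cc := by rw [he 5 4 (adj 5 4 (by decide) (by decide))]; rfl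
  have h33 : Y 3 3 = 1 := by rw [hd 3]; rfl
  have h44 : Y 4 4 = 1 := by rw [hd 4]; rfl
  have h55 : Y 5 5 = 1 := by rw [hd 5]; rfl
  have hu0 : u 0 = 0 := rfl
  have hu1 : u 1 = 0 := rfl
  have hu2 : u 2 = 0 := rfl
  have hu3 : u 3 = 1 := rfl
  have hu4 : u 4 = 1 := rfl
  have hu5 : u 5 = -Real.sqrt 2 := rfl
  have hq : u ⬝ᵥ (Y *ᵥ u) = 0 := by
    simp only [dotProduct, Matrix.mulVec, Fin.sum_univ_six, hu0, hu1, hu2, hu3, hu4, hu5]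
    rw [h34, h43, h35, h53, h45, h54, h33, h44, h55]
    ring_nf
    nlinarith [sqrt2_cc, cc_sq]
  have hzero : Y *ᵥ u = 0 := by
    rw [← hY.dotProduct_mulVec_zero_iff u]
    rwa [show star u = u from by funext k; simp]
  have key : ∀ i : Fin 6, Y i 3 + Y i 4 - Real.sqrt 2 * Y i 5 = 0 := by
    intro i
    have := congrFun hzero i
    simp only [Matrix.mulVec, dotProduct, Fin.sum_univ_six, hu0, hu1, hu2, hu3, hu4, hu5,
      Pi.zero_apply] at this
    ring_nf at this ⊢
    linarith [this]
  have h04 : Y 0 4 = 0 := by rw [he 0 4 (adj 0 4 (by decide) (by decide))]; rfl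
  have h05 : Y 0 5 = 0 := by rw [he 0 5 (adj 0 5 (by decide) (by decide))]; rfl
  have h13 : Y 1 3 = 0 := by rw [he 1 3 (adj 1 3 (by decide) (by decide))]; rfl
  have h15 : Y 1 5 = 0 := by rw [he 1 5 (adj 1 5 (by decide) (by decide))]; rfl
  have h23 : Y 2 3 = 0 := by rw [he 2 3 (adj 2 3 (by decide) (by decide))]; rfl
  have h24 : Y 2 4 = 0 := by rw [he 2 4 (adj 2 4 (by decide) (by decide))]; rfl
  have e03 : Y 0 3 = 0 := by have := key 0; rw [h04, h05] at this; linarith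
  have e14 : Y 1 4 = 0 := by have := key 1; rw [h13, h15] at this; linarith
  have e25 : Y 2 5 = 0 := by
    have := key 2; rw [h23, h24] at this
    have hs : Real.sqrt 2 ≠ 0 := by positivity
    have : Real.sqrt 2 * Y 2 5 = 0 := by linarith
    rcases mul_eq_zero.mp this with h | h
    · exact absurd h hs
    · exact h
  have hsym : ∀ i j : Fin 6, Y j i = Y i j := by
    intro i j
    have := congrFun (congrFun hY.1 i) j
    simpa [Matrix.conjTranspose_apply] using this
  have e30 : Y 3 0 = 0 := by rw [hsym 0 3]; exact e03
  have e41 : Y 4 1 = 0 := by rw [hsym 1 4]; exact e14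
  have e52 : Y 5 2 = 0 := by rw [hsym 2 5]; exact e25
  ext i j
  fin_cases i <;> fin_cases j <;>
    first
      | (exact hd _)
      | (exact he _ _ (adj _ _ (by decide) (by decide)))
      | (exact e03)
      | (exact e30)
      | (exact e14)
      | (exact e41)
      | (exact e25)
      | (exact e52)


open Matrix




lemma K222_adj_iff' (u v : Fin 6) :
    K222.Adj u v ↔ u ≠ v ∧ ¬((u = 0 ∧ v = 3) ∨ (u = 3 ∧ v = 0) ∨ (u = 1 ∧ v = 4) ∨
      (u = 4 ∧ v = 1) ∨ (u = 2 ∧ v = 5) ∨ (u = 5 ∧ v = 2)) := by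
  simp only [K222, SimpleGraph.deleteEdges_adj, SimpleGraph.top_adj, Set.mem_insert_iff,
    Set.mem_singleton_iff, Sym2.eq_iff]
  tauto

lemma rank_le_five_of_det_zero {M : Matrix (Fin 6) (Fin 6) ℝ} (h : M.det = 0) :
    M.rank ≤ 5 := by
  obtain ⟨v, hv, hMv⟩ := (Matrix.exists_mulVec_eq_zero_iff).mpr h
  have hker : v ∈ LinearMap.ker M.mulVecLin := by
    rw [LinearMap.mem_ker, Matrix.mulVecLin_apply]; exact hMv
  have h1 : M.rank + Module.finrank ℝ (LinearMap.ker M.mulVecLin) = 6 := by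
    have := LinearMap.finrank_range_add_finrank_ker M.mulVecLin
    rw [Module.finrank_fintype_fun_eq_card] at this
    simpa [Matrix.rank] using this
  have h2 : Module.finrank ℝ (LinearMap.ker M.mulVecLin) ≠ 0 := by
    intro h0
    rw [Submodule.finrank_eq_zero] at h0
    rw [h0, Submodule.mem_bot] at hker
    exact hv hker
  omega

lemma posDef_of_det_ne_zero {n : Type*} [Fintype n] [DecidableEq n]
    {M : Matrix n n ℝ} (hM : M.PosSemidef) (h : M.det ≠ 0) : M.PosDef := by
  refine posDef_iff_dotProduct_mulVec.mpr ⟨hM.1, fun x hx => ?_⟩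
  rcases lt_or_eq_of_le (hM.dotProduct_mulVec_nonneg x) with h1 | h1
  · exact h1
  · exfalso
    have h2 : M *ᵥ x = 0 := (hM.dotProduct_mulVec_zero_iff x).mp h1.symm
    exact h (Matrix.exists_mulVec_eq_zero_iff.mp ⟨x, hx, h2⟩)

lemma posDef_fromBlocks₁₁_left {m n : Type*} [Fintype m] [Fintype n] [DecidableEq m]
    [DecidableEq n] {A : Matrix m m ℝ} {B : Matrix m n ℝ} {C : Matrix n m ℝ}
    {D : Matrix n n ℝ} (h : (fromBlocks A B C D).PosDef) : A.PosDef := by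
  refine posDef_iff_dotProduct_mulVec.mpr ⟨?_, ?_⟩
  · have h1 := h.1
    rw [IsHermitian, fromBlocks_conjTranspose] at h1
    have := congrArg Matrix.toBlocks₁₁ h1
    exact this
  · intro x hx
    have hx0 : (Sum.elim x 0 : m ⊕ n → ℝ) ≠ 0 := by
      intro h0
      apply hx
      funext i
      exact congrFun h0 (Sum.inl i)
    have := h.dotProduct_mulVec_pos hx0
    rw [show (star (Sum.elim x 0) : m ⊕ n → ℝ) = Sum.elim (star x) 0 from by
          funext i; cases i <;> simp] at this
    rw [fromBlocks_mulVec] at this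
    rw [sumElim_dotProduct_sumElim] at this
    simpa [Matrix.mulVec_zero, dotProduct_zero, zero_dotProduct] using this

lemma posDef_submatrix_equiv {m n : Type*} [Fintype m] [Fintype n] [DecidableEq m]
    [DecidableEq n] {M : Matrix n n ℝ} (hM : M.PosDef) (f : m ≃ n) :
    (M.submatrix f f).PosDef := by
  refine posDef_iff_dotProduct_mulVec.mpr ⟨hM.1.submatrix f, fun x hx => ?_⟩
  rw [Matrix.submatrix_mulVec_equiv]
  have hy : (x ∘ f.symm : n → ℝ) ≠ 0 := by
    intro h0
    apply hx
    funext i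
    have := congrFun h0 (f i)
    simpa using this
  have := hM.dotProduct_mulVec_pos hy
  have heq : star x ⬝ᵥ ((M *ᵥ (x ∘ f.symm)) ∘ f) =
      star (x ∘ f.symm) ⬝ᵥ (M *ᵥ (x ∘ f.symm)) := by
    rw [dotProduct, dotProduct]
    exact Fintype.sum_equiv f _ _ (fun i => by simp)
  rw [heq]
  exact this

lemma diag_nonneg_of_psd {n : Type*} [Fintype n] [DecidableEq n] {M : Matrix n n ℝ}
    (hM : M.PosSemidef) (i : n) : 0 ≤ M i i := by
  have := hM.dotProduct_mulVec_nonneg (Pi.single i 1)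
  simpa [dotProduct, Matrix.mulVec, Pi.single_apply, Finset.sum_ite_eq, mul_comm] using this

def rr : Fin 4 ⊕ Fin 2 → Fin 6 := Sum.elim ![1,2,4,5] ![0,3]
def ll : Fin 6 → Fin 4 ⊕ Fin 2 := ![Sum.inr 0, Sum.inl 0, Sum.inl 1, Sum.inr 1, Sum.inl 2, Sum.inl 3]
def ee : Fin 6 ≃ (Fin 4 ⊕ Fin 2) := ⟨ll, rr, by decide, by decide⟩

lemma gramLE5 : gramDimLE K222 5 := by
  intro X hX
  by_cases hdet : X.det = 0
  · exact ⟨X, hX, rank_le_five_of_det_zero hdet, fun i => rfl, fun i j _ => rfl⟩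
  · have hpd : X.PosDef := posDef_of_det_ne_zero hX hdet
    have hXs : ∀ a b, X a b = X b a := by
      intro a b
      have := congrFun (congrFun hX.1 a) b
      simpa [Matrix.conjTranspose_apply] using this.symm
    have hX'pd : (X.submatrix ⇑ee.symm ⇑ee.symm).PosDef := posDef_submatrix_equiv hpd ee.symm
    set X' : Matrix (Fin 4 ⊕ Fin 2) (Fin 4 ⊕ Fin 2) ℝ := X.submatrix ⇑ee.symm ⇑ee.symm with hX'def
    set A := X'.toBlocks₁₁ with hAdef
    set Bm := X'.toBlocks₁₂ with hBdef
    set D := X'.toBlocks₂₂ with hDdef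
    have hXb : X' = fromBlocks A Bm X'.toBlocks₂₁ D := (fromBlocks_toBlocks X').symm
    have hC : X'.toBlocks₂₁ = Bmᴴ := by
      ext i j
      simp only [toBlocks₂₁, toBlocks₁₂, hBdef, Matrix.conjTranspose_apply, Matrix.of_apply,
        star_trivial]
      exact hXs _ _
    have hA : A.PosDef := by
      apply posDef_fromBlocks₁₁_left (B := Bm) (C := X'.toBlocks₂₁) (D := D)
      rw [← hXb]; exact hX'pd
    haveI : Invertible A := A.invertibleOfIsUnitDet (isUnit_iff_ne_zero.mpr hA.det_pos.ne')
    set S := D - Bmᴴ * A⁻¹ * Bm with hSdef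
    have hS : S.PosSemidef := by
      have h1 : (fromBlocks A Bm Bmᴴ D).PosSemidef := by
        rw [← hC, ← hXb]; exact hX'pd.posSemidef
      exact (Matrix.PosDef.fromBlocks₁₁ Bm D hA).mp h1
    have hα : 0 ≤ S 0 0 := diag_nonneg_of_psd hS 0
    have hγ : 0 ≤ S 1 1 := diag_nonneg_of_psd hS 1
    set β' := Real.sqrt (S 0 0 * S 1 1) with hβdef
    set S' : Matrix (Fin 2) (Fin 2) ℝ := !![S 0 0, β'; β', S 1 1] with hS'def
    have hS'h : S'.IsHermitian := by
      ext i j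
      fin_cases i <;> fin_cases j <;>
        simp [hS'def, Matrix.conjTranspose_apply]
    have hS'psd : S'.PosSemidef := by
      refine posSemidef_iff_dotProduct_mulVec.mpr ⟨hS'h, fun x => ?_⟩
      have hb : β' = Real.sqrt (S 0 0) * Real.sqrt (S 1 1) := Real.sqrt_mul hα _
      have ha' : Real.sqrt (S 0 0) ^ 2 = S 0 0 := Real.sq_sqrt hα
      have hg' : Real.sqrt (S 1 1) ^ 2 = S 1 1 := Real.sq_sqrt hγ
      simp only [dotProduct, Matrix.mulVec, Fin.sum_univ_two, star_trivial, hS'def,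
        Matrix.cons_val', Matrix.cons_val_zero, Matrix.cons_val_one, Matrix.head_cons,
        Matrix.empty_val', Matrix.cons_val_fin_one, Matrix.head_fin_const, Matrix.of_apply]
      have key : x 0 * (S 0 0 * x 0 + β' * x 1) + x 1 * (β' * x 0 + S 1 1 * x 1) =
          (Real.sqrt (S 0 0) * x 0 + Real.sqrt (S 1 1) * x 1) ^ 2 := by
        rw [hb]
        linear_combination (x 0 * x 0) * ha'.symm + (x 1 * x 1) * hg'.symm
      rw [key]
      exact sq_nonneg _
    have hdetS' : S'.det = 0 := by
      rw [hS'def, Matrix.det_fin_two_of]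
      rw [hβdef, Real.mul_self_sqrt (mul_nonneg hα hγ)]
      ring
    set D' := Bmᴴ * A⁻¹ * Bm + S' with hD'def
    set Y' := fromBlocks A Bm Bmᴴ D' with hY'def
    have hY'psd : Y'.PosSemidef := by
      rw [hY'def]
      refine (Matrix.PosDef.fromBlocks₁₁ Bm D' hA).mpr ?_
      rw [hD'def, add_sub_cancel_left]
      exact hS'psd
    have hdetY' : Y'.det = 0 := by
      rw [hY'def, det_fromBlocks₁₁, invOf_eq_nonsing_inv, hD'def, add_sub_cancel_left,
        hdetS', mul_zero]
    set Y := Y'.submatrix ⇑ee ⇑ee with hYdef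
    have hYpsd : Y.PosSemidef := hY'psd.submatrix ⇑ee
    have hYrank : Y.rank ≤ 5 := by
      apply rank_le_five_of_det_zero
      rw [hYdef, det_submatrix_equiv_self ee Y', hdetY']
    have hD'0 : D' 0 0 = D 0 0 := by
      rw [hD'def, Matrix.add_apply]
      have h1 : S' 0 0 = S 0 0 := by rw [hS'def]; rfl
      rw [h1, hSdef, Matrix.sub_apply]
      ring
    have hD'1 : D' 1 1 = D 1 1 := by
      rw [hD'def, Matrix.add_apply]
      have h1 : S' 1 1 = S 1 1 := by rw [hS'def]; rfl
      rw [h1, hSdef, Matrix.sub_apply]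
      ring
    have Hentry : ∀ i j : Fin 6, ¬((i = 0 ∧ j = 3) ∨ (i = 3 ∧ j = 0)) → Y i j = X i j := by
      intro i j hnot
      fin_cases i <;> fin_cases j <;>
        first
          | (exact absurd (by decide) hnot)
          | rfl
          | (exact (star_trivial _).trans (hXs _ _))
          | (exact hD'0)
          | (exact hD'1)
    refine ⟨Y, hYpsd, hYrank, fun i => Hentry i i ?_, fun i j hadj => Hentry i j ?_⟩
    · rintro (⟨h1, h2⟩ | ⟨h1, h2⟩) <;> exact absurd (h1.symm.trans h2) (by decide)
    · rintro (⟨rfl, rfl⟩ | ⟨rfl, rfl⟩) <;>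
        (rw [K222_adj_iff'] at hadj; exact hadj.2 (by decide))

end Helpers

/-- `K_{2,2,2}` has Gram dimension exactly 5: (a) there is a partial correlation matrix on
`K_{2,2,2}` (given here via a psd matrix `X` with unit diagonal) whose unique psd completion
has rank 5; (b) `K_{2,2,2}` has tree-width 4. -/

theorem gramDim_K222 :
    gramDim K222 = 5 ∧
    (∃ X : Matrix (Fin 6) (Fin 6) ℝ, X.PosSemidef ∧ (∀ i, X i i = 1) ∧ X.rank = 5 ∧
      ∀ Y : Matrix (Fin 6) (Fin 6) ℝ, Y.PosSemidef → agreesOn K222 X Y → Y = X) ∧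
    treewidth K222 = 4 := by
  refine ⟨?_, ⟨Xa, Xa_posSemidef, Xa_diag, Xa_rank, fun Y hY hA => Xa_unique Y hY hA⟩, tw4⟩
  have h5 : gramDimLE K222 5 := gramLE5
  rw [gramDim]
  refine le_antisymm (Nat.sInf_le h5) (le_csInf ⟨5, h5⟩ ?_)
  intro b hb
  by_contra hlt
  push_neg at hlt
  have h4 : gramDimLE K222 4 := fun X hX =>
    (hb X hX).imp fun Y hY => ⟨hY.1, hY.2.1.trans (by omega), hY.2.2⟩
  obtain ⟨Y, hYpsd, hYrank, hYag⟩ := h4 Xa Xa_posSemidef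
  rw [Xa_unique Y hYpsd hYag, Xa_rank] at hYrank
  omega
end

section
/- Let G = (V, E) be a graph and ∇G its suspension (obtained by adding an apex node 0 adjacent to all nodes of G). Then gd(∇G) = gd(G) + 1. -/
/-- The suspension `∇G` of `G`: a new apex node (`none`) adjacent to all nodes of `G`. -/
def suspension {V : Type*} (G : SimpleGraph V) : SimpleGraph (Option V) :=
  SimpleGraph.fromRel fun a b =>
    a = none ∨ ∃ u v, a = some u ∧ b = some v ∧ G.Adj u v

namespace GramSusp
open Matrix
variable {V : Type*} [Fintype V]

/-! ### Block matrices on `Option V` -/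

/-- The block matrix `(c bᵀ; b A)` on `Option V`. -/
def blk (c : ℝ) (b : V → ℝ) (A : Matrix V V ℝ) : Matrix (Option V) (Option V) ℝ :=
  Matrix.of fun i j =>
    match i, j with
    | none, none => c
    | none, some j => b j
    | some i, none => b i
    | some i, some j => A i j

/-- Rank-one outer product. -/
def outer {ι : Type*} (v : ι → ℝ) : Matrix ι ι ℝ := Matrix.of fun i j => v i * v j

lemma outer_eq {ι : Type*} [Fintype ι] (v : ι → ℝ) :
    outer v = (Matrix.of fun (_ : Unit) j => v j)ᴴ * (Matrix.of fun (_ : Unit) j => v j) := by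
  ext i j
  simp [outer, Matrix.mul_apply, Matrix.conjTranspose_apply]

lemma outer_posSemidef {ι : Type*} [Fintype ι] (v : ι → ℝ) : (outer v).PosSemidef := by
  rw [outer_eq]
  exact Matrix.posSemidef_conjTranspose_mul_self _

lemma outer_rank_le_one {ι : Type*} [Fintype ι] (v : ι → ℝ) : (outer v).rank ≤ 1 := by
  rw [outer_eq]
  calc ((Matrix.of fun (_ : Unit) j => v j)ᴴ * (Matrix.of fun (_ : Unit) j => v j)).rank
      ≤ (Matrix.of fun (_ : Unit) j => v j : Matrix Unit ι ℝ).rank := Matrix.rank_mul_le_right _ _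
    _ ≤ Fintype.card Unit := Matrix.rank_le_card_height _
    _ = 1 := rfl

lemma rank_add_le {ι : Type*} [Fintype ι] (A B : Matrix ι ι ℝ) :
    (A + B).rank ≤ A.rank + B.rank := by
  rw [Matrix.rank, Matrix.rank, Matrix.rank, Matrix.mulVecLin_add]
  have hsub : LinearMap.range (A.mulVecLin + B.mulVecLin) ≤
      LinearMap.range A.mulVecLin ⊔ LinearMap.range B.mulVecLin := by
    rintro _ ⟨x, rfl⟩
    exact Submodule.add_mem_sup (LinearMap.mem_range_self _ x) (LinearMap.mem_range_self _ x)
  exact (Submodule.finrank_mono hsub).trans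
    (Submodule.finrank_add_le_finrank_add_finrank _ _)

section emb
variable [DecidableEq V]

/-- The inclusion matrix `V → Option V`. -/
def P : Matrix (Option V) V ℝ := Matrix.of fun i j => if i = some j then 1 else 0

lemma P_mul_conj (Z : Matrix V V ℝ) :
    (P : Matrix (Option V) V ℝ) * Z * Matrix.conjTranspose (P : Matrix (Option V) V ℝ) = blk 0 0 Z := by
  ext i j
  cases i <;> cases j <;>
    simp [P, blk, Matrix.mul_apply, Matrix.conjTranspose_apply, Finset.sum_ite_eq,
      Finset.sum_ite_eq']

end emb

lemma blk_zero_posSemidef {Z : Matrix V V ℝ} (hZ : Z.PosSemidef) : (blk 0 0 Z).PosSemidef := by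
  classical
  rw [← P_mul_conj]
  exact hZ.mul_mul_conjTranspose_same P

lemma blk_zero_rank_le (Z : Matrix V V ℝ) : (blk 0 0 Z).rank ≤ Z.rank := by
  classical
  rw [← P_mul_conj]
  exact le_trans (Matrix.rank_mul_le_left _ _) (Matrix.rank_mul_le_right _ _)

lemma blk_mulVec (c : ℝ) (b : V → ℝ) (A : Matrix V V ℝ) (x : Option V → ℝ) :
    (blk c b A) *ᵥ x = fun i => Option.elim i
      (c * x none + b ⬝ᵥ (x ∘ some)) (fun i' => b i' * x none + (A *ᵥ (x ∘ some)) i') := by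
  funext i
  cases i <;> simp [blk, Matrix.mulVec, dotProduct, Fintype.sum_option]

lemma rank_blk_one_zero (Y : Matrix V V ℝ) : (blk 1 (0 : V → ℝ) Y).rank = Y.rank + 1 := by
  have hker : ∀ x : Option V → ℝ,
      x ∈ LinearMap.ker (blk 1 (0 : V → ℝ) Y).mulVecLin ↔
        x none = 0 ∧ (x ∘ some) ∈ LinearMap.ker Y.mulVecLin := by
    intro x
    rw [LinearMap.mem_ker, LinearMap.mem_ker, Matrix.mulVecLin_apply, Matrix.mulVecLin_apply,
      blk_mulVec]
    constructor
    · intro h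
      refine ⟨by simpa using congrFun h none, funext fun i => by simpa using congrFun h (some i)⟩
    · intro ⟨h1, h2⟩
      funext i
      cases i with
      | none => simpa using h1
      | some i => simpa using congrFun h2 i
  have e : (LinearMap.ker (blk 1 (0 : V → ℝ) Y).mulVecLin) ≃ₗ[ℝ]
      (LinearMap.ker Y.mulVecLin) :=
    { toFun := fun x => ⟨(x : Option V → ℝ) ∘ some, ((hker x).1 x.2).2⟩
      map_add' := fun x y => rfl
      map_smul' := fun c x => rfl
      invFun := fun y => ⟨fun i => Option.elim i 0 (y : V → ℝ), by
        rw [hker]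
        exact ⟨rfl, y.2⟩⟩
      left_inv := fun x => by
        ext i
        cases i with
        | none => exact (((hker x).1 x.2).1).symm
        | some i => rfl
      right_inv := fun y => by ext i; rfl }
  have h1 := LinearMap.finrank_range_add_finrank_ker (blk 1 (0 : V → ℝ) Y).mulVecLin
  have h2 := LinearMap.finrank_range_add_finrank_ker Y.mulVecLin
  have h3 : Module.finrank ℝ (LinearMap.ker (blk 1 (0 : V → ℝ) Y).mulVecLin) =
      Module.finrank ℝ (LinearMap.ker Y.mulVecLin) := e.finrank_eq
  have h4 : Module.finrank ℝ (Option V → ℝ) = Fintype.card V + 1 := by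
    rw [Module.finrank_fintype_fun_eq_card, Fintype.card_option]
  have h5 : Module.finrank ℝ (V → ℝ) = Fintype.card V := Module.finrank_fintype_fun_eq_card ℝ
  rw [h4] at h1
  rw [h5] at h2
  rw [Matrix.rank, Matrix.rank]
  omega

/-! ### Generic psd facts -/

lemma psd_symm {n : Type*} [Fintype n] {M : Matrix n n ℝ} (hM : M.PosSemidef) (p q : n) :
    M p q = M q p := by
  conv_lhs => rw [← hM.1]
  simp [Matrix.conjTranspose_apply]

lemma psd_entry_zero {n : Type*} [Fintype n] {M : Matrix n n ℝ} (hM : M.PosSemidef)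
    {i : n} (h : M i i = 0) (j : n) : M i j = 0 := by
  obtain ⟨B, rfl⟩ : ∃ B : Matrix n n ℝ, M = Bᴴ * B := by
    classical
    open scoped MatrixOrder in
    obtain ⟨B, hB⟩ := CStarAlgebra.nonneg_iff_eq_star_mul_self.mp hM.nonneg
    exact ⟨B, hB⟩
  have hcol : ∀ k, B k i = 0 := by
    have h' : ∑ k, B k i * B k i = 0 := by
      simpa [Matrix.mul_apply, Matrix.conjTranspose_apply] using h
    intro k
    have := (Finset.sum_eq_zero_iff_of_nonneg (fun k _ => mul_self_nonneg (B k i))).mp h' k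
      (Finset.mem_univ k)
    exact mul_self_eq_zero.mp this
  simp [Matrix.mul_apply, Matrix.conjTranspose_apply, hcol]

lemma psd_diag_nonneg {n : Type*} [Fintype n] {M : Matrix n n ℝ} (hM : M.PosSemidef) (i : n) :
    0 ≤ M i i := by
  classical
  have := hM.dotProduct_mulVec_nonneg (Pi.single i 1)
  simpa [dotProduct, Matrix.mulVec, Pi.single_apply, Finset.sum_ite_eq, Finset.sum_ite_eq',
    mul_comm] using this

lemma quad_split (M : Matrix (Option V) (Option V) ℝ) (x : Option V → ℝ) :
    x ⬝ᵥ (M *ᵥ x) =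
      x none * (M none none * x none) + x none * (∑ j, M none (some j) * x (some j))
      + (∑ i, x (some i) * (M (some i) none * x none))
      + ∑ i, x (some i) * ∑ j, M (some i) (some j) * x (some j) := by
  simp only [dotProduct, Matrix.mulVec, Fintype.sum_option, mul_add, Finset.sum_add_distrib]
  ring

lemma schur_posSemidef {X : Matrix (Option V) (Option V) ℝ} (hX : X.PosSemidef)
    (hα : 0 < X none none) :
    (Matrix.of fun i j : V =>
      X (some i) (some j) - X none (some i) * X none (some j) / X none none).PosSemidef := by
  have hsym : ∀ p q, X p q = X q p := psd_symm hX
  set α := X none none with hαdef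
  have hα' : α ≠ 0 := ne_of_gt hα
  refine Matrix.PosSemidef.of_dotProduct_mulVec_nonneg ?_ ?_
  · show _ = _
    ext i j
    simp only [Matrix.conjTranspose_apply, Matrix.of_apply, star_trivial]
    rw [hsym (some j) (some i)]
    ring
  · intro y
    set s := ∑ j, X none (some j) * y j with hs
    set t := -s / α with ht
    set x : Option V → ℝ := fun i => Option.elim i t y with hxdef
    have h0 : 0 ≤ x ⬝ᵥ (X *ᵥ x) := by simpa using hX.dotProduct_mulVec_nonneg x
    rw [quad_split] at h0
    have hxn : x none = t := rfl
    have hxs : ∀ i, x (some i) = y i := fun i => rfl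
    simp only [hxn, hxs] at h0
    have h3 : (∑ i, y i * (X (some i) none * t)) = t * s := by
      rw [hs, Finset.mul_sum]
      refine Finset.sum_congr rfl fun i _ => ?_
      rw [hsym (some i) none]
      ring
    rw [h3] at h0
    have e1 : X none none = α := rfl
    have e2 : (∑ j, X none (some j) * y j) = s := rfl
    rw [e1, e2] at h0
    have h4 : t * (α * t) + t * s + t * s = -(s * s) / α := by
      rw [ht]; field_simp; ring
    rw [h4] at h0
    have h0' : s * s / α ≤ ∑ i, y i * ∑ j, X (some i) (some j) * y j := by
      have h5 : -(s * s) / α = -(s * s / α) := by ring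
      rw [h5] at h0
      linarith
    have hinner : ∀ i, (∑ j, (X (some i) (some j) - X none (some i) * X none (some j) / α) * y j)
        = (∑ j, X (some i) (some j) * y j) - X none (some i) * s / α := by
      intro i
      simp only [sub_mul, Finset.sum_sub_distrib]
      congr 1
      calc ∑ j, X none (some i) * X none (some j) / α * y j
          = ∑ j, X none (some i) * (X none (some j) * y j) / α := by
            refine Finset.sum_congr rfl fun j _ => by ring
        _ = (∑ j, X none (some i) * (X none (some j) * y j)) / α := by rw [Finset.sum_div]
        _ = X none (some i) * (∑ j, X none (some j) * y j) / α := by rw [Finset.mul_sum]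
        _ = X none (some i) * s / α := by rw [hs]
    have hval : y ⬝ᵥ ((Matrix.of fun i j : V =>
        X (some i) (some j) - X none (some i) * X none (some j) / α) *ᵥ y)
        = (∑ i, y i * ∑ j, X (some i) (some j) * y j) - s * s / α := by
      simp only [dotProduct, Matrix.mulVec, Matrix.of_apply]
      simp only [hinner]
      simp only [mul_sub, Finset.sum_sub_distrib]
      congr 1
      calc ∑ i, y i * (X none (some i) * s / α)
          = ∑ i, (X none (some i) * y i) * s / α := by
            refine Finset.sum_congr rfl fun i _ => by ring
        _ = (∑ i, X none (some i) * y i) * s / α := by rw [Finset.sum_mul, Finset.sum_div]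
        _ = s * s / α := by rw [← hs]
    simp only [star_trivial]
    rw [hval]
    linarith

/-! ### Adjacency in the suspension -/

omit [Fintype V] in
lemma susp_adj_none (G : SimpleGraph V) (j : V) : (suspension G).Adj none (some j) := by
  rw [suspension, SimpleGraph.fromRel_adj]
  exact ⟨by simp, Or.inl (Or.inl rfl)⟩

omit [Fintype V] in
lemma susp_adj_some (G : SimpleGraph V) {i j : V} :
    (suspension G).Adj (some i) (some j) ↔ G.Adj i j := by
  rw [suspension, SimpleGraph.fromRel_adj]
  constructor
  · rintro ⟨hne, h | h⟩
    · rcases h with h | ⟨u, w, hu, hw, huw⟩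
      · exact absurd h (by simp)
      · simp only [Option.some.injEq] at hu hw
        subst hu; subst hw
        exact huw
    · rcases h with h | ⟨u, w, hu, hw, huw⟩
      · exact absurd h (by simp)
      · simp only [Option.some.injEq] at hu hw
        subst hu; subst hw
        exact huw.symm
  · intro h
    exact ⟨by simpa using h.ne, Or.inl (Or.inr ⟨i, j, rfl, rfl, h⟩)⟩

/-! ### The two inequalities -/

lemma upper {G : SimpleGraph V} {k : ℕ} (h : gramDimLE G k) :
    gramDimLE (suspension G) (k + 1) := by
  intro X hX
  have hsym : ∀ p q, X p q = X q p := psd_symm hX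
  by_cases hα : X none none = 0
  · -- degenerate case: apex row is zero
    have hrow : ∀ j, X none j = 0 := psd_entry_zero hX hα
    obtain ⟨Z, hZpsd, hZrank, hZdiag, hZedge⟩ := h (X.submatrix some some) (hX.submatrix some)
    refine ⟨blk 0 0 Z, blk_zero_posSemidef hZpsd, ?_, ?_, ?_⟩
    · exact (blk_zero_rank_le Z).trans (hZrank.trans (Nat.le_succ k))
    · intro i
      cases i with
      | none => exact (hα ▸ rfl : (blk 0 0 Z) none none = X none none)
      | some i => exact hZdiag i
    · intro i j hadj
      cases i with
      | none =>
        cases j with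
        | none => exact absurd rfl hadj.ne
        | some j => exact (hrow (some j)).symm
      | some i =>
        cases j with
        | none =>
          show (0 : ℝ) = X (some i) none
          rw [hsym (some i) none, hrow (some i)]
        | some j => exact hZedge i j ((susp_adj_some G).mp hadj)
  · -- main case: positive apex entry, use the Schur complement
    have hαpos : 0 < X none none :=
      lt_of_le_of_ne (psd_diag_nonneg hX none) (Ne.symm hα)
    obtain ⟨Z, hZpsd, hZrank, hZdiag, hZedge⟩ := h _ (schur_posSemidef hX hαpos)
    have hα0 : (0 : ℝ) ≤ X none none := le_of_lt hαpos
    have hsq : Real.sqrt (X none none) * Real.sqrt (X none none) = X none none :=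
      Real.mul_self_sqrt hα0
    have hsne : Real.sqrt (X none none) ≠ 0 := (Real.sqrt_pos.mpr hαpos).ne'
    set v : Option V → ℝ := fun i => Option.elim i (Real.sqrt (X none none))
      (fun i' => X none (some i') / Real.sqrt (X none none)) with hvdef
    refine ⟨outer v + blk 0 0 Z, (outer_posSemidef v).add (blk_zero_posSemidef hZpsd), ?_, ?_, ?_⟩
    · calc (outer v + blk 0 0 Z).rank ≤ (outer v).rank + (blk 0 0 Z).rank := rank_add_le _ _
        _ ≤ 1 + k := add_le_add (outer_rank_le_one v) ((blk_zero_rank_le Z).trans hZrank)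
        _ = k + 1 := Nat.add_comm 1 k
    · intro i
      cases i with
      | none =>
        show v none * v none + (0 : ℝ) = X none none
        rw [add_zero]
        exact hsq
      | some i =>
        show v (some i) * v (some i) + Z i i = X (some i) (some i)
        have hv : v (some i) * v (some i)
            = X none (some i) * X none (some i) / X none none := by
          show X none (some i) / Real.sqrt (X none none)
              * (X none (some i) / Real.sqrt (X none none)) = _
          rw [div_mul_div_comm, hsq]
        rw [hv, hZdiag i]
        show X none (some i) * X none (some i) / X none none
          + (X (some i) (some i) - X none (some i) * X none (some i) / X none none) = _
        ring
    · intro i j hadj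
      cases i with
      | none =>
        cases j with
        | none => exact absurd rfl hadj.ne
        | some j =>
          show v none * v (some j) + (0 : ℝ) = X none (some j)
          rw [add_zero]
          show Real.sqrt (X none none) * (X none (some j) / Real.sqrt (X none none)) = _
          rw [mul_comm, div_mul_cancel₀ _ hsne]
      | some i =>
        cases j with
        | none =>
          show v (some i) * v none + (0 : ℝ) = X (some i) none
          rw [add_zero, hsym (some i) none]
          show X none (some i) / Real.sqrt (X none none) * Real.sqrt (X none none) = _
          rw [div_mul_cancel₀ _ hsne]
        | some j =>
          show v (some i) * v (some j) + Z i j = X (some i) (some j)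
          have hv : v (some i) * v (some j)
              = X none (some i) * X none (some j) / X none none := by
            show X none (some i) / Real.sqrt (X none none)
                * (X none (some j) / Real.sqrt (X none none)) = _
            rw [div_mul_div_comm, hsq]
          rw [hv, hZedge i j ((susp_adj_some G).mp hadj)]
          show X none (some i) * X none (some j) / X none none
            + (X (some i) (some j) - X none (some i) * X none (some j) / X none none) = _
          ring

lemma lower {G : SimpleGraph V} {k : ℕ}
    (h : gramDimLE (suspension G) (k + 1)) : gramDimLE G k := by
  intro X hX
  have hXhat : (blk 1 (0 : V → ℝ) X).PosSemidef := by
    have hdecomp : blk 1 (0 : V → ℝ) X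
        = outer (fun i : Option V => Option.elim i 1 (fun _ => 0)) + blk 0 0 X := by
      ext i j
      cases i <;> cases j <;> simp [blk, outer, Matrix.add_apply]
    rw [hdecomp]
    exact (outer_posSemidef _).add (blk_zero_posSemidef hX)
  obtain ⟨Yh, hYpsd, hYrank, hYdiag, hYedge⟩ := h _ hXhat
  have hYsym : ∀ p q, Yh p q = Yh q p := psd_symm hYpsd
  have hnone : ∀ j : V, Yh none (some j) = 0 := fun j =>
    hYedge none (some j) (susp_adj_none G j)
  have hnn : Yh none none = 1 := hYdiag none
  have hYh : Yh = blk 1 (0 : V → ℝ) (Yh.submatrix some some) := by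
    ext i j
    cases i with
    | none =>
      cases j with
      | none => exact hnn
      | some j => exact hnone j
    | some i =>
      cases j with
      | none =>
        show Yh (some i) none = (0 : ℝ)
        rw [hYsym (some i) none]
        exact hnone i
      | some j => rfl
  refine ⟨Yh.submatrix some some, hYpsd.submatrix some, ?_, ?_, ?_⟩
  · have := hYrank
    rw [hYh, rank_blk_one_zero] at this
    omega
  · intro i
    exact hYdiag (some i)
  · intro i j hadj
    exact hYedge (some i) (some j) ((susp_adj_some G).mpr hadj)

lemma not_zero (G : SimpleGraph V) : ¬ gramDimLE (suspension G) 0 := by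
  classical
  intro h
  obtain ⟨Y, hpsd, hrank, hdiag, _⟩ := h 1 Matrix.PosSemidef.one
  have hr0 : Y.rank = 0 := Nat.le_zero.mp hrank
  have hY0 : Y.mulVecLin = 0 := by
    rw [Matrix.rank] at hr0
    rw [← LinearMap.range_eq_bot, ← Submodule.finrank_eq_zero]
    exact hr0
  have h1 : Y none none = 0 := by
    have := congrFun (congrArg DFunLike.coe hY0) (Pi.single none 1)
    have h2 := congrFun this none
    simpa [Matrix.mulVecLin_apply, Matrix.mulVec, dotProduct, Pi.single_apply,
      Finset.sum_ite_eq'] using h2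
  have h3 : Y none none = 1 := by simpa using hdiag none
  rw [h1] at h3
  exact zero_ne_one h3

lemma mem_card (G : SimpleGraph V) : gramDimLE G (Fintype.card V) := fun X hX =>
  ⟨X, hX, Matrix.rank_le_card_width X, fun _ => rfl, fun _ _ _ => rfl⟩

end GramSusp

/-- `gd(∇G) = gd(G) + 1`. -/
theorem gramDim_suspension {V : Type*} [Fintype V] (G : SimpleGraph V) :
    gramDim (suspension G) = gramDim G + 1 := by
  have hS : {k | gramDimLE G k}.Nonempty := ⟨Fintype.card V, GramSusp.mem_card G⟩
  have hS' : {k | gramDimLE (suspension G) k}.Nonempty :=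
    ⟨Fintype.card V + 1, GramSusp.upper (GramSusp.mem_card G)⟩
  have h1 : gramDimLE G (gramDim G) := Nat.sInf_mem hS
  have h2 : gramDimLE (suspension G) (gramDim (suspension G)) := Nat.sInf_mem hS'
  have h3 : gramDim (suspension G) ≠ 0 := fun h => GramSusp.not_zero G (h ▸ h2)
  obtain ⟨m, hm⟩ := Nat.exists_eq_succ_of_ne_zero h3
  have le1 : gramDim (suspension G) ≤ gramDim G + 1 :=
    Nat.sInf_le (GramSusp.upper h1)
  have le2 : gramDim G ≤ m := by
    refine Nat.sInf_le (GramSusp.lower ?_)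
    show gramDimLE (suspension G) (Nat.succ m)
    rw [← hm]
    exact h2
  omega
end

section
/- For any graph G, ed(G) ≤ gd(G) − 1, where ed is the Euclidean dimension parameter and gd is the Gram dimension. -/
open scoped RealInnerProductSpace
open Matrix

lemma extend_sum_eq {d k : ℕ} (h : d ≤ k) (x y : Fin d → ℝ) :
    ∑ j : Fin k, Function.extend (Fin.castLE h) x 0 j * Function.extend (Fin.castLE h) y 0 j
      = ∑ i : Fin d, x i * y i := by
  classical
  have hinj : Function.Injective (Fin.castLE h) := Fin.castLE_injective h
  rw [← Finset.sum_subset (Finset.subset_univ ((Finset.univ : Finset (Fin d)).image (Fin.castLE h)))]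
  · rw [Finset.sum_image (fun a _ b _ hab => hinj hab)]
    refine Finset.sum_congr rfl fun i _ => ?_
    rw [hinj.extend_apply, hinj.extend_apply]
  · intro j _ hj
    have : ¬ ∃ i, Fin.castLE h i = j := by
      rintro ⟨i, rfl⟩; exact hj (Finset.mem_image_of_mem _ (Finset.mem_univ i))
    rw [Function.extend_apply' _ _ _ this, Pi.zero_apply, zero_mul]

noncomputable def padIso {d k : ℕ} (h : d ≤ k) :
    EuclideanSpace ℝ (Fin d) →ₗᵢ[ℝ] EuclideanSpace ℝ (Fin k) :=
  LinearMap.isometryOfInner ((WithLp.linearEquiv 2 ℝ (Fin k → ℝ)).symm.toLinearMap ∘ₗ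
    Function.ExtendByZero.linearMap ℝ (Fin.castLE h) ∘ₗ
    (WithLp.linearEquiv 2 ℝ (Fin d → ℝ)).toLinearMap) (by
    intro x y
    simp only [PiLp.inner_apply, RCLike.inner_apply, conj_trivial, LinearMap.coe_comp,
      Function.comp_apply, LinearEquiv.coe_coe, WithLp.coe_linearEquiv,
      WithLp.coe_symm_linearEquiv, PiLp.toLp_apply,
      Function.ExtendByZero.linearMap, LinearMap.coe_mk, AddHom.coe_mk]
    exact extend_sum_eq h y.ofLp x.ofLp)

open scoped MatrixOrder in
lemma gram_vectors {V : Type*} [Fintype V] {k : ℕ} (Y : Matrix V V ℝ) (hY : Y.PosSemidef)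
    (hr : Y.rank ≤ k) : ∃ a : V → EuclideanSpace ℝ (Fin k), ∀ i j, ⟪a i, a j⟫ = Y i j := by
  classical
  set S := CFC.sqrt Y with hSdef
  have hSS : S * S = Y := CFC.sqrt_mul_sqrt_self Y hY.nonneg
  have hherm : Sᵀ = S := by
    have := (CFC.sqrt_nonneg Y).posSemidef.1
    rwa [Matrix.IsHermitian, Matrix.conjTranspose_eq_transpose_of_trivial] at this
  have hTS : Sᵀ * S = Y := by rw [hherm, hSS]
  -- columns of S as elements of EuclideanSpace ℝ V
  set c : V → EuclideanSpace ℝ V := fun i => WithLp.toLp 2 (fun l => S l i) with hc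
  have hinner : ∀ i j, ⟪c i, c j⟫ = Y i j := by
    intro i j
    simp only [PiLp.inner_apply, RCLike.inner_apply, conj_trivial, hc, PiLp.toLp_apply]
    rw [← hTS]
    simp [Matrix.mul_apply, Matrix.transpose_apply, mul_comm]
  set W : Submodule ℝ (EuclideanSpace ℝ V) := Submodule.span ℝ (Set.range c) with hW
  have hrange : Set.range c =
      (WithLp.linearEquiv 2 ℝ (V → ℝ)).symm.toLinearMap '' Set.range Sᵀ := by
    ext z; constructor
    · rintro ⟨i, rfl⟩; exact ⟨_, ⟨i, rfl⟩, rfl⟩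
    · rintro ⟨_, ⟨i, rfl⟩, rfl⟩; exact ⟨i, rfl⟩
  have hdim : Module.finrank ℝ W ≤ k := by
    have h1 : S.rank = Module.finrank ℝ (Submodule.span ℝ (Set.range Sᵀ)) :=
      Matrix.rank_eq_finrank_span_cols S
    have h2 : S.rank = Y.rank := by rw [← hTS, Matrix.rank_transpose_mul_self]
    rw [hW, hrange, Submodule.span_image, LinearEquiv.finrank_map_eq]
    exact h1 ▸ (h2 ▸ hr)
  set B := stdOrthonormalBasis ℝ W
  refine ⟨fun i => padIso hdim (B.repr ⟨c i, Submodule.subset_span ⟨i, rfl⟩⟩), fun i j => ?_⟩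
  rw [(padIso hdim).inner_map_map, B.repr.inner_map_map]
  exact hinner i j

lemma gramShift_psd {V : Type*} [Fintype V] {m : ℕ} (p : V → EuclideanSpace ℝ (Fin m)) (t : ℝ) :
    Matrix.PosSemidef (Matrix.of fun i j => ⟪p i, p j⟫ + t ^ 2) := by
  classical
  set B : Matrix (Option (Fin m)) V ℝ := Matrix.of fun l i => l.elim t (fun l' => p i l') with hB
  have : (Matrix.of fun i j => ⟪p i, p j⟫ + t ^ 2) = Bᴴ * B := by
    ext i j
    simp only [Matrix.mul_apply, Matrix.conjTranspose_apply, Matrix.of_apply, hB]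
    rw [Fintype.sum_option]
    simp [PiLp.inner_apply, sq, add_comm, mul_comm]
  rw [this]
  exact Matrix.posSemidef_conjTranspose_mul_self B

lemma walk_dist_le {V : Type*} {G : SimpleGraph V} {E F : Type*} [PseudoMetricSpace E]
    [PseudoMetricSpace F] (a : V → E) (p : V → F)
    (ha : ∀ u v, G.Adj u v → dist (a u) (a v) = dist (p u) (p v)) :
    ∀ {x y : V} (w : G.Walk x y),
      dist (a x) (a y) ≤ (w.darts.map (fun d => dist (p d.toProd.1) (p d.toProd.2))).sum := by
  intro x y w
  induction w with
  | nil => simp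
  | @cons u v z hadj w ih =>
    simp only [SimpleGraph.Walk.darts_cons, List.map_cons, List.sum_cons]
    calc dist (a u) (a z) ≤ dist (a u) (a v) + dist (a v) (a z) := dist_triangle _ _ _
      _ ≤ dist (p u) (p v) + _ := by rw [ha _ _ hadj]; exact add_le_add_right ih _

noncomputable def foldMap {k : ℕ} (u : EuclideanSpace ℝ (Fin k)) (w : EuclideanSpace ℝ (Fin k)) :
    EuclideanSpace ℝ (Fin (k - 1)) :=
  if h : Module.finrank ℝ ((ℝ ∙ u)ᗮ : Submodule ℝ (EuclideanSpace ℝ (Fin k))) ≤ k - 1 then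
    padIso h ((stdOrthonormalBasis ℝ ((ℝ ∙ u)ᗮ : Submodule ℝ (EuclideanSpace ℝ (Fin k)))).repr
      (Submodule.orthogonalProjectionOnto ((ℝ ∙ u)ᗮ) w))
  else 0

lemma foldMap_dist {k : ℕ} (u w w' : EuclideanSpace ℝ (Fin k)) (hu : u ≠ 0)
    (hw : w ∈ (ℝ ∙ u)ᗮ) (hw' : w' ∈ (ℝ ∙ u)ᗮ) :
    dist (foldMap u w) (foldMap u w') = dist w w' := by
  have hfin : Module.finrank ℝ ((ℝ ∙ u)ᗮ : Submodule ℝ (EuclideanSpace ℝ (Fin k))) ≤ k - 1 := by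
    have h1 : Module.finrank ℝ (ℝ ∙ u) + Module.finrank ℝ ((ℝ ∙ u)ᗮ : Submodule ℝ (EuclideanSpace ℝ (Fin k)))
        = Module.finrank ℝ (EuclideanSpace ℝ (Fin k)) :=
      Submodule.finrank_add_finrank_orthogonal _
    rw [finrank_span_singleton hu, finrank_euclideanSpace_fin] at h1
    omega
  rw [foldMap, foldMap, dif_pos hfin, dif_pos hfin]
  rw [(padIso hfin).isometry.dist_eq, (stdOrthonormalBasis ℝ _).repr.dist_map]
  rw [Subtype.dist_eq, Submodule.coe_orthogonalProjectionOnto_apply,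
    Submodule.coe_orthogonalProjectionOnto_apply, Submodule.starProjection_eq_self_iff.mpr hw,
    Submodule.starProjection_eq_self_iff.mpr hw']


/-- `edDimLE G k` : every Euclidean realization (in any dimension) of a partial distance matrix
on the edges of `G` can be refolded into `ℝ^k`, i.e. `ed(G) ≤ k`. -/
def edDimLE {V : Type*} (G : SimpleGraph V) (k : ℕ) : Prop :=
  ∀ (m : ℕ) (p : V → EuclideanSpace ℝ (Fin m)),
    ∃ q : V → EuclideanSpace ℝ (Fin k),
      ∀ u v, G.Adj u v → dist (q u) (q v) = dist (p u) (p v)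

/-- The Euclidean dimension parameter `ed(G)`. -/
noncomputable def edDim {V : Type*} (G : SimpleGraph V) : ℕ :=
  sInf {k | edDimLE G k}

open Filter Bornology Topology in
set_option maxHeartbeats 2000000 in
/-- For any graph `G`, `ed(G) ≤ gd(G) − 1`. -/
theorem edDim_le_gramDim_sub_one {V : Type*} [Fintype V] (G : SimpleGraph V) :
    edDim G ≤ gramDim G - 1 := by
  classical
  by_cases hV : IsEmpty V
  · have h0 : edDimLE G 0 := fun m p => ⟨fun v => isEmptyElim v, fun u v _ => isEmptyElim u⟩
    exact le_trans (Nat.sInf_le h0) (Nat.zero_le _)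
  haveI : Nonempty V := not_isEmpty_iff.mp hV
  set k := gramDim G with hkdef
  have hne : gramDimLE G (Fintype.card V) := fun X hX =>
    ⟨X, hX, X.rank_le_card_width, fun i => rfl, fun i j _ => rfl⟩
  have hkmem : gramDimLE G k := Nat.sInf_mem (s := {k | gramDimLE G k}) ⟨_, hne⟩
  have hk1 : 1 ≤ k := by
    by_contra hcon
    have hk0 : k = 0 := by omega
    obtain ⟨Y, hYpsd, hYrank, hdiag, -⟩ := hkmem 1 Matrix.PosSemidef.one
    obtain ⟨a, ha⟩ := gram_vectors Y hYpsd (hk0 ▸ hYrank)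
    obtain ⟨i⟩ := ‹Nonempty V›
    have h1 := ha i i
    rw [hdiag i, Matrix.one_apply_eq] at h1
    have h2 : (a i) = 0 := Subsingleton.elim _ _
    rw [h2, inner_zero_left] at h1
    exact zero_ne_one h1
  refine Nat.sInf_le (show edDimLE G (k - 1) from ?_)
  intro m p
  -- the sequence of shifted Gram matrices
  set t : ℕ → ℝ := fun n => (n : ℝ) + 1 with ht
  have htpos : ∀ n, 0 < t n := fun n => by positivity
  have hX : ∀ n : ℕ, Matrix.PosSemidef (Matrix.of fun i j => ⟪p i, p j⟫ + t n ^ 2) :=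
    fun n => gramShift_psd p (t n)
  choose Y hYpsd hYrank hYag using fun n => hkmem _ (hX n)
  choose a ha using fun n => gram_vectors (Y n) (hYpsd n) (hYrank n)
  have hnorm : ∀ n i, ‖a n i‖ ^ 2 = ‖p i‖ ^ 2 + t n ^ 2 := by
    intro n i
    have := ha n i i
    rw [(hYag n).1 i, Matrix.of_apply, real_inner_self_eq_norm_sq, real_inner_self_eq_norm_sq] at this
    exact this
  have hedge : ∀ n i j, G.Adj i j → ⟪a n i, a n j⟫ = ⟪p i, p j⟫ + t n ^ 2 := by
    intro n i j hij
    have := ha n i j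
    rw [(hYag n).2 i j hij, Matrix.of_apply] at this
    exact this
  have hdista : ∀ n i j, G.Adj i j → dist (a n i) (a n j) = dist (p i) (p j) := by
    intro n i j hij
    have h1 : dist (a n i) (a n j) ^ 2 = dist (p i) (p j) ^ 2 := by
      rw [dist_eq_norm, dist_eq_norm, norm_sub_sq_real, norm_sub_sq_real,
        hnorm n i, hnorm n j, hedge n i j hij]
      ring
    have := congrArg Real.sqrt h1
    rwa [Real.sqrt_sq dist_nonneg, Real.sqrt_sq dist_nonneg] at this
  -- component representatives
  set r : V → V := fun i => (G.connectedComponentMk i).out with hrdef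
  have hmk : ∀ i, G.connectedComponentMk (r i) = G.connectedComponentMk i := fun i =>
    Quot.out_eq _
  have hreach : ∀ i, G.Reachable (r i) i := fun i =>
    SimpleGraph.ConnectedComponent.exact (hmk i)
  have hradj : ∀ i j, G.Adj i j → r i = r j := by
    intro i j hij
    simp only [hrdef]
    rw [SimpleGraph.ConnectedComponent.connectedComponentMk_eq_of_adj hij]
  -- bounds from chosen walks
  set B : V → ℝ := fun i => (((hreach i).some).darts.map
    (fun d => dist (p d.toProd.1) (p d.toProd.2))).sum with hBdef
  have hBnn : ∀ i, 0 ≤ B i := by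
    intro i
    refine List.sum_nonneg ?_
    intro x hx
    simp only [List.mem_map] at hx
    obtain ⟨d, -, rfl⟩ := hx
    exact dist_nonneg
  set b : ℕ → V → EuclideanSpace ℝ (Fin k) := fun n i => a n i - a n (r i) with hbdef
  have hbB : ∀ n i, ‖b n i‖ ≤ B i := by
    intro n i
    have hw := walk_dist_le (a n) p (hdista n) ((hreach i).some)
    rw [dist_eq_norm] at hw
    calc ‖b n i‖ = ‖a n (r i) - a n i‖ := by rw [hbdef]; exact (norm_sub_rev _ _)
      _ ≤ B i := hw
  set u : ℕ → V → EuclideanSpace ℝ (Fin k) := fun n i => (‖a n (r i)‖)⁻¹ • a n (r i) with hudef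
  have hanorm : ∀ n i, t n ≤ ‖a n i‖ := by
    intro n i
    have h2 : t n ^ 2 ≤ ‖a n i‖ ^ 2 := by rw [hnorm n i]; nlinarith [sq_nonneg ‖p i‖]
    nlinarith [norm_nonneg (a n i), htpos n]
  have hunorm : ∀ n i, ‖u n i‖ = 1 := by
    intro n i
    have h0 : 0 < ‖a n (r i)‖ := lt_of_lt_of_le (htpos n) (hanorm n (r i))
    rw [hudef]
    simp only [norm_smul, norm_inv, norm_norm]
    field_simp
  have key : ∀ n i, ⟪u n i, b n i⟫ =
      (‖p i‖ ^ 2 - ‖p (r i)‖ ^ 2 - ‖b n i‖ ^ 2) / (2 * ‖a n (r i)‖) := by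
    intro n i
    have h0 : 0 < ‖a n (r i)‖ := lt_of_lt_of_le (htpos n) (hanorm n (r i))
    have hne0 : ‖a n (r i)‖ ≠ 0 := ne_of_gt h0
    have hb2 : ‖b n i‖ ^ 2 = ‖a n i‖ ^ 2 - 2 * ⟪a n i, a n (r i)⟫ + ‖a n (r i)‖ ^ 2 := by
      rw [hbdef]
      exact norm_sub_sq_real _ _
    have hui : ⟪u n i, b n i⟫ =
        ‖a n (r i)‖⁻¹ * (⟪a n i, a n (r i)⟫ - ‖a n (r i)‖ ^ 2) := by
      rw [hudef, hbdef]
      simp only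
      rw [real_inner_smul_left, inner_sub_right]
      have e1 : ⟪a n (r i), a n i⟫ = ⟪a n i, a n (r i)⟫ := real_inner_comm _ _
      have e2 : ⟪a n (r i), a n (r i)⟫ = ‖a n (r i)‖ ^ 2 := real_inner_self_eq_norm_sq _
      rw [e1, e2]
    have hni := hnorm n i
    have hnr := hnorm n (r i)
    have hinner_eq : ⟪a n i, a n (r i)⟫ =
        (‖a n i‖ ^ 2 + ‖a n (r i)‖ ^ 2 - ‖b n i‖ ^ 2) / 2 := by linarith
    rw [hui, hinner_eq, hni, hnr]
    field_simp
    ring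
  have habs : ∀ n i, |⟪u n i, b n i⟫| ≤
      (|‖p i‖ ^ 2 - ‖p (r i)‖ ^ 2| + B i ^ 2) / (2 * t n) := by
    intro n i
    have h0 : 0 < ‖a n (r i)‖ := lt_of_lt_of_le (htpos n) (hanorm n (r i))
    rw [key n i, abs_div]
    have h1 : |‖p i‖ ^ 2 - ‖p (r i)‖ ^ 2 - ‖b n i‖ ^ 2| ≤
        |‖p i‖ ^ 2 - ‖p (r i)‖ ^ 2| + B i ^ 2 := by
      have h2 : ‖b n i‖ ^ 2 ≤ B i ^ 2 := by nlinarith [hbB n i, norm_nonneg (b n i)]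
      have h3 : (0:ℝ) ≤ ‖b n i‖ ^ 2 := sq_nonneg _
      rw [abs_le]
      constructor <;> cases abs_cases (‖p i‖ ^ 2 - ‖p (r i)‖ ^ 2) <;> nlinarith
    refine div_le_div₀ (by positivity) h1 (by positivity) ?_
    rw [abs_of_nonneg (by positivity)]
    have := hanorm n (r i)
    linarith
  -- Bolzano–Weierstrass
  set z : ℕ → (V → EuclideanSpace ℝ (Fin k) × EuclideanSpace ℝ (Fin k)) :=
    fun n i => (b n i, u n i) with hzdef
  have hzmem : ∀ n, z n ∈ Set.pi Set.univ (fun i =>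
      Metric.closedBall (0 : EuclideanSpace ℝ (Fin k)) (B i) ×ˢ
      Metric.closedBall (0 : EuclideanSpace ℝ (Fin k)) 1) := by
    intro n i _
    refine ⟨?_, ?_⟩
    · rw [Metric.mem_closedBall, dist_zero_right]
      exact hbB n i
    · rw [Metric.mem_closedBall, dist_zero_right, hunorm n i]
  have hbdd : IsBounded (Set.pi Set.univ (fun i =>
      Metric.closedBall (0 : EuclideanSpace ℝ (Fin k)) (B i) ×ˢ
      Metric.closedBall (0 : EuclideanSpace ℝ (Fin k)) 1)) :=
    IsBounded.pi (fun i =>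
      (Metric.isBounded_closedBall).prod Metric.isBounded_closedBall)
  obtain ⟨L, -, φ, hφ, hconv⟩ := tendsto_subseq_of_bounded hbdd hzmem
  set w : V → EuclideanSpace ℝ (Fin k) := fun i => (L i).1 with hwdef
  set U : V → EuclideanSpace ℝ (Fin k) := fun i => (L i).2 with hUdef
  have hconvi : ∀ i, Tendsto (fun n => z (φ n) i) atTop (𝓝 (L i)) := fun i =>
    ((continuous_apply i).tendsto L).comp hconv
  have hconvb : ∀ i, Tendsto (fun n => b (φ n) i) atTop (𝓝 (w i)) := fun i =>
    (continuous_fst.tendsto (L i)).comp (hconvi i)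
  have hconvu : ∀ i, Tendsto (fun n => u (φ n) i) atTop (𝓝 (U i)) := fun i =>
    (continuous_snd.tendsto (L i)).comp (hconvi i)
  -- limit facts
  have hUnorm : ∀ i, ‖U i‖ = 1 := by
    intro i
    have h1 : Tendsto (fun n => ‖u (φ n) i‖) atTop (𝓝 ‖U i‖) := (hconvu i).norm
    have h2 : (fun n => ‖u (φ n) i‖) = fun _ => (1:ℝ) := funext fun n => hunorm _ i
    rw [h2] at h1
    exact tendsto_nhds_unique h1 tendsto_const_nhds
  have hUadj : ∀ i j, G.Adj i j → U i = U j := by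
    intro i j hij
    have hsame : (fun n => u (φ n) i) = (fun n => u (φ n) j) := by
      funext n
      rw [hudef]
      simp only [hradj i j hij]
    exact tendsto_nhds_unique (hconvu i) (hsame ▸ hconvu j)
  have hwdist : ∀ i j, G.Adj i j → dist (w i) (w j) = dist (p i) (p j) := by
    intro i j hij
    have h1 : Tendsto (fun n => dist (b (φ n) i) (b (φ n) j)) atTop
        (𝓝 (dist (w i) (w j))) := (hconvb i).dist (hconvb j)
    have h2 : (fun n => dist (b (φ n) i) (b (φ n) j)) = fun _ => dist (p i) (p j) := by
      funext n
      rw [hbdef]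
      simp only [hradj i j hij]
      rw [dist_eq_norm, sub_sub_sub_cancel_right, ← dist_eq_norm]
      exact hdista _ i j hij
    rw [h2] at h1
    exact tendsto_nhds_unique h1 tendsto_const_nhds
  have horth : ∀ i, ⟪U i, w i⟫ = 0 := by
    intro i
    have h1 : Tendsto (fun n => ⟪u (φ n) i, b (φ n) i⟫) atTop (𝓝 ⟪U i, w i⟫) :=
      (hconvu i).inner (hconvb i)
    have h2 : Tendsto (fun n => ⟪u (φ n) i, b (φ n) i⟫) atTop (𝓝 (0:ℝ)) := by
      set M : ℝ := |‖p i‖ ^ 2 - ‖p (r i)‖ ^ 2| + B i ^ 2 with hM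
      have hMnn : 0 ≤ M := by positivity
      have hbound : ∀ n : ℕ, ‖⟪u (φ n) i, b (φ n) i⟫‖ ≤ M / (2 * ((n:ℝ) + 1)) := by
        intro n
        rw [Real.norm_eq_abs]
        refine (habs (φ n) i).trans ?_
        have hφn : (n:ℝ) + 1 ≤ t (φ n) := by
          have h5 : n ≤ φ n := hφ.le_apply
          have h6 : (n:ℝ) ≤ (φ n : ℝ) := by exact_mod_cast h5
          show (n:ℝ) + 1 ≤ (φ n : ℝ) + 1
          linarith
        refine div_le_div_of_nonneg_left hMnn (by positivity) ?_
        linarith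
      have hgt : Tendsto (fun n : ℕ => M / (2 * ((n:ℝ) + 1))) atTop (𝓝 (0:ℝ)) := by
        refine Tendsto.div_atTop tendsto_const_nhds ?_
        refine Tendsto.const_mul_atTop two_pos ?_
        exact tendsto_atTop_add_const_right atTop 1 tendsto_natCast_atTop_atTop
      exact squeeze_zero_norm hbound hgt
    exact tendsto_nhds_unique h1 h2
  have hUne : ∀ i, U i ≠ 0 := by
    intro i h
    have h4 := hUnorm i
    rw [h, norm_zero] at h4
    exact one_ne_zero h4.symm
  have hwmem : ∀ i, w i ∈ (ℝ ∙ U i)ᗮ := fun i =>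
    Submodule.mem_orthogonal_singleton_iff_inner_right.mpr (horth i)
  refine ⟨fun i => foldMap (U i) (w i), fun i j hij => ?_⟩
  have hUeq : U j = U i := (hUadj i j hij).symm
  show dist (foldMap (U i) (w i)) (foldMap (U j) (w j)) = _
  rw [hUeq, foldMap_dist (U i) (w i) (w j) (hUne i) (hwmem i) (hUeq ▸ hwmem j)]
  exact hwdist i j hij
end

section
/- For any graph G, gd(G) ≥ ν⁼(G). -/
/-- The strong Arnold property for a matrix `M` relative to the graph `G`. -/
def StrongArnold {V : Type*} [Fintype V] (G : SimpleGraph V) (M : Matrix V V ℝ) : Prop :=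
  ∀ X : Matrix V V ℝ, X.IsSymm → M * X = 0 → (∀ i, X i i = 0) →
    (∀ i j, G.Adj i j → X i j = 0) → X = 0

/-- The parameter `ν⁼(G)` : the maximum corank of a psd matrix supported on `G` satisfying the
strong Arnold property. -/
noncomputable def nuEq {V : Type*} [Fintype V] (G : SimpleGraph V) : ℕ :=
  sSup {k | ∃ M : Matrix V V ℝ, M.PosSemidef ∧
    (∀ i j, i ≠ j → ¬G.Adj i j → M i j = 0) ∧ StrongArnold G M ∧
    k = Fintype.card V - M.rank}

section Aux

open Matrix Module
open scoped MatrixOrder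

variable {V : Type*} [Fintype V] [DecidableEq V]

omit [DecidableEq V] in
lemma trace_tmul_zero (A : Matrix V V ℝ) (h : Matrix.trace (Aᵀ * A) = 0) : A = 0 := by
  ext i j
  have : ∑ j, ∑ i, A i j * A i j = 0 := by
    simpa [Matrix.trace, Matrix.mul_apply, Matrix.diag] using h
  have hz : ∀ b ∈ Finset.univ, ∀ a ∈ Finset.univ, A a b * A a b = 0 := by
    intro b _ a _
    have h1 : ∀ b ∈ (Finset.univ : Finset V), 0 ≤ ∑ i, A i b * A i b := by
      intro b _; exact Finset.sum_nonneg fun i _ => mul_self_nonneg _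
    have h2 := (Finset.sum_eq_zero_iff_of_nonneg h1).mp this b (Finset.mem_univ b)
    exact (Finset.sum_eq_zero_iff_of_nonneg
      (fun i _ => mul_self_nonneg (A i b))).mp h2 a (Finset.mem_univ a)
  have := hz j (Finset.mem_univ j) i (Finset.mem_univ i)
  simpa [mul_self_eq_zero] using this

lemma psd_mul_eq_zero (M N : Matrix V V ℝ) (hM : M.PosSemidef) (hN : N.PosSemidef)
    (h : Matrix.trace (M * N) = 0) : M * N = 0 := by
  set a := CFC.sqrt M with ha
  set b := CFC.sqrt N with hb
  have haH : aᵀ = a := by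
    have := (CFC.sqrt_nonneg M).posSemidef.isHermitian
    rwa [Matrix.IsHermitian, Matrix.conjTranspose_eq_transpose_of_trivial] at this
  have hbH : bᵀ = b := by
    have := (CFC.sqrt_nonneg N).posSemidef.isHermitian
    rwa [Matrix.IsHermitian, Matrix.conjTranspose_eq_transpose_of_trivial] at this
  have hMa : a * a = M := CFC.sqrt_mul_sqrt_self M hM.nonneg
  have hNb : b * b = N := CFC.sqrt_mul_sqrt_self N hN.nonneg
  have key : Matrix.trace ((b * a)ᵀ * (b * a)) = 0 := by
    have e1 : (b * a)ᵀ * (b * a) = (a * b) * b * a := by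
      rw [Matrix.transpose_mul, haH, hbH]; noncomm_ring
    rw [e1, Matrix.trace_mul_cycle]
    have e2 : a * (a * b) * b = M * N := by rw [← hMa, ← hNb]; noncomm_ring
    rw [e2]; exact h
  have hba : b * a = 0 := trace_tmul_zero (b * a) key
  have hab : a * b = 0 := by
    have := congrArg Matrix.transpose hba
    rwa [Matrix.transpose_mul, haH, hbH, Matrix.transpose_zero] at this
  have e3 : M * N = a * (a * b) * b := by rw [← hMa, ← hNb]; noncomm_ring
  rw [e3, hab, Matrix.mul_zero, Matrix.zero_mul]

lemma corank_le_of_gramDimLE (G : SimpleGraph V) (M : Matrix V V ℝ) (hM : M.PosSemidef)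
    (hsupp : ∀ i j, i ≠ j → ¬G.Adj i j → M i j = 0) (hSAP : StrongArnold G M)
    (m : ℕ) (hm : gramDimLE G m) : Fintype.card V - M.rank ≤ m := by
  classical
  set K := LinearMap.ker M.mulVecLin with hK
  set r := finrank ℝ K with hr
  let b : Basis (Fin r) ℝ K := Module.finBasis ℝ K
  let C : Matrix V (Fin r) ℝ := Matrix.of fun i j => (b j : V → ℝ) i
  have hMC : M * C = 0 := by
    ext i j
    have hmem : ((b j : K) : V → ℝ) ∈ LinearMap.ker M.mulVecLin := (b j).2
    have hbj : M.mulVecLin ((b j : K) : V → ℝ) = 0 := LinearMap.mem_ker.mp hmem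
    rw [Matrix.mulVecLin_apply] at hbj
    show (M * C) i j = (0 : Matrix V (Fin r) ℝ) i j
    calc (M * C) i j = (M *ᵥ ((b j : K) : V → ℝ)) i := rfl
      _ = (0 : Matrix V (Fin r) ℝ) i j := by rw [hbj]; rfl
  have hrange : LinearMap.range C.mulVecLin = K := by
    rw [Matrix.range_mulVecLin]
    have hcols : Set.range C.col = K.subtype '' Set.range b := by
      rw [← Set.range_comp]
      rfl
    rw [hcols, Submodule.span_image, Module.Basis.span_eq, Submodule.map_subtype_top]
  have hrankC : C.rank = r := by
    rw [Matrix.rank, hrange]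
  set X := C * Cᵀ with hX
  have hXpsd : X.PosSemidef := by
    have := Matrix.posSemidef_self_mul_conjTranspose C
    rwa [Matrix.conjTranspose_eq_transpose_of_trivial] at this
  have hXrank : X.rank = r := by rw [hX, Matrix.rank_self_mul_transpose, hrankC]
  have hMX : M * X = 0 := by rw [hX, ← Matrix.mul_assoc, hMC, Matrix.zero_mul]
  obtain ⟨Y, hYpsd, hYrank, hdiag, hedge⟩ := hm X hXpsd
  have htr : Matrix.trace (M * Y) = 0 := by
    have h1 : Matrix.trace (M * Y) = Matrix.trace (M * X) := by
      simp only [Matrix.trace, Matrix.diag, Matrix.mul_apply]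
      refine Finset.sum_congr rfl fun i _ => Finset.sum_congr rfl fun j _ => ?_
      by_cases hij : j = i
      · subst hij; rw [hdiag]
      · by_cases hadj : G.Adj j i
        · rw [hedge j i hadj]
        · have h0 : M i j = 0 := hsupp i j (Ne.symm hij) (fun h => hadj h.symm)
          rw [h0, zero_mul, zero_mul]
    rw [h1, hMX, Matrix.trace_zero]
  have hMY : M * Y = 0 := psd_mul_eq_zero M Y hM hYpsd htr
  have hYsymm : Yᵀ = Y := by
    have := hYpsd.isHermitian
    rwa [Matrix.IsHermitian, Matrix.conjTranspose_eq_transpose_of_trivial] at this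
  have hXsymm : Xᵀ = X := by rw [hX, Matrix.transpose_mul, Matrix.transpose_transpose]
  have hZ : X - Y = 0 := by
    apply hSAP (X - Y)
    · show (X - Y)ᵀ = X - Y
      rw [Matrix.transpose_sub, hXsymm, hYsymm]
    · rw [Matrix.mul_sub, hMX, hMY, sub_zero]
    · intro i; simp [Matrix.sub_apply, hdiag i]
    · intro i j h; simp [Matrix.sub_apply, hedge i j h]
  have hXY : X = Y := sub_eq_zero.mp hZ
  have hcorank : Fintype.card V - M.rank = r := by
    have hrn : M.rank + r = Fintype.card V := by
      have h1 := LinearMap.finrank_range_add_finrank_ker M.mulVecLin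
      rw [Module.finrank_fintype_fun_eq_card] at h1
      exact h1
    omega
  rw [hcorank, ← hXrank, hXY]
  exact hYrank

end Aux

/-- For any graph `G`, `gd(G) ≥ ν⁼(G)`. -/
theorem nuEq_le_gramDim {V : Type*} [Fintype V] [DecidableEq V] (G : SimpleGraph V) :
    nuEq G ≤ gramDim G := by
  have hSne : {k | ∃ M : Matrix V V ℝ, M.PosSemidef ∧
      (∀ i j, i ≠ j → ¬G.Adj i j → M i j = 0) ∧ StrongArnold G M ∧
      k = Fintype.card V - M.rank}.Nonempty :=
    ⟨Fintype.card V - (1 : Matrix V V ℝ).rank, 1, Matrix.PosSemidef.one,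
      fun i j hij _ => Matrix.one_apply_ne hij,
      fun X _ hX _ _ => by rwa [one_mul] at hX, rfl⟩
  refine csSup_le hSne fun k hk => ?_
  obtain ⟨M, hMpsd, hsupp, hSAP, hkeq⟩ := hk
  have hTne : {k | gramDimLE G k}.Nonempty :=
    ⟨Fintype.card V, fun X hX => ⟨X, hX, Matrix.rank_le_card_height X,
      fun i => rfl, fun i j _ => rfl⟩⟩
  refine le_csInf hTne fun m hm => ?_
  subst hkeq
  exact corank_le_of_gramDimLE G M hMpsd hsupp hSAP m hm
end

section
/- Let θ₁,...,θ_n ∈ [0, π] and let a = (cos θ₁,...,cos θ_n) be an assignment to the edges of the n-cycle C_n. Then there exist unit vectors u₁,...,u_n ∈ R² with uᵢᵀu_{i+1} = cos θᵢ for all i (indices mod n) if and only if there exist signs ε ∈ {±1}^n and an integer k with Σᵢ εᵢθᵢ = 2kπ. -/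
open Real

noncomputable def vecOf (x : ℝ) : EuclideanSpace ℝ (Fin 2) :=
  (WithLp.equiv 2 (Fin 2 → ℝ)).symm ![Real.cos x, Real.sin x]

lemma norm_vecOf (x : ℝ) : ‖vecOf x‖ = 1 := by
  rw [EuclideanSpace.norm_eq]
  simp [vecOf, Fin.sum_univ_two, sq_abs]

lemma inner_vecOf (x y : ℝ) : (inner ℝ (vecOf x) (vecOf y) : ℝ) = Real.cos (x - y) := by
  simp [vecOf, PiLp.inner_apply, RCLike.inner_apply, Fin.sum_univ_two, Real.cos_sub]
  ring

/-- Realizability of prescribed angles on the edges of the `n`-cycle by unit vectors in the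
plane: `a = (cos θ₁, …, cos θ_n)` has a Gram representation by unit vectors `u₁, …, u_n ∈ ℝ²`
with `uᵢᵀu_{i+1} = cos θᵢ` (indices mod `n`) iff `Σᵢ εᵢθᵢ ∈ 2πℤ` for some signs `ε ∈ {±1}ⁿ`. -/
theorem cycle_gram_representation_iff (n : ℕ) [NeZero n]
    (θ : Fin n → ℝ) (hθ : ∀ i, θ i ∈ Set.Icc 0 π) :
    (∃ u : Fin n → EuclideanSpace ℝ (Fin 2),
      (∀ i, ‖u i‖ = 1) ∧
      ∀ i : Fin n, (inner ℝ (u i) (u (i + 1)) : ℝ) = Real.cos (θ i)) ↔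
    (∃ (ε : Fin n → ℝ) (k : ℤ), (∀ i, ε i = 1 ∨ ε i = -1) ∧
      ∑ i, ε i * θ i = 2 * (k : ℝ) * π) := by
  constructor
  · rintro ⟨u, hnorm, hinner⟩
    have hsq : ∀ i, (u i 0)^2 + (u i 1)^2 = 1 := by
      intro i
      have h := hnorm i
      rw [EuclideanSpace.norm_eq, Fin.sum_univ_two] at h
      have := Real.sqrt_eq_one.mp (by simpa [sq_abs] using h)
      simpa [sq_abs] using this
    set z : Fin n → ℂ := fun i => ⟨u i 0, u i 1⟩ with hz
    have habs : ∀ i, ‖z i‖ = 1 := by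
      intro i
      rw [Complex.norm_def, Complex.normSq_mk]
      rw [show u i 0 * u i 0 + u i 1 * u i 1 = (u i 0)^2 + (u i 1)^2 by ring, hsq]
      exact Real.sqrt_one
    have hne : ∀ i, z i ≠ 0 := by
      intro i h
      have := habs i
      rw [h] at this
      simp at this
    set φ : Fin n → ℝ := fun i => Complex.arg (z i) with hφ
    have hcosφ : ∀ i, Real.cos (φ i) = u i 0 := by
      intro i; rw [hφ]; simp [Complex.cos_arg (hne i), habs i]; rfl
    have hsinφ : ∀ i, Real.sin (φ i) = u i 1 := by
      intro i; rw [hφ]; simp [Complex.sin_arg, habs i]; rfl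
    have hd : ∀ i : Fin n, Real.cos (φ i - φ (i+1)) = Real.cos (θ i) := by
      intro i
      rw [Real.cos_sub, hcosφ, hcosφ, hsinφ, hsinφ, ← hinner i]
      simp [PiLp.inner_apply, RCLike.inner_apply, Fin.sum_univ_two]
      ring
    choose K hK using fun i => (Real.cos_eq_cos_iff.mp (hd i))
    set ε : Fin n → ℝ :=
      fun i => if θ i = 2 * (K i : ℝ) * π + (φ i - φ (i+1)) then 1 else -1 with hε
    have key : ∀ i, ε i * θ i = (φ i - φ (i+1)) +
        2 * ((if θ i = 2 * (K i : ℝ) * π + (φ i - φ (i+1)) then K i else -K i : ℤ) : ℝ) * π := by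
      intro i
      by_cases h : θ i = 2 * (K i : ℝ) * π + (φ i - φ (i+1))
      · simp only [hε, if_pos h]
        rw [one_mul, h]
        ring
      · have h2 : θ i = 2 * (K i : ℝ) * π - (φ i - φ (i+1)) := (hK i).resolve_left h
        simp only [hε, if_neg h]
        push_cast
        rw [h2]
        ring
    have hsum0 : ∑ i, (φ i - φ (i+1)) = 0 := by
      rw [Finset.sum_sub_distrib]
      rw [show ∑ i, φ (i+1) = ∑ i, φ i from
        Fintype.sum_equiv (Equiv.addRight (1 : Fin n)) _ _ (fun i => rfl)]
      ring
    refine ⟨ε, ∑ i, (if θ i = 2 * (K i : ℝ) * π + (φ i - φ (i+1)) then K i else -K i : ℤ),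
      fun i => by by_cases h : θ i = 2 * (K i : ℝ) * π + (φ i - φ (i+1)) <;> simp [hε, h], ?_⟩
    rw [Finset.sum_congr rfl (fun i _ => key i), Finset.sum_add_distrib, hsum0, zero_add]
    push_cast
    rw [Finset.mul_sum, Finset.sum_mul]
  · rintro ⟨ε, k, hε, hs⟩
    set f : ℕ → ℝ := fun j => ε (Fin.ofNat n j) * θ (Fin.ofNat n j) with hf
    set ψ : ℕ → ℝ := fun m => ∑ j ∈ Finset.range m, f j with hψ
    have hψn : ψ n = 2 * (k:ℝ) * π := by
      rw [show ψ n = ∑ j ∈ Finset.range n, f j from rfl, ← Fin.sum_univ_eq_sum_range f n, ← hs]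
      simp [hf, Fin.cast_val_eq_self]
    have hcos : ∀ i : Fin n, Real.cos (ε i * θ i) = Real.cos (θ i) := by
      intro i
      rcases hε i with h | h <;> simp [h, Real.cos_neg]
    have hfi : ∀ i : Fin n, f i.val = ε i * θ i := by
      intro i; simp [hf, Fin.cast_val_eq_self]
    refine ⟨fun i => vecOf (ψ i.val), fun i => norm_vecOf _, fun i => ?_⟩
    rw [inner_vecOf]
    have hi := i.isLt
    have hval : ((i + 1 : Fin n)).val = (i.val + 1) % n := by
      simp [Fin.add_def, Fin.val_one', Nat.add_mod]
    rcases lt_or_eq_of_le (Nat.succ_le_of_lt hi) with h | h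
    · rw [hval, Nat.mod_eq_of_lt h]
      have : ψ (i.val + 1) = ψ i.val + ε i * θ i := by
        rw [show ψ (i.val+1) = ∑ j ∈ Finset.range (i.val+1), f j from rfl,
          Finset.sum_range_succ, hfi]
      rw [this, show ψ i.val - (ψ i.val + ε i * θ i) = -(ε i * θ i) by ring,
        Real.cos_neg, hcos]
    · have h' : (i:ℕ) + 1 = n := h
      rw [hval, h', Nat.mod_self]
      have step : ψ ((i:ℕ) + 1) = ψ i.val + ε i * θ i := by
        rw [show ψ ((i:ℕ)+1) = ∑ j ∈ Finset.range ((i:ℕ)+1), f j from rfl,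
          Finset.sum_range_succ, hfi]
      have : ψ n = ψ i.val + ε i * θ i := by rw [congrArg ψ h'.symm]; exact step
      rw [this] at hψn
      have h0 : ψ 0 = 0 := by simp [hψ]
      rw [h0, show ψ i.val - 0 = (k:ℝ) * (2*π) - ε i * θ i by linarith,
        Real.cos_int_mul_two_pi_sub, hcos]
end
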